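/- arXiv:0901.1175 — 3 statements merged into one kernel-verified Lean document; each statement's English description precedes it below -/
import Mathlib

section
/- Let π ∈ NCL(n), put α := π° and β := π̂ (so α ≪ β in NC(n)). Then for any sequence (t_k)_{k ≥ 0} in a commutative ring: ∏_{A block of π} t_{|A|−1} = (∏_{U β-special block of α} t_{|U|−1}) · (∏_{V block of α that is not β-special} t_{|V|}). -/
open scoped Classical

/-- The minimum of a finset of naturals (`0` if empty). -/
noncomputable def fmin (A : Finset ℕ) : ℕ := sInf (A : Set ℕ)

/-- The maximum of a finset of naturals (`0` if empty). -/
noncomputable def fmax (A : Finset ℕ) : ℕ := sSup (A : Set ℕ)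

/-- `α` is a partition of the finite set `F ⊆ ℕ`. -/
def IsPartitionOfSet (F : Finset ℕ) (α : Finset (Finset ℕ)) : Prop :=
  (∀ V ∈ α, V.Nonempty) ∧ (∀ V ∈ α, V ⊆ F) ∧ (∀ m ∈ F, ∃ V ∈ α, m ∈ V) ∧
    ∀ V ∈ α, ∀ W ∈ α, V ≠ W → V ∩ W = ∅

/-- `α` is a partition of `{1,…,n}`. -/
def IsPartitionOf (n : ℕ) (α : Finset (Finset ℕ)) : Prop :=
  IsPartitionOfSet (Finset.Icc 1 n) α

/-- Two distinct blocks of the family `π` cross: there are `a < b < c < d` with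
`a, c` in one block and `b, d` in a different block. -/
def IsCrossing (π : Finset (Finset ℕ)) : Prop :=
  ∃ A ∈ π, ∃ B ∈ π, A ≠ B ∧
    ∃ a ∈ A, ∃ b ∈ B, ∃ c ∈ A, ∃ d ∈ B, a < b ∧ b < c ∧ c < d

/-- `α ∈ NC(n)`: a non-crossing partition of `{1,…,n}`. -/
def IsNCPartition (n : ℕ) (α : Finset (Finset ℕ)) : Prop :=
  IsPartitionOf n α ∧ ¬ IsCrossing α

/-- Reverse refinement order `α ≤ β`: every block of `α` is contained in a block of `β`
(equivalently, every block of `β` is a union of blocks of `α`). -/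
def Refines (α β : Finset (Finset ℕ)) : Prop := ∀ V ∈ α, ∃ W ∈ β, V ⊆ W

/-- The partial order `α ≪ β`: `α ≤ β` and for every block `W` of `β` there is a block
`V` of `α` containing both `min W` and `max W`. -/
def LL (α β : Finset (Finset ℕ)) : Prop :=
  Refines α β ∧ ∀ W ∈ β, ∃ V ∈ α, fmin W ∈ V ∧ fmax W ∈ V

/-- A block `V` (of `α`) is `β`-special: some block `W` of `β` has the same min and max. -/
def SpecialBlock (β : Finset (Finset ℕ)) (V : Finset ℕ) : Prop :=
  ∃ W ∈ β, fmin V = fmin W ∧ fmax V = fmax W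

/-- `V` is an outer block of `α`: no block of `α` strictly nests around it. -/
def OuterBlock (α : Finset (Finset ℕ)) (V : Finset ℕ) : Prop :=
  ∀ V' ∈ α, ¬ (fmin V' < fmin V ∧ fmax V < fmax V')

/-- `π` is a linked partition of the finite set `F ⊆ ℕ`. -/
def IsLinkedPartitionOfSet (F : Finset ℕ) (π : Finset (Finset ℕ)) : Prop :=
  (∀ A ∈ π, A.Nonempty) ∧ (∀ A ∈ π, A ⊆ F) ∧ (∀ m ∈ F, ∃ A ∈ π, m ∈ A) ∧
    ∀ A ∈ π, ∀ B ∈ π, A ≠ B →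
      A ∩ B = ∅ ∨
        (2 ≤ A.card ∧ 2 ≤ B.card ∧ (A ∩ B).card = 1 ∧ fmin A ≠ fmin B ∧
          ∀ x ∈ A ∩ B, x = fmin A ∨ x = fmin B)

/-- `π ∈ NCL(F)`: a non-crossing linked partition of the finite set `F`. -/
def IsNCLOfSet (F : Finset ℕ) (π : Finset (Finset ℕ)) : Prop :=
  IsLinkedPartitionOfSet F π ∧ ¬ IsCrossing π

/-- `π ∈ NCL(n)`: a non-crossing linked partition of `{1,…,n}`. -/
def IsNCL (n : ℕ) (π : Finset (Finset ℕ)) : Prop :=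
  IsNCLOfSet (Finset.Icc 1 n) π

/-- The number of blocks of `π` containing `m`. -/
noncomputable def coverCount (π : Finset (Finset ℕ)) (m : ℕ) : ℕ :=
  (π.filter fun A => m ∈ A).card

/-- `m` is singly-covered by `π`: it lies in exactly one block. -/
def SinglyCovered (π : Finset (Finset ℕ)) (m : ℕ) : Prop := coverCount π m = 1

/-- `m` is doubly-covered by `π`: it lies in exactly two blocks. -/
def DoublyCovered (π : Finset (Finset ℕ)) (m : ℕ) : Prop := coverCount π m = 2

/-- The partition `π̂` generated by the blocks of `π`: its blocks are the connected
components of the ground set under the relation of lying in a common block of `π`. -/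
noncomputable def genPart (π : Finset (Finset ℕ)) : Finset (Finset ℕ) :=
  (π.sup id).image fun m =>
    (π.sup id).filter fun x =>
      Relation.EqvGen (fun a b => ∃ A ∈ π, a ∈ A ∧ b ∈ A) m x

/-- The unlinking `π̌` of a linked partition `π`. -/
noncomputable def unlink (π : Finset (Finset ℕ)) : Finset (Finset ℕ) :=
  π.image fun A => if SinglyCovered π (fmin A) then A else A.erase (fmin A)

/-- The block of `α` containing `m` (empty if there is none). -/
noncomputable def blockOf (α : Finset (Finset ℕ)) (m : ℕ) : Finset ℕ :=
  (α.filter fun V => m ∈ V).sup id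

/-- The successor of `m` in the cycle on the block `V` (elements in increasing order). -/
noncomputable def nextInBlock (V : Finset ℕ) (m : ℕ) : ℕ :=
  if m = fmax V then fmin V else fmin (V.filter fun x => m < x)

/-- The predecessor of `m` in the cycle on the block `V`. -/
noncomputable def prevInBlock (V : Finset ℕ) (m : ℕ) : ℕ :=
  if m = fmin V then fmax V else fmax (V.filter fun x => x < m)

/-- The permutation `P_α` associated to a partition `α`, as a function: each block
`{i₁ < i₂ < ⋯ < iₘ}` becomes the cycle `i₁ ↦ i₂ ↦ ⋯ ↦ iₘ ↦ i₁`. -/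
noncomputable def permOf (α : Finset (Finset ℕ)) (m : ℕ) : ℕ :=
  if m ∈ blockOf α m then nextInBlock (blockOf α m) m else m

/-- The inverse permutation `P_α⁻¹`, as a function. -/
noncomputable def permOfInv (α : Finset (Finset ℕ)) (m : ℕ) : ℕ :=
  if m ∈ blockOf α m then prevInBlock (blockOf α m) m else m

/-- The action `τ·α` of a map `τ` on a partition `α = {V₁,…,V_p}`, giving
`{τ(V₁),…,τ(V_p)}`. -/
def mapPart (τ : ℕ → ℕ) (α : Finset (Finset ℕ)) : Finset (Finset ℕ) :=
  α.image fun V => V.image τ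

/-- The cycled unlinking `π° := P_{π̂}⁻¹ · π̌`. -/
noncomputable def cycUnlink (π : Finset (Finset ℕ)) : Finset (Finset ℕ) :=
  mapPart (permOfInv (genPart π)) (unlink π)

/-- `NC(n)` as a finset. -/
noncomputable def NCF (n : ℕ) : Finset (Finset (Finset ℕ)) :=
  ((Finset.Icc 1 n).powerset.powerset).filter (IsNCPartition n)

/-- `NCL(n)` as a finset. -/
noncomputable def NCLF (n : ℕ) : Finset (Finset (Finset ℕ)) :=
  ((Finset.Icc 1 n).powerset.powerset).filter (IsNCL n)

/-- The restriction `π|_E`: the blocks of `π` contained in `E`. -/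
def restrictL (π : Finset (Finset ℕ)) (E : Finset ℕ) : Finset (Finset ℕ) :=
  π.filter fun A => A ⊆ E

/-- The partition `β₀` obtained from `β` by leaving blocks of size `≤ 2` intact and
breaking each block `W` with `|W| ≥ 3` into the doubleton `{min W, max W}` together
with `|W| - 2` singletons. -/
noncomputable def breakBlocks (β : Finset (Finset ℕ)) : Finset (Finset ℕ) :=
  β.biUnion fun W =>
    if W.card ≤ 2 then {W}
    else insert {fmin W, fmax W} ((W \ {fmin W, fmax W}).image fun x => ({x} : Finset ℕ))

namespace S15

noncomputable def uB (π : Finset (Finset ℕ)) (A : Finset ℕ) : Finset ℕ :=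
  if SinglyCovered π (fmin A) then A else A.erase (fmin A)

def relL (π : Finset (Finset ℕ)) (a b : ℕ) : Prop := ∃ A ∈ π, a ∈ A ∧ b ∈ A

noncomputable def cls (π : Finset (Finset ℕ)) (m : ℕ) : Finset ℕ :=
  (π.sup id).filter fun x => Relation.EqvGen (relL π) m x

lemma fmin_le {A : Finset ℕ} {x : ℕ} (hx : x ∈ A) : fmin A ≤ x := Nat.sInf_le hx
lemma fmin_mem {A : Finset ℕ} (h : A.Nonempty) : fmin A ∈ A := by
  have := Nat.sInf_mem (s := (A : Set ℕ)) (by exact_mod_cast h); exact_mod_cast this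

lemma le_fmax {A : Finset ℕ} {x : ℕ} (hx : x ∈ A) : x ≤ fmax A :=
  le_csSup A.finite_toSet.bddAbove hx

lemma fmax_mem {A : Finset ℕ} (h : A.Nonempty) : fmax A ∈ A := by
  have := Nat.sSup_mem (s := (A : Set ℕ)) (by exact_mod_cast h) A.finite_toSet.bddAbove
  exact_mod_cast this

lemma fmax_singleton (a : ℕ) : fmax {a} = a := by
  show sSup (({a} : Finset ℕ) : Set ℕ) = a
  rw [Finset.coe_singleton]
  exact csSup_singleton a

lemma fmin_eq_of_subset {V W : Finset ℕ} (hVW : V ⊆ W) (h : fmin W ∈ V) :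
    fmin V = fmin W :=
  le_antisymm (fmin_le h) (fmin_le (hVW (fmin_mem ⟨_, h⟩)))

lemma fmax_eq_of_subset {V W : Finset ℕ} (hVW : V ⊆ W) (h : fmax W ∈ V) :
    fmax V = fmax W :=
  le_antisymm (le_fmax (hVW (fmax_mem ⟨_, h⟩))) (le_fmax h)

/-- The linked-partition hypotheses we actually use. -/
def LP (π : Finset (Finset ℕ)) : Prop :=
  (∀ A ∈ π, A.Nonempty) ∧
    ∀ A ∈ π, ∀ B ∈ π, A ≠ B →
      A ∩ B = ∅ ∨
        (2 ≤ A.card ∧ 2 ≤ B.card ∧ (A ∩ B).card = 1 ∧ fmin A ≠ fmin B ∧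
          ∀ x ∈ A ∩ B, x = fmin A ∨ x = fmin B)

variable {π : Finset (Finset ℕ)} {A B C x m : ℕ}

lemma inter_cond {A B : Finset ℕ} (h : LP π) (hA : A ∈ π) (hB : B ∈ π) (hAB : A ≠ B)
    {x : ℕ} (hxA : x ∈ A) (hxB : x ∈ B) :
    2 ≤ A.card ∧ 2 ≤ B.card ∧ (A ∩ B).card = 1 ∧ fmin A ≠ fmin B ∧
      ∀ y ∈ A ∩ B, y = fmin A ∨ y = fmin B := by
  rcases h.2 A hA B hB hAB with h0 | h1
  · exact absurd (h0 ▸ Finset.mem_inter.mpr ⟨hxA, hxB⟩) (Finset.notMem_empty x)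
  · exact h1

/-- A shared point is the min of exactly one of the two blocks. -/
lemma mem_two_blocks {A B : Finset ℕ} (h : LP π) (hA : A ∈ π) (hB : B ∈ π) (hAB : A ≠ B)
    {x : ℕ} (hxA : x ∈ A) (hxB : x ∈ B) :
    (x = fmin A ∧ x ≠ fmin B) ∨ (x = fmin B ∧ x ≠ fmin A) := by
  obtain ⟨-, -, -, hne, hmin⟩ := inter_cond h hA hB hAB hxA hxB
  rcases hmin x (Finset.mem_inter.mpr ⟨hxA, hxB⟩) with h1 | h1
  · exact Or.inl ⟨h1, fun h2 => hne (h1 ▸ h2)⟩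
  · exact Or.inr ⟨h1, fun h2 => hne (h2 ▸ h1.symm).symm⟩

/-- No point lies in three distinct blocks. -/
lemma no_triple {A B C : Finset ℕ} (h : LP π) (hA : A ∈ π) (hB : B ∈ π) (hC : C ∈ π)
    (hAB : A ≠ B) (hAC : A ≠ C) (hBC : B ≠ C)
    {x : ℕ} (hxA : x ∈ A) (hxB : x ∈ B) (hxC : x ∈ C) : False := by
  rcases mem_two_blocks h hA hB hAB hxA hxB with ⟨h1, h1'⟩ | ⟨h1, h1'⟩
  · rcases mem_two_blocks h hB hC hBC hxB hxC with ⟨h2, h2'⟩ | ⟨h2, h2'⟩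
    · exact h1' h2
    · rcases mem_two_blocks h hA hC hAC hxA hxC with ⟨h3, h3'⟩ | ⟨h3, h3'⟩
      · exact h3' h2
      · exact h3' h1
  · rcases mem_two_blocks h hA hC hAC hxA hxC with ⟨h3, h3'⟩ | ⟨h3, h3'⟩
    · exact h1' h3
    · rcases mem_two_blocks h hB hC hBC hxB hxC with ⟨h2, h2'⟩ | ⟨h2, h2'⟩
      · exact h2' h3
      · exact h2' h1

lemma singly_unique {A B : Finset ℕ} {m : ℕ} (hs : SinglyCovered π m)
    (hA : A ∈ π) (hB : B ∈ π) (hmA : m ∈ A) (hmB : m ∈ B) : A = B := by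
  have hc : (π.filter fun X => m ∈ X).card ≤ 1 := le_of_eq hs
  exact Finset.card_le_one.mp hc A (Finset.mem_filter.mpr ⟨hA, hmA⟩)
    B (Finset.mem_filter.mpr ⟨hB, hmB⟩)

lemma exists_other {A : Finset ℕ} {m : ℕ} (hA : A ∈ π) (hmA : m ∈ A)
    (hns : ¬ SinglyCovered π m) : ∃ B ∈ π, B ≠ A ∧ m ∈ B := by
  have h1 : 1 ≤ (π.filter fun X => m ∈ X).card :=
    Finset.card_pos.mpr ⟨A, Finset.mem_filter.mpr ⟨hA, hmA⟩⟩
  have h2 : 1 < (π.filter fun X => m ∈ X).card :=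
    lt_of_le_of_ne h1 (fun hh => hns hh.symm)
  obtain ⟨a, ha, b, hb, hab⟩ := Finset.one_lt_card.mp h2
  rw [Finset.mem_filter] at ha hb
  by_cases haA : a = A
  · exact ⟨b, hb.1, by rw [← haA]; exact hab.symm, hb.2⟩
  · exact ⟨a, ha.1, haA, ha.2⟩

lemma two_le_card_of_not_singly {A : Finset ℕ} (h : LP π) (hA : A ∈ π)
    (hns : ¬ SinglyCovered π (fmin A)) : 2 ≤ A.card := by
  obtain ⟨B, hB, hBA, hmB⟩ := exists_other hA (fmin_mem (h.1 A hA)) hns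
  exact (inter_cond h hA hB (Ne.symm hBA) (fmin_mem (h.1 A hA)) hmB).1


lemma genPart_eq : genPart π = (π.sup id).image (cls π) := rfl

lemma mem_U {x : ℕ} : x ∈ π.sup id ↔ ∃ A ∈ π, x ∈ A := by
  simp [Finset.mem_sup]

lemma relL_symm {a b : ℕ} (h : relL π a b) : relL π b a := by
  obtain ⟨A, hA, h1, h2⟩ := h; exact ⟨A, hA, h2, h1⟩

lemma eqv_mem_U {a b : ℕ} (h : Relation.EqvGen (relL π) a b) :
    a ∈ π.sup id ↔ b ∈ π.sup id := by
  induction h with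
  | rel x y hxy =>
      obtain ⟨A, hA, h1, h2⟩ := hxy
      exact iff_of_true (mem_U.mpr ⟨A, hA, h1⟩) (mem_U.mpr ⟨A, hA, h2⟩)
  | refl x => exact Iff.rfl
  | symm x y _ ih => exact ih.symm
  | trans x y z _ _ ih1 ih2 => exact ih1.trans ih2

lemma mem_cls_iff {m x : ℕ} : x ∈ cls π m ↔ x ∈ π.sup id ∧ Relation.EqvGen (relL π) m x :=
  Finset.mem_filter

lemma self_mem_cls {m : ℕ} (hm : m ∈ π.sup id) : m ∈ cls π m :=
  mem_cls_iff.mpr ⟨hm, Relation.EqvGen.refl m⟩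

lemma cls_eq {m m' : ℕ} (h : Relation.EqvGen (relL π) m m') : cls π m = cls π m' := by
  apply Finset.ext
  intro x
  rw [mem_cls_iff, mem_cls_iff]
  exact and_congr_right fun _ =>
    ⟨fun hx => (h.symm m m').trans _ _ _ hx, fun hx => h.trans _ _ _ hx⟩

lemma mem_genPart {W : Finset ℕ} : W ∈ genPart π ↔ ∃ m ∈ π.sup id, cls π m = W := by
  rw [genPart_eq]; exact Finset.mem_image

lemma cls_eq_of_mem {m x : ℕ} (hx : x ∈ cls π m) : cls π x = cls π m :=
  (cls_eq (mem_cls_iff.mp hx).2).symm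

lemma genPart_disjoint {W W' : Finset ℕ} (hW : W ∈ genPart π) (hW' : W' ∈ genPart π)
    {x : ℕ} (hx : x ∈ W) (hx' : x ∈ W') : W = W' := by
  obtain ⟨m, hm, rfl⟩ := mem_genPart.mp hW
  obtain ⟨m', hm', rfl⟩ := mem_genPart.mp hW'
  rw [← cls_eq_of_mem hx, ← cls_eq_of_mem hx']

lemma block_subset_cls {A : Finset ℕ} {m y : ℕ} (hA : A ∈ π) (hy : y ∈ A)
    (hym : y ∈ cls π m) : A ⊆ cls π m := by
  intro z hz
  have h1 : Relation.EqvGen (relL π) y z := Relation.EqvGen.rel _ _ ⟨A, hA, hy, hz⟩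
  exact mem_cls_iff.mpr ⟨mem_U.mpr ⟨A, hA, hz⟩, (mem_cls_iff.mp hym).2.trans _ _ _ h1⟩

lemma cls_subset_U {m : ℕ} : cls π m ⊆ π.sup id := Finset.filter_subset _ _

lemma genPart_nonempty {W : Finset ℕ} (hW : W ∈ genPart π) : W.Nonempty := by
  obtain ⟨m, hm, rfl⟩ := mem_genPart.mp hW
  exact ⟨m, self_mem_cls hm⟩

lemma eqv_of_mem_cls {m x : ℕ} (hx : x ∈ cls π m) : Relation.EqvGen (relL π) m x :=
  (mem_cls_iff.mp hx).2

lemma eqv_of_mem_cls2 {m x y : ℕ} (hx : x ∈ cls π m) (hy : y ∈ cls π m) :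
    Relation.EqvGen (relL π) x y :=
  ((eqv_of_mem_cls hx).symm _ _).trans _ _ _ (eqv_of_mem_cls hy)


/-- Iterated-parent relation: `Anc π B A` means the chain of parents from `A` reaches `B`. -/
inductive Anc (π : Finset (Finset ℕ)) (B : Finset ℕ) : Finset ℕ → Prop
  | base : Anc π B B
  | step {A A' : Finset ℕ} (hA : A ∈ π) (hA' : A' ∈ π) (hne : A ≠ A')
      (hm : fmin A ∈ A') (h : Anc π B A') : Anc π B A

lemma anc_fmin_le {B A : Finset ℕ} (h : Anc π B A) : fmin B ≤ fmin A := by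
  induction h with
  | base => exact le_rfl
  | @step A A' hA hA' hne hm hanc ih => exact ih.trans (fmin_le hm)

/-- One step of adjacency preserves the "all blocks are descendants of `B`" invariant. -/
lemma anc_adj (h : LP π) {B : Finset ℕ} (hB : B ∈ π) (hs : SinglyCovered π (fmin B))
    {D : Finset ℕ} (hD : D ∈ π) {x y : ℕ} (hxD : x ∈ D) (hyD : y ∈ D)
    (hx : ∀ A ∈ π, x ∈ A → Anc π B A) : ∀ C ∈ π, y ∈ C → Anc π B C := by
  intro C hC hyC
  have hAncD : Anc π B D := hx D hD hxD
  by_cases hCD : C = D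
  · exact hCD ▸ hAncD
  rcases mem_two_blocks h hC hD hCD hyC hyD with ⟨h1, -⟩ | ⟨h1, -⟩
  · -- y = fmin C, so D is a parent of C
    exact Anc.step hC hD hCD (h1 ▸ hyD) hAncD
  · -- y = fmin D ∈ C : C is the parent of D
    cases hAncD with
    | base =>
        -- D = B, so fmin B = y ∈ C with C ≠ B: contradicts singly covered
        exact absurd (singly_unique hs hC hB (h1 ▸ hyC) (h1 ▸ hyD)) hCD
    | @step _ A'' hD' hA'' hne hm hanc =>
        by_cases hCA : C = A''
        · exact hCA ▸ hanc
        · have hyA'' : y ∈ A'' := by rw [h1]; exact hm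
          exact (no_triple h hD hA'' hC hne (Ne.symm hCD) (Ne.symm hCA)
            hyD hyA'' hyC).elim

/-- KEY: everything equivalent to the (singly covered) min of a block `B` lies in a
descendant of `B`. -/
lemma key_invariant (h : LP π) {B : Finset ℕ} (hB : B ∈ π) (hs : SinglyCovered π (fmin B))
    {x y : ℕ} (hxy : Relation.EqvGen (relL π) x y) :
    (∀ A ∈ π, x ∈ A → Anc π B A) ↔ (∀ A ∈ π, y ∈ A → Anc π B A) := by
  induction hxy with
  | rel a b hab =>
      obtain ⟨D, hD, haD, hbD⟩ := hab
      exact ⟨anc_adj h hB hs hD haD hbD, anc_adj h hB hs hD hbD haD⟩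
  | refl a => exact Iff.rfl
  | symm a b _ ih => exact ih.symm
  | trans a b c _ _ ih1 ih2 => exact ih1.trans ih2

lemma key (h : LP π) {B : Finset ℕ} (hB : B ∈ π) (hs : SinglyCovered π (fmin B))
    {x : ℕ} (hx : Relation.EqvGen (relL π) (fmin B) x) : fmin B ≤ x := by
  have hbase : ∀ A ∈ π, fmin B ∈ A → Anc π B A := by
    intro A hA hmA
    rw [singly_unique hs hA hB hmA (fmin_mem (h.1 B hB))]
    exact Anc.base
  have hx' : ∀ A ∈ π, x ∈ A → Anc π B A := (key_invariant h hB hs hx).mp hbase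
  have hxU : x ∈ π.sup id := (eqv_mem_U hx).mp (mem_U.mpr ⟨B, hB, fmin_mem (h.1 B hB)⟩)
  obtain ⟨A, hA, hxA⟩ := mem_U.mp hxU
  exact (anc_fmin_le (hx' A hA hxA)).trans (fmin_le hxA)


section prev
variable {W : Finset ℕ} {m m' : ℕ}

lemma filter_lt_nonempty (hm : m ∈ W) (hne : m ≠ fmin W) :
    (W.filter fun x => x < m).Nonempty :=
  ⟨fmin W, Finset.mem_filter.mpr ⟨fmin_mem ⟨m, hm⟩,
    lt_of_le_of_ne (fmin_le hm) (Ne.symm hne)⟩⟩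

lemma prev_mem (hm : m ∈ W) : prevInBlock W m ∈ W := by
  unfold prevInBlock
  split
  · exact fmax_mem ⟨m, hm⟩
  · next hne =>
      exact (Finset.mem_filter.mp (fmax_mem (filter_lt_nonempty hm hne))).1

lemma prev_lt (hm : m ∈ W) (hne : m ≠ fmin W) : prevInBlock W m < m := by
  unfold prevInBlock
  rw [if_neg hne]
  exact (Finset.mem_filter.mp (fmax_mem (filter_lt_nonempty hm hne))).2

lemma prev_fmin : prevInBlock W (fmin W) = fmax W := if_pos rfl

lemma prev_eq_fmax_iff (hm : m ∈ W) : prevInBlock W m = fmax W ↔ m = fmin W := by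
  constructor
  · intro he
    by_contra hne
    exact absurd he (ne_of_lt (lt_of_lt_of_le (prev_lt hm hne) (le_fmax hm)))
  · intro he; rw [he]; exact prev_fmin

lemma prev_inj (hm : m ∈ W) (hm' : m' ∈ W)
    (he : prevInBlock W m = prevInBlock W m') : m = m' := by
  by_contra hne
  rcases eq_or_ne m (fmin W) with h1 | h1
  · have h2 : m' ≠ fmin W := fun h => hne (h1.trans h.symm)
    have := prev_lt hm' h2
    rw [← he, h1, prev_fmin] at this
    exact absurd (le_fmax hm') (not_le.mpr this)
  · rcases eq_or_ne m' (fmin W) with h2 | h2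
    · have := prev_lt hm h1
      rw [he, h2, prev_fmin] at this
      exact absurd (le_fmax hm) (not_le.mpr this)
    · rcases lt_or_gt_of_ne hne with h3 | h3
      · have h4 : m ≤ prevInBlock W m' := by
          unfold prevInBlock; rw [if_neg h2]
          exact le_fmax (Finset.mem_filter.mpr ⟨hm, h3⟩)
        exact absurd (he ▸ h4) (not_le.mpr (prev_lt hm h1))
      · have h4 : m' ≤ prevInBlock W m := by
          unfold prevInBlock; rw [if_neg h1]
          exact le_fmax (Finset.mem_filter.mpr ⟨hm', h3⟩)
        exact absurd (he ▸ h4) (not_le.mpr (prev_lt hm' h2))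

lemma prev_snd (hf : (W.filter fun x => fmin W < x).Nonempty) :
    prevInBlock W (fmin (W.filter fun x => fmin W < x)) = fmin W := by
  set s := fmin (W.filter fun x => fmin W < x) with hs
  have hsmem := fmin_mem hf
  rw [← hs] at hsmem
  obtain ⟨hsW, hlt⟩ := Finset.mem_filter.mp hsmem
  have hne : s ≠ fmin W := ne_of_gt hlt
  unfold prevInBlock
  rw [if_neg hne]
  have : (W.filter fun x => x < s) = {fmin W} := by
    apply Finset.ext
    intro x
    rw [Finset.mem_filter, Finset.mem_singleton]
    constructor
    · rintro ⟨hxW, hxs⟩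
      by_contra hxne
      have h5 : fmin W < x := lt_of_le_of_ne (fmin_le hxW) (Ne.symm hxne)
      have h6 : s ≤ x := fmin_le (Finset.mem_filter.mpr ⟨hxW, h5⟩)
      exact absurd hxs (not_lt.mpr h6)
    · rintro rfl
      exact ⟨fmin_mem ⟨s, hsW⟩, hlt⟩
  rw [this, fmax_singleton]

end prev

section perm
variable {W : Finset ℕ} {m m' : ℕ}

lemma blockOf_of_mem (hW : W ∈ genPart π) (hm : m ∈ W) :
    blockOf (genPart π) m = W := by
  have : (genPart π).filter (fun V => m ∈ V) = {W} := by
    apply Finset.ext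
    intro V
    rw [Finset.mem_filter, Finset.mem_singleton]
    exact ⟨fun ⟨hV, hmV⟩ => genPart_disjoint hV hW hmV hm,
      fun h => h ▸ ⟨hW, hm⟩⟩
  unfold blockOf
  rw [this, Finset.sup_singleton]
  rfl

lemma permOfInv_of_mem (hW : W ∈ genPart π) (hm : m ∈ W) :
    permOfInv (genPart π) m = prevInBlock W m := by
  unfold permOfInv
  rw [blockOf_of_mem hW hm, if_pos hm]

lemma genPart_subset_U {W : Finset ℕ} (hW : W ∈ genPart π) : W ⊆ π.sup id := by
  obtain ⟨m, hm, rfl⟩ := mem_genPart.mp hW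
  exact cls_subset_U

lemma permOfInv_of_notMem (hm : m ∉ π.sup id) : permOfInv (genPart π) m = m := by
  unfold permOfInv
  rw [if_neg]
  intro hmem
  unfold blockOf at hmem
  obtain ⟨V, hV, hmV⟩ := Finset.mem_sup.mp hmem
  exact hm (genPart_subset_U (Finset.mem_filter.mp hV).1 hmV)

lemma exists_genPart_mem (hm : m ∈ π.sup id) : ∃ W ∈ genPart π, m ∈ W :=
  ⟨cls π m, mem_genPart.mpr ⟨m, hm, rfl⟩, self_mem_cls hm⟩

lemma permOfInv_inj : Function.Injective (permOfInv (genPart π)) := by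
  intro a b he
  by_cases ha : a ∈ π.sup id
  · obtain ⟨W, hW, haW⟩ := exists_genPart_mem ha
    rw [permOfInv_of_mem hW haW] at he
    by_cases hb : b ∈ π.sup id
    · obtain ⟨W', hW', hbW⟩ := exists_genPart_mem hb
      rw [permOfInv_of_mem hW' hbW] at he
      have hWW : W = W' :=
        genPart_disjoint hW hW' (he ▸ prev_mem haW) (prev_mem hbW)
      exact prev_inj haW (hWW ▸ hbW) (by rw [he, hWW])
    · rw [permOfInv_of_notMem hb] at he
      exact absurd (he ▸ genPart_subset_U hW (prev_mem haW)) hb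
  · rw [permOfInv_of_notMem ha] at he
    by_cases hb : b ∈ π.sup id
    · obtain ⟨W', hW', hbW⟩ := exists_genPart_mem hb
      rw [permOfInv_of_mem hW' hbW] at he
      exact absurd (he ▸ genPart_subset_U hW' (prev_mem hbW)) ha
    · rw [permOfInv_of_notMem hb] at he
      exact he

end perm


section unlinkSec
variable {A A' W : Finset ℕ} {m y : ℕ}

lemma unlink_eq : unlink π = π.image (uB π) := rfl

lemma uB_subset : uB π A ⊆ A := by
  unfold uB; split
  · exact Finset.Subset.refl A
  · exact Finset.erase_subset _ _

lemma uB_card (h : LP π) (hA : A ∈ π) :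
    (uB π A).card = if SinglyCovered π (fmin A) then A.card else A.card - 1 := by
  unfold uB
  split
  · rfl
  · exact Finset.card_erase_of_mem (fmin_mem (h.1 A hA))

lemma uB_nonempty (h : LP π) (hA : A ∈ π) : (uB π A).Nonempty := by
  rw [← Finset.card_pos, uB_card h hA]
  split
  · exact Finset.card_pos.mpr (h.1 A hA)
  · next hns =>
      have := two_le_card_of_not_singly h hA hns
      omega

lemma uB_injOn (h : LP π) (hA : A ∈ π) (hA' : A' ∈ π) (he : uB π A = uB π A') :
    A = A' := by
  by_contra hne
  unfold uB at he
  by_cases h1 : SinglyCovered π (fmin A) <;> by_cases h2 : SinglyCovered π (fmin A')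
  · rw [if_pos h1, if_pos h2] at he; exact hne he
  · rw [if_pos h1, if_neg h2] at he
    -- A = A'.erase (fmin A') ⊆ A'
    have hsub : A ⊆ A' := he ▸ Finset.erase_subset _ _
    have hx : fmin A ∈ A' := hsub (fmin_mem (h.1 A hA))
    obtain ⟨h2c, -, hcard, -, -⟩ := inter_cond h hA hA' hne (fmin_mem (h.1 A hA)) hx
    rw [Finset.inter_eq_left.mpr hsub] at hcard
    omega
  · rw [if_neg h1, if_pos h2] at he
    have hsub : A' ⊆ A := he ▸ Finset.erase_subset _ _
    have hx : fmin A' ∈ A := hsub (fmin_mem (h.1 A' hA'))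
    obtain ⟨-, h2c, hcard, -, -⟩ := inter_cond h hA hA' hne hx (fmin_mem (h.1 A' hA'))
    rw [Finset.inter_eq_right.mpr hsub] at hcard
    omega
  · rw [if_neg h1, if_neg h2] at he
    have hcard : 2 ≤ A.card := two_le_card_of_not_singly h hA h1
    have hnonempty : (A.erase (fmin A)).Nonempty := by
      rw [← Finset.card_pos, Finset.card_erase_of_mem (fmin_mem (h.1 A hA))]
      omega
    obtain ⟨x, hx⟩ := hnonempty
    have hx2 : x ∈ A'.erase (fmin A') := he ▸ hx
    obtain ⟨hxne, hxA⟩ := Finset.mem_erase.mp hx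
    obtain ⟨hxne', hxA'⟩ := Finset.mem_erase.mp hx2
    obtain ⟨-, -, -, -, hmins⟩ := inter_cond h hA hA' hne hxA hxA'
    rcases hmins x (Finset.mem_inter.mpr ⟨hxA, hxA'⟩) with h3 | h3
    · exact hxne h3
    · exact hxne' h3

lemma block_subset_genPart (hW : W ∈ genPart π) (hA : A ∈ π) (hy : y ∈ A)
    (hyW : y ∈ W) : A ⊆ W := by
  obtain ⟨m, hm, rfl⟩ := mem_genPart.mp hW
  exact block_subset_cls hA hy hyW

lemma singly_of_unique {A : Finset ℕ} {m : ℕ} (hA : A ∈ π) (hm : m ∈ A)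
    (huniq : ∀ B ∈ π, m ∈ B → B = A) : SinglyCovered π m := by
  show (π.filter fun X => m ∈ X).card = 1
  rw [Finset.card_eq_one]
  refine ⟨A, Finset.ext fun B => ?_⟩
  rw [Finset.mem_filter, Finset.mem_singleton]
  exact ⟨fun ⟨h1, h2⟩ => huniq B h1 h2, fun hh => hh ▸ ⟨hA, hm⟩⟩

/-- The min of a component is singly covered. -/
lemma min_w_singly (h : LP π) (hW : W ∈ genPart π) : SinglyCovered π (fmin W) := by
  have hfW : fmin W ∈ W := fmin_mem (genPart_nonempty hW)
  obtain ⟨A0, hA0, hmA0⟩ := mem_U.mp (genPart_subset_U hW hfW)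
  refine singly_of_unique hA0 hmA0 fun B hB hmB => ?_
  by_contra hne
  have hBW : B ⊆ W := block_subset_genPart hW hB hmB hfW
  have hA0W : A0 ⊆ W := block_subset_genPart hW hA0 hmA0 hfW
  have e0 : fmin A0 = fmin W :=
    le_antisymm (fmin_le hmA0) (fmin_le (hA0W (fmin_mem ⟨_, hmA0⟩)))
  have e1 : fmin B = fmin W :=
    le_antisymm (fmin_le hmB) (fmin_le (hBW (fmin_mem ⟨_, hmB⟩)))
  rcases mem_two_blocks h hB hA0 hne hmB hmA0 with ⟨-, h4⟩ | ⟨-, h4⟩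
  · exact h4 e0.symm
  · exact h4 e1.symm

/-- F1: the min of a block with singly-covered min is the min of its component. -/
lemma F1 (h : LP π) (hA : A ∈ π) (hs : SinglyCovered π (fmin A)) :
    fmin (cls π (fmin A)) = fmin A := by
  have hmU : fmin A ∈ π.sup id := mem_U.mpr ⟨A, hA, fmin_mem (h.1 A hA)⟩
  have h1 : fmin (cls π (fmin A)) ∈ cls π (fmin A) :=
    fmin_mem ⟨fmin A, self_mem_cls hmU⟩
  exact le_antisymm (fmin_le (self_mem_cls hmU))
    (key h hA hs (eqv_of_mem_cls h1))

/-- F2: the second-smallest element of the component of a block with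
singly-covered min belongs to that block. -/
lemma F2 (h : LP π) (hA : A ∈ π) (hs : SinglyCovered π (fmin A))
    (hf : ((cls π (fmin A)).filter fun x => fmin (cls π (fmin A)) < x).Nonempty) :
    fmin ((cls π (fmin A)).filter fun x => fmin (cls π (fmin A)) < x) ∈ A := by
  set W := cls π (fmin A) with hWdef
  have hmU : fmin A ∈ π.sup id := mem_U.mpr ⟨A, hA, fmin_mem (h.1 A hA)⟩
  have hW : W ∈ genPart π := mem_genPart.mpr ⟨fmin A, hmU, rfl⟩
  have hF1 : fmin W = fmin A := F1 h hA hs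
  set s := fmin (W.filter fun x => fmin W < x) with hsdef
  have hsmem := fmin_mem hf
  rw [← hsdef] at hsmem
  obtain ⟨hsW, hlt⟩ := Finset.mem_filter.mp hsmem
  have hleast : ∀ x ∈ W, fmin W < x → s ≤ x := fun x hx h5 =>
    fmin_le (Finset.mem_filter.mpr ⟨hx, h5⟩)
  by_contra hsA
  obtain ⟨C, hC, hsC⟩ := mem_U.mp (genPart_subset_U hW hsW)
  have hCA : C ≠ A := fun hh => hsA (hh ▸ hsC)
  have hCW : C ⊆ W := block_subset_genPart hW hC hsC hsW
  have hCmin : fmin C = s := by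
    have h5 : fmin W ≤ fmin C := fmin_le (hCW (fmin_mem ⟨_, hsC⟩))
    rcases eq_or_lt_of_le h5 with h6 | h6
    · exfalso
      have : fmin A ∈ C := by rw [← hF1, h6]; exact fmin_mem ⟨_, hsC⟩
      exact hCA (singly_unique hs hC hA this (fmin_mem (h.1 A hA)))
    · exact le_antisymm (fmin_le hsC) (hleast _ (hCW (fmin_mem ⟨_, hsC⟩)) h6)
  by_cases hss : SinglyCovered π s
  · have h7 : Relation.EqvGen (relL π) (fmin C) (fmin W) := by
      rw [hCmin, hWdef]
      have hsW' : s ∈ cls π (fmin A) := by rw [← hWdef]; exact hsW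
      have hfW' : fmin W ∈ cls π (fmin A) := by
        rw [← hWdef]; exact fmin_mem ⟨_, hsW⟩
      exact eqv_of_mem_cls2 hsW' hfW'
    have h8 := key h hC (hCmin.symm ▸ hss) h7
    rw [hCmin] at h8
    omega
  · obtain ⟨C', hC', hCC', hsC'⟩ := exists_other hC hsC hss
    have hC'W : C' ⊆ W := block_subset_genPart hW hC' hsC' hsW
    have hne' : s ≠ fmin C' := by
      rcases mem_two_blocks h hC hC' (Ne.symm hCC') hsC hsC' with ⟨-, h7⟩ | ⟨h7, h8⟩
      · exact h7
      · exact absurd hCmin.symm h8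
    have h8 : fmin W ≤ fmin C' := fmin_le (hC'W (fmin_mem ⟨_, hsC'⟩))
    have h9 : fmin C' ≤ s := fmin_le hsC'
    have h10 : fmin C' = fmin W := by
      rcases eq_or_lt_of_le h8 with h11 | h11
      · exact h11.symm
      · have := hleast _ (hC'W (fmin_mem ⟨_, hsC'⟩)) h11
        omega
    have h12 : fmin A ∈ C' := by rw [← hF1, ← h10]; exact fmin_mem ⟨_, hsC'⟩
    have h13 : C' = A := singly_unique hs hC' hA h12 (fmin_mem (h.1 A hA))
    exact hsA (h13 ▸ hsC')


/-- The central characterization: the block of `π°` coming from `A ∈ π` is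
`π̂`-special iff `fmin A` is singly covered. -/
lemma special_iff (h : LP π) {A : Finset ℕ} (hA : A ∈ π) :
    SpecialBlock (genPart π) ((uB π A).image (permOfInv (genPart π))) ↔
      SinglyCovered π (fmin A) := by
  set W := cls π (fmin A) with hWdef
  have hmU : fmin A ∈ π.sup id := mem_U.mpr ⟨A, hA, fmin_mem (h.1 A hA)⟩
  have hW : W ∈ genPart π := mem_genPart.mpr ⟨fmin A, hmU, rfl⟩
  have hAW : A ⊆ W := block_subset_cls hA (fmin_mem (h.1 A hA)) (self_mem_cls hmU)
  set V := (uB π A).image (permOfInv (genPart π)) with hVdef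
  have hVW : V ⊆ W := by
    intro v hv
    obtain ⟨z, hz, rfl⟩ := Finset.mem_image.mp hv
    have hzW : z ∈ W := hAW (uB_subset hz)
    rw [permOfInv_of_mem hW hzW]
    exact prev_mem hzW
  have hVne : V.Nonempty := (uB_nonempty h hA).image _
  constructor
  · rintro ⟨W', hW', h1, h2⟩
    have hfV : fmin V ∈ V := fmin_mem hVne
    have hfV' : fmin V ∈ W' := by
      rw [h1]; exact fmin_mem (genPart_nonempty hW')
    have hWW : W = W' := genPart_disjoint hW hW' (hVW hfV) hfV'
    rw [← hWW] at h2
    have hmaxV : fmax V ∈ V := fmax_mem hVne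
    obtain ⟨z, hz, hze⟩ := Finset.mem_image.mp hmaxV
    have hzW : z ∈ W := hAW (uB_subset hz)
    rw [permOfInv_of_mem hW hzW, h2] at hze
    have hzmin : z = fmin W := (prev_eq_fmax_iff hzW).mp hze
    have hfmin : fmin W ∈ A := hzmin ▸ uB_subset hz
    have heq : fmin A = fmin W :=
      le_antisymm (fmin_le hfmin) (fmin_le (hAW (fmin_mem (h.1 A hA))))
    rw [heq]
    exact min_w_singly h hW
  · intro hs
    have huB : uB π A = A := if_pos hs
    have hF1 : fmin W = fmin A := F1 h hA hs
    have hmaxW : fmax W ∈ V := by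
      apply Finset.mem_image.mpr
      refine ⟨fmin A, by rw [huB]; exact fmin_mem (h.1 A hA), ?_⟩
      have : fmin A ∈ W := hAW (fmin_mem (h.1 A hA))
      rw [permOfInv_of_mem hW this, ← hF1, prev_fmin]
    have hminW : fmin W ∈ V := by
      by_cases hf : (W.filter fun x => fmin W < x).Nonempty
      · set s := fmin (W.filter fun x => fmin W < x) with hsdef
        have hsA : s ∈ A := F2 h hA hs hf
        apply Finset.mem_image.mpr
        refine ⟨s, by rw [huB]; exact hsA, ?_⟩
        have hsW : s ∈ W := hAW hsA
        rw [permOfInv_of_mem hW hsW]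
        exact prev_snd hf
      · obtain ⟨v, hv⟩ := hVne
        have hvW : v ∈ W := hVW hv
        have : v = fmin W := by
          by_contra hne
          exact hf ⟨v, Finset.mem_filter.mpr
            ⟨hvW, lt_of_le_of_ne (fmin_le hvW) (Ne.symm hne)⟩⟩
        exact this ▸ hv
    exact ⟨W, hW, fmin_eq_of_subset hVW hminW, fmax_eq_of_subset hVW hmaxW⟩

end unlinkSec
end S15

namespace S15
lemma cycUnlink_eq {π : Finset (Finset ℕ)} :
    cycUnlink π = π.image fun A => (uB π A).image (permOfInv (genPart π)) := by
  unfold cycUnlink mapPart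
  rw [unlink_eq, Finset.image_image]
  rfl
end S15


/-- Let `π ∈ NCL(n)`, and put `α := π°`, `β := π̂`. Then for any
sequence `(t_k)` in a commutative ring,
`∏_{A block of π} t_{|A|-1} =
  (∏_{U β-special block of α} t_{|U|-1}) · (∏_{V non-β-special block of α} t_{|V|})`. -/
theorem stmt15 {R : Type*} [CommRing R] (t : ℕ → R)
    (n : ℕ) (π : Finset (Finset ℕ)) (hπ : IsNCL n π) :
    ∏ A ∈ π, t (A.card - 1)
      = (∏ U ∈ (cycUnlink π).filter fun U => SpecialBlock (genPart π) U,
            t (U.card - 1))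
        * ∏ V ∈ (cycUnlink π).filter fun V => ¬ SpecialBlock (genPart π) V,
            t V.card := by
  classical
  have h : S15.LP π := ⟨hπ.1.1, hπ.1.2.2.2⟩
  have hcard : ∀ A : Finset ℕ,
      ((S15.uB π A).image (permOfInv (genPart π))).card = (S15.uB π A).card :=
    fun A => Finset.card_image_of_injective _ S15.permOfInv_inj
  have hF : ∀ A ∈ π,
      (if SpecialBlock (genPart π) ((S15.uB π A).image (permOfInv (genPart π))) then
          t (((S15.uB π A).image (permOfInv (genPart π))).card - 1)
        else t ((S15.uB π A).image (permOfInv (genPart π))).card) = t (A.card - 1) := by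
    intro A hA
    by_cases hs : SinglyCovered π (fmin A)
    · rw [if_pos ((S15.special_iff h hA).mpr hs), hcard, S15.uB_card h hA, if_pos hs]
    · rw [if_neg (fun hsp => hs ((S15.special_iff h hA).mp hsp)), hcard,
        S15.uB_card h hA, if_neg hs]
  have hinj : ∀ a ∈ π, ∀ b ∈ π,
      (S15.uB π a).image (permOfInv (genPart π)) =
        (S15.uB π b).image (permOfInv (genPart π)) → a = b := by
    intro a ha b hb he
    exact S15.uB_injOn h ha hb (Finset.image_injective S15.permOfInv_inj he)
  calc ∏ A ∈ π, t (A.card - 1)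
      = ∏ A ∈ π,
          (if SpecialBlock (genPart π) ((S15.uB π A).image (permOfInv (genPart π))) then
              t (((S15.uB π A).image (permOfInv (genPart π))).card - 1)
            else t ((S15.uB π A).image (permOfInv (genPart π))).card) :=
        Finset.prod_congr rfl fun A hA => (hF A hA).symm
    _ = ∏ V ∈ π.image fun A => (S15.uB π A).image (permOfInv (genPart π)),
          (if SpecialBlock (genPart π) V then t (V.card - 1) else t V.card) :=
        (Finset.prod_image
          (f := fun V => if SpecialBlock (genPart π) V then t (V.card - 1) else t V.card)
          (g := fun A => (S15.uB π A).image (permOfInv (genPart π)))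
          hinj).symm
    _ = ∏ V ∈ cycUnlink π,
          (if SpecialBlock (genPart π) V then t (V.card - 1) else t V.card) := by
        rw [S15.cycUnlink_eq]
    _ = (∏ U ∈ (cycUnlink π).filter fun U => SpecialBlock (genPart π) U,
            (if SpecialBlock (genPart π) U then t (U.card - 1) else t U.card))
        * ∏ V ∈ (cycUnlink π).filter fun V => ¬ SpecialBlock (genPart π) V,
            (if SpecialBlock (genPart π) V then t (V.card - 1) else t V.card) :=
        (Finset.prod_filter_mul_prod_filter_not _ _ _).symm
    _ = (∏ U ∈ (cycUnlink π).filter fun U => SpecialBlock (genPart π) U,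
            t (U.card - 1))
        * ∏ V ∈ (cycUnlink π).filter fun V => ¬ SpecialBlock (genPart π) V,
            t V.card := by
        congr 1
        · exact Finset.prod_congr rfl fun U hU =>
            if_pos (Finset.mem_filter.mp hU).2
        · exact Finset.prod_congr rfl fun V hV =>
            if_neg (Finset.mem_filter.mp hV).2
end

section
/- For every n ≥ 1 and every sequence (t_k)_{k ≥ 0} in a commutative ring: Σ_{π ∈ NCL(n)} ∏_{A block of π} t_{|A|−1} = Σ_{α, β ∈ NC(n), α ≪ β} (∏_{U β-special block of α} t_{|U|−1}) · (∏_{V block of α that is not β-special} t_{|V|}). (Applied to the coefficients t_k of the reciprocal S-transform 1/S_a of a noncommutative random variable a with φ(a) = 1, both sides equal the moment φ(aⁿ).) -/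
open scoped Classical

section Basics
variable {A V : Finset ℕ} {a m : ℕ}

lemma fmin_mem (h : A.Nonempty) : fmin A ∈ A := by
  have : sInf (A : Set ℕ) ∈ (A : Set ℕ) := Nat.sInf_mem (by obtain ⟨x, hx⟩ := h; exact ⟨x, by simpa using hx⟩)
  exact this

lemma fmin_le (h : a ∈ A) : fmin A ≤ a := Nat.sInf_le (by simpa using h)

lemma fmax_mem (h : A.Nonempty) : fmax A ∈ A := by
  have : sSup (A : Set ℕ) ∈ (A : Set ℕ) :=
    Nat.sSup_mem (by obtain ⟨x, hx⟩ := h; exact ⟨x, by simpa using hx⟩) A.bddAbove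
  exact this

lemma le_fmax (h : a ∈ A) : a ≤ fmax A := by
  have hb : BddAbove (A : Set ℕ) := A.bddAbove
  exact le_csSup hb (by simpa using h)

lemma fmin_eq_of (h : a ∈ A) (h2 : ∀ b ∈ A, a ≤ b) : fmin A = a :=
  le_antisymm (fmin_le h) (h2 _ (fmin_mem ⟨a, h⟩))

lemma fmax_eq_of (h : a ∈ A) (h2 : ∀ b ∈ A, b ≤ a) : fmax A = a :=
  le_antisymm (h2 _ (fmax_mem ⟨a, h⟩)) (le_fmax h)

lemma fmin_lt_of_mem (h : a ∈ A) (hne : a ≠ fmin A) : fmin A < a :=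
  lt_of_le_of_ne (fmin_le h) (Ne.symm hne)

lemma lt_fmax_of_mem (h : a ∈ A) (hne : a ≠ fmax A) : a < fmax A :=
  lt_of_le_of_ne (le_fmax h) hne

end Basics



section NextPrev
variable {V : Finset ℕ} {m : ℕ}

lemma nextfilter_nonempty (hm : m ∈ V) (h : m ≠ fmax V) : (V.filter fun x => m < x).Nonempty :=
  ⟨fmax V, by simp [Finset.mem_filter, fmax_mem ⟨m, hm⟩, lt_fmax_of_mem hm h]⟩

lemma next_mem (hm : m ∈ V) : nextInBlock V m ∈ V := by
  unfold nextInBlock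
  split
  · exact fmin_mem ⟨m, hm⟩
  · next h => exact (Finset.mem_filter.1 (fmin_mem (nextfilter_nonempty hm h))).1

lemma lt_next (hm : m ∈ V) (h : m ≠ fmax V) : m < nextInBlock V m := by
  unfold nextInBlock
  rw [if_neg h]
  exact (Finset.mem_filter.1 (fmin_mem (nextfilter_nonempty hm h))).2

lemma next_le (hm : m ∈ V) (h : m ≠ fmax V) {x : ℕ} (hx : x ∈ V) (hlt : m < x) :
    nextInBlock V m ≤ x := by
  unfold nextInBlock
  rw [if_neg h]
  exact fmin_le (by simp [Finset.mem_filter, hx, hlt])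

/-- no element of `V` strictly between `m` and its successor -/
lemma not_between_next (hm : m ∈ V) (h : m ≠ fmax V) {x : ℕ} (hx : x ∈ V)
    (h1 : m < x) : ¬ x < nextInBlock V m := fun h2 => absurd (next_le hm h hx h1) (by omega)

lemma prevfilter_nonempty (hm : m ∈ V) (h : m ≠ fmin V) : (V.filter fun x => x < m).Nonempty :=
  ⟨fmin V, by simp [Finset.mem_filter, fmin_mem ⟨m, hm⟩, fmin_lt_of_mem hm h]⟩

lemma prev_mem (hm : m ∈ V) : prevInBlock V m ∈ V := by
  unfold prevInBlock
  split
  · exact fmax_mem ⟨m, hm⟩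
  · next h => exact (Finset.mem_filter.1 (fmax_mem (prevfilter_nonempty hm h))).1

lemma prev_lt (hm : m ∈ V) (h : m ≠ fmin V) : prevInBlock V m < m := by
  unfold prevInBlock
  rw [if_neg h]
  exact (Finset.mem_filter.1 (fmax_mem (prevfilter_nonempty hm h))).2

lemma le_prev (hm : m ∈ V) (h : m ≠ fmin V) {x : ℕ} (hx : x ∈ V) (hlt : x < m) :
    x ≤ prevInBlock V m := by
  unfold prevInBlock
  rw [if_neg h]
  exact le_fmax (by simp [Finset.mem_filter, hx, hlt])

lemma prev_next (hm : m ∈ V) (h : m ≠ fmax V) : prevInBlock V (nextInBlock V m) = m := by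
  have h1 := lt_next hm h
  have h2 := next_mem hm
  have hne : nextInBlock V m ≠ fmin V := by
    have := fmin_le hm; omega
  apply le_antisymm
  · by_contra hc
    push_neg at hc
    have := prev_mem h2
    have h3 := prev_lt h2 hne
    exact not_between_next hm h (prev_mem h2) (by omega) (by omega)
  · exact le_prev h2 hne hm h1

lemma next_prev (hm : m ∈ V) (h : m ≠ fmin V) : nextInBlock V (prevInBlock V m) = m := by
  have h1 := prev_lt hm h
  have h2 := prev_mem hm
  have hne : prevInBlock V m ≠ fmax V := by
    have := le_fmax hm; omega
  apply le_antisymm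
  · exact next_le h2 hne hm h1
  · by_contra hc
    push_neg at hc
    have h3 := lt_next h2 hne
    have h4 := next_mem h2
    exact absurd (le_prev hm h h4 (by omega)) (by omega)

lemma next_fmax (V : Finset ℕ) : nextInBlock V (fmax V) = fmin V := by simp [nextInBlock]

lemma prev_fmin (V : Finset ℕ) : prevInBlock V (fmin V) = fmax V := by simp [prevInBlock]

lemma next_inj (hV : V.Nonempty) {x y : ℕ} (hx : x ∈ V) (hy : y ∈ V)
    (h : nextInBlock V x = nextInBlock V y) : x = y := by
  by_cases h1 : x = fmax V <;> by_cases h2 : y = fmax V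
  · omega
  · exfalso
    rw [h1, next_fmax] at h
    have := lt_next hy h2
    have := fmin_le hy
    omega
  · exfalso
    rw [h2, next_fmax] at h
    have := lt_next hx h1
    have := fmin_le hx
    omega
  · have := prev_next hx h1
    have := prev_next hy h2
    rw [h] at *
    omega

end NextPrev



section Part
variable {F : Finset ℕ} {β : Finset (Finset ℕ)} {W V : Finset ℕ} {m : ℕ}

lemma part_unique (h : IsPartitionOfSet F β) (hW : W ∈ β) (hV : V ∈ β)
    (hmW : m ∈ W) (hmV : m ∈ V) : W = V := by
  by_contra hne
  have := h.2.2.2 W hW V hV hne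
  have : m ∈ W ∩ V := Finset.mem_inter.2 ⟨hmW, hmV⟩
  simp_all

lemma blockOf_eq (h : IsPartitionOfSet F β) (hW : W ∈ β) (hm : m ∈ W) :
    blockOf β m = W := by
  have hf : β.filter (fun V => m ∈ V) = {W} := by
    apply Finset.ext
    intro X
    simp only [Finset.mem_filter, Finset.mem_singleton]
    constructor
    · rintro ⟨hX, hmX⟩; exact (part_unique h hX hW hmX hm).symm ▸ rfl
    · rintro rfl; exact ⟨hW, hm⟩
  rw [blockOf, hf]
  simp

lemma permOf_eq (h : IsPartitionOfSet F β) (hW : W ∈ β) (hm : m ∈ W) :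
    permOf β m = nextInBlock W m := by
  rw [permOf, blockOf_eq h hW hm, if_pos hm]

lemma permOfInv_eq (h : IsPartitionOfSet F β) (hW : W ∈ β) (hm : m ∈ W) :
    permOfInv β m = prevInBlock W m := by
  rw [permOfInv, blockOf_eq h hW hm, if_pos hm]

end Part


section Conn
variable {π : Finset (Finset ℕ)} {a b c d : ℕ}

def stepR (π : Finset (Finset ℕ)) (a b : ℕ) : Prop := ∃ A ∈ π, a ∈ A ∧ b ∈ A

lemma stepR_symm (h : stepR π a b) : stepR π b a := by
  obtain ⟨A, hA, h1, h2⟩ := h; exact ⟨A, hA, h2, h1⟩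

def connR (π : Finset (Finset ℕ)) : ℕ → ℕ → Prop := Relation.ReflTransGen (stepR π)

lemma connR_symm (h : connR π a b) : connR π b a := by
  induction h with
  | refl => exact Relation.ReflTransGen.refl
  | tail _ hstep ih => exact Relation.ReflTransGen.head (stepR_symm hstep) ih

lemma connR_trans (h1 : connR π a b) (h2 : connR π b c) : connR π a c :=
  Relation.ReflTransGen.trans h1 h2

lemma connR_iff_eqvGen : connR π a b ↔ Relation.EqvGen (stepR π) a b := by
  constructor
  · intro h
    induction h with
    | refl => exact Relation.EqvGen.refl a
    | tail _ hstep ih => exact Relation.EqvGen.trans _ _ _ ih (Relation.EqvGen.rel _ _ hstep)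
  · intro h
    induction h with
    | rel x y h => exact Relation.ReflTransGen.single h
    | refl x => exact Relation.ReflTransGen.refl
    | symm x y _ ih => exact connR_symm ih
    | trans x y z _ _ ih1 ih2 => exact Relation.ReflTransGen.trans ih1 ih2

lemma connR_closure {S : Set ℕ} (hS : ∀ x ∈ S, ∀ y, stepR π x y → y ∈ S)
    (ha : a ∈ S) (h : connR π a b) : b ∈ S := by
  induction h with
  | refl => exact ha
  | tail _ hstep ih => exact hS _ ih _ hstep

inductive ChainN (π : Finset (Finset ℕ)) : ℕ → ℕ → ℕ → Prop
  | zero (a : ℕ) : ChainN π 0 a a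
  | succ {k a b c : ℕ} : ChainN π k a b → stepR π b c → ChainN π (k+1) a c

lemma chainN_of_connR (h : connR π a b) : ∃ k, ChainN π k a b := by
  induction h with
  | refl => exact ⟨0, ChainN.zero a⟩
  | tail _ hstep ih => obtain ⟨k, hk⟩ := ih; exact ⟨k+1, hk.succ hstep⟩

lemma connR_of_chainN {k : ℕ} (h : ChainN π k a b) : connR π a b := by
  induction h with
  | zero => exact Relation.ReflTransGen.refl
  | succ _ hstep ih => exact Relation.ReflTransGen.tail ih hstep

lemma chainN_cons {k : ℕ} (h : ChainN π k b c) : ∀ {a}, stepR π a b → ChainN π (k+1) a c := by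
  induction h with
  | zero => intro a hstep; exact (ChainN.zero _).succ hstep
  | succ _ hstep2 ih => intro a hstep; exact (ih hstep).succ hstep2

lemma chainN_symm {k : ℕ} (h : ChainN π k a b) : ChainN π k b a := by
  induction h with
  | zero => exact ChainN.zero _
  | succ _ hstep ih => exact chainN_cons ih (stepR_symm hstep)

lemma chainN_zero_eq (h : ChainN π 0 a b) : a = b := by cases h; rfl

lemma chainN_succ_iff {k : ℕ} (h : ChainN π (k+1) a c) : ∃ e, ChainN π k a e ∧ stepR π e c := by
  cases h with | succ h1 h2 => exact ⟨_, h1, h2⟩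

lemma chainN_one (h : ChainN π 1 a b) : stepR π a b := by
  obtain ⟨e, h1, h2⟩ := chainN_succ_iff h
  rwa [chainN_zero_eq h1]

lemma eqv_of_chainN {k : ℕ} (h : ChainN π k a b) : Relation.EqvGen (stepR π) a b :=
  connR_iff_eqvGen.1 (connR_of_chainN h)

/-- Key lemma: chain-connected sets in distinct components cannot cross. -/
theorem no_cross_conn (hnc : ¬ IsCrossing π) :
    ∀ N k1 k2 a b c d, k1 + k2 ≤ N → ChainN π k1 a c → ChainN π k2 b d →
      ¬ Relation.EqvGen (stepR π) a b → a < b → b < c → c < d → False := by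
  intro N
  induction N using Nat.strong_induction_on with
  | _ N IH =>
  intro k1 k2 a b c d hle h1 h2 hnconn hab hbc hcd
  have hconn_ac := eqv_of_chainN h1
  have hconn_bd := eqv_of_chainN h2
  have hnab : ∀ x, Relation.EqvGen (stepR π) a x → Relation.EqvGen (stepR π) b x → False := by
    intro x h1' h2'
    exact hnconn (Relation.EqvGen.trans _ _ _ h1' (Relation.EqvGen.symm _ _ h2'))
  rcases k2 with _ | k2'
  · exact absurd (chainN_zero_eq h2) (by omega)
  rcases k2' with _ | k2'
  · -- k2 = 1
    rcases k1 with _ | k1'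
    · exact absurd (chainN_zero_eq h1) (by omega)
    rcases k1' with _ | k1'
    · -- base case k1 = k2 = 1
      obtain ⟨A, hA, haA, hcA⟩ := chainN_one h1
      obtain ⟨B, hB, hbB, hdB⟩ := chainN_one h2
      have hAB : A ≠ B := by
        rintro rfl
        exact hnconn (connR_iff_eqvGen.1 (Relation.ReflTransGen.single ⟨A, hA, haA, hbB⟩))
      exact hnc ⟨A, hA, B, hB, hAB, a, haA, b, hbB, c, hcA, d, hdB, hab, hbc, hcd⟩
    · -- k1 ≥ 2, k2 = 1 : decompose the a-c chain
      obtain ⟨e, h1', hstep⟩ := chainN_succ_iff h1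
      obtain ⟨A, hA, heA, hcA⟩ := hstep
      have hae : Relation.EqvGen (stepR π) a e := eqv_of_chainN h1'
      have hec1 : ChainN π 1 e c := (ChainN.zero e).succ ⟨A, hA, heA, hcA⟩
      rcases eq_or_ne e a with he | hena
      · rw [he] at hec1
        exact IH 2 (by omega) 1 1 a b c d (by omega) hec1 h2 hnconn hab hbc hcd
      rcases eq_or_ne e c with he | henc
      · rw [he] at h1'
        exact IH (k1' + 2) (by omega) (k1'+1) 1 a b c d (by omega) h1' h2 hnconn hab hbc hcd
      rcases eq_or_ne e b with he | henb
      · rw [he] at hae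
        exact hnab b hae (Relation.EqvGen.refl b)
      rcases eq_or_ne e d with he | hend
      · rw [he] at hae
        exact hnab d hae hconn_bd
      rcases lt_trichotomy e a with hea | hea | hea
      · -- e < a : quadruple (e, b, c, d), pair {e,c} chain 1, pair {b,d} chain 1
        exact IH 2 (by omega) 1 1 e b c d (by omega) hec1 h2
          (fun hc => hnab e hae (Relation.EqvGen.symm _ _ hc)) (by omega) hbc hcd
      · omega
      rcases lt_trichotomy e b with heb | heb | heb
      · -- a < e < b : quadruple (e, b, c, d)
        exact IH 2 (by omega) 1 1 e b c d (by omega) hec1 h2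
          (fun hc => hnab e hae (Relation.EqvGen.symm _ _ hc)) heb hbc hcd
      · omega
      rcases lt_trichotomy e c with hec | hec | hec
      · -- b < e < c : quadruple (a, b, e, d), pair {a,e} chain k1-1, pair {b,d}
        exact IH (k1' + 2) (by omega) (k1'+1) 1 a b e d (by omega) h1' h2 hnconn hab heb
          (by omega)
      · omega
      rcases lt_trichotomy e d with hed | hed | hed
      · -- c < e < d : quadruple (a, b, e, d)
        exact IH (k1' + 2) (by omega) (k1'+1) 1 a b e d (by omega) h1' h2 hnconn hab heb hed
      · omega
      · -- e > d : quadruple (b, c, d, e), pair {b,d} chain 1, pair {c,e} chain 1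
        exact IH 2 (by omega) 1 1 b c d e (by omega) h2 (chainN_symm hec1)
          (fun hc => hnab c hconn_ac hc) hbc hcd hed
  · -- k2 ≥ 2 : decompose the b-d chain
    obtain ⟨e, h2', hstep⟩ := chainN_succ_iff h2
    obtain ⟨B, hB, heB, hdB⟩ := hstep
    have hbe : Relation.EqvGen (stepR π) b e := eqv_of_chainN h2'
    have hed1 : ChainN π 1 e d := (ChainN.zero e).succ ⟨B, hB, heB, hdB⟩
    rcases eq_or_ne e b with he | henb
    · rw [he] at hed1
      exact IH (k1 + 1) (by omega) k1 1 a b c d (by omega) h1 hed1 hnconn hab hbc hcd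
    rcases eq_or_ne e d with he | hend
    · rw [he] at h2'
      exact IH (k1 + k2' + 1) (by omega) k1 (k2'+1) a b c d (by omega) h1 h2' hnconn hab hbc hcd
    rcases eq_or_ne e a with he | hena
    · rw [he] at hbe
      exact hnab a (Relation.EqvGen.refl a) hbe
    rcases eq_or_ne e c with he | henc
    · rw [he] at hbe
      exact hnab c hconn_ac hbe
    rcases lt_trichotomy e a with hea | hea | hea
    · -- e < a : quadruple (e, a, b, c), pair {e,b} chain k2-1, pair {a,c} chain k1
      exact IH (k1 + k2' + 1) (by omega) (k2'+1) k1 e a b c (by omega)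
        (chainN_symm h2') h1
        (fun hc => hnab e (Relation.EqvGen.symm _ _ hc) hbe) hea hab hbc
    · omega
    rcases lt_trichotomy e c with hec | hec | hec
    · -- a < e < b or b < e < c : quadruple (a, e, c, d), pair {a,c}, pair {e,d} chain 1
      exact IH (k1 + 1) (by omega) k1 1 a e c d (by omega) h1 hed1
        (fun hc => hnab e hc hbe) hea hec hcd
    · omega
    · -- e > c : quadruple (a, b, c, e)
      exact IH (k1 + k2' + 1) (by omega) k1 (k2'+1) a b c e (by omega) h1 h2' hnconn hab hbc hec

end Conn


section NCLStruct
variable {F : Finset ℕ} {π : Finset (Finset ℕ)} {A B C D E V W : Finset ℕ} {m x y z : ℕ}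

variable (hlp : IsLinkedPartitionOfSet F π) (hnc : ¬ IsCrossing π)

include hlp

lemma shared_struct (hA : A ∈ π) (hB : B ∈ π) (hne : A ≠ B) (hmA : m ∈ A) (hmB : m ∈ B) :
    (m = fmin A ∨ m = fmin B) ∧ fmin A ≠ fmin B ∧ 2 ≤ A.card ∧ 2 ≤ B.card ∧
      ∀ y, y ∈ A → y ∈ B → y = m := by
  rcases hlp.2.2.2 A hA B hB hne with h | ⟨h1, h2, h3, h4, h5⟩
  · exfalso; have : m ∈ A ∩ B := Finset.mem_inter.2 ⟨hmA, hmB⟩; simp_all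
  · have hmAB : m ∈ A ∩ B := Finset.mem_inter.2 ⟨hmA, hmB⟩
    obtain ⟨u, hu⟩ := Finset.card_eq_one.1 h3
    refine ⟨h5 m hmAB, h4, h1, h2, ?_⟩
    intro y hyA hyB
    have h6 : y ∈ A ∩ B := Finset.mem_inter.2 ⟨hyA, hyB⟩
    rw [hu] at h6 hmAB
    simp at h6 hmAB; omega

lemma no_three_blocks (hA : A ∈ π) (hB : B ∈ π) (hC : C ∈ π)
    (hAB : A ≠ B) (hAC : A ≠ C) (hBC : B ≠ C)
    (hmA : m ∈ A) (hmB : m ∈ B) (hmC : m ∈ C) : False := by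
  obtain ⟨hor1, hne1, -⟩ := shared_struct hlp hA hB hAB hmA hmB
  obtain ⟨hor2, hne2, -⟩ := shared_struct hlp hA hC hAC hmA hmC
  obtain ⟨hor3, hne3, -⟩ := shared_struct hlp hB hC hBC hmB hmC
  rcases hor1 with h | h <;> rcases hor2 with h' | h' <;> rcases hor3 with h'' | h'' <;> omega

lemma blocks_of_doubly (hA : A ∈ π) (hB : B ∈ π) (hne : A ≠ B) (hmA : m ∈ A) (hmB : m ∈ B)
    (hC : C ∈ π) (hmC : m ∈ C) : C = A ∨ C = B := by
  by_contra h
  push_neg at h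
  exact no_three_blocks hlp hA hB hC hne (Ne.symm h.1) (Ne.symm h.2) hmA hmB hmC

/-- the component of `m` -/
noncomputable def compOf (F : Finset ℕ) (π : Finset (Finset ℕ)) (m : ℕ) : Finset ℕ :=
  F.filter fun x => Relation.EqvGen (stepR π) m x

omit hlp in
lemma mem_compOf_self (hm : m ∈ F) : m ∈ compOf F π m := by
  simp [compOf, hm, Relation.EqvGen.refl]

omit hlp in
lemma mem_compOf_iff : x ∈ compOf F π m ↔ x ∈ F ∧ Relation.EqvGen (stepR π) m x := by
  simp [compOf]

omit hlp in
lemma compOf_eq_of_mem (hx : x ∈ compOf F π m) : compOf F π x = compOf F π m := by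
  rw [mem_compOf_iff] at hx
  apply Finset.ext
  intro y
  simp only [mem_compOf_iff]
  exact ⟨fun ⟨h1, h2⟩ => ⟨h1, Relation.EqvGen.trans _ _ _ hx.2 h2⟩,
    fun ⟨h1, h2⟩ => ⟨h1, Relation.EqvGen.trans _ _ _ (Relation.EqvGen.symm _ _ hx.2) h2⟩⟩

lemma block_subset_compOf (hA : A ∈ π) (hm : m ∈ A) : A ⊆ compOf F π m := by
  intro x hx
  rw [mem_compOf_iff]
  exact ⟨hlp.2.1 A hA hx, Relation.EqvGen.rel _ _ ⟨A, hA, hm, hx⟩⟩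

lemma compOf_subset (hm : m ∈ F) : compOf F π m ⊆ F := Finset.filter_subset _ _

/-- an element that lies in two blocks lies above the min of one of them -/
lemma doubly_above (hA : A ∈ π) (hB : B ∈ π) (hne : A ≠ B) (hmA : m ∈ A) (hmB : m ∈ B) :
    (fmin A < m ∧ fmin A ∈ A) ∨ (fmin B < m ∧ fmin B ∈ B) := by
  obtain ⟨hor, hne1, -⟩ := shared_struct hlp hA hB hne hmA hmB
  rcases hor with h | h
  · right
    have := fmin_le hmB
    exact ⟨by omega, fmin_mem ⟨m, hmB⟩⟩
  · left
    have := fmin_le hmA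
    exact ⟨by omega, fmin_mem ⟨m, hmA⟩⟩

/-- the min of a component is singly covered -/
lemma comp_min_singly (hm : m ∈ F) (hmin : ∀ x ∈ compOf F π m, m ≤ x)
    (hA : A ∈ π) (hB : B ∈ π) (hmA : m ∈ A) (hmB : m ∈ B) : A = B := by
  by_contra hne
  rcases doubly_above hlp hA hB hne hmA hmB with ⟨h1, h2⟩ | ⟨h1, h2⟩
  · exact absurd (hmin _ (block_subset_compOf hlp hA hmA h2)) (by omega)
  · exact absurd (hmin _ (block_subset_compOf hlp hB hmB h2)) (by omega)

end NCLStruct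

section NCLStruct2
variable {F : Finset ℕ} {π : Finset (Finset ℕ)} {A B C D E V W : Finset ℕ} {m x y z : ℕ}
variable (hlp : IsLinkedPartitionOfSet F π) (hnc : ¬ IsCrossing π)

include hlp

lemma exists_gt_in_block (hA : A ∈ π) (hm : m ∈ A) (hmin : fmin A = m) (hmF : m ∈ F)
    (hne : m ≠ fmax (compOf F π m)) : ∃ x ∈ A, m < x := by
  by_contra h
  push_neg at h
  have hAm : A = {m} := by
    apply Finset.ext
    intro x
    simp only [Finset.mem_singleton]
    constructor
    · intro hx
      have h1 := h x hx
      have h2 := fmin_le hx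
      omega
    · rintro rfl; exact hm
  have hcomp : ∀ w, Relation.EqvGen (stepR π) m w → w = m := by
    intro w hw
    refine connR_closure (S := {w | w = m}) ?_ rfl (connR_iff_eqvGen.2 hw)
    rintro a rfl b ⟨D, hD, haD, hbD⟩
    have hDA : D = A := by
      by_contra hne'
      obtain ⟨-, -, hcard, -⟩ := shared_struct hlp hA hD (Ne.symm hne') hm haD
      rw [hAm] at hcard
      simp at hcard
    rw [hDA, hAm] at hbD
    simpa using hbD
  apply hne
  have h1 : compOf F π m = {m} := by
    apply Finset.ext
    intro w
    simp only [mem_compOf_iff, Finset.mem_singleton]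
    exact ⟨fun ⟨h1, h2⟩ => hcomp w h2, fun h => by subst h; exact ⟨hmF, Relation.EqvGen.refl _⟩⟩
  rw [h1]
  simp [fmax]

include hnc in
/-- M6 : the successor (in its component) of the min of a block belongs to that block -/
lemma succ_mem_block (hA : A ∈ π) (hm : m ∈ A) (hmin : fmin A = m) (hmF : m ∈ F)
    (hne : m ≠ fmax (compOf F π m)) : nextInBlock (compOf F π m) m ∈ A := by
  set Wc := compOf F π m with hWc
  have hmW : m ∈ Wc := mem_compOf_self hmF
  set z := nextInBlock Wc m with hz
  have hzW : z ∈ Wc := next_mem hmW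
  have hmz : m < z := lt_next hmW hne
  by_contra hzA
  obtain ⟨x0, hx0A, hx0⟩ := exists_gt_in_block hlp hA hm hmin hmF hne
  have hmfA : m ≠ fmax A := by
    have := le_fmax hx0A; omega
  set a2 := nextInBlock A m with ha2
  have ha2A : a2 ∈ A := next_mem hm
  have hma2 : m < a2 := lt_next hm hmfA
  have hgap : ∀ u ∈ A, m < u → ¬ u < a2 := fun u hu h1 => not_between_next hm hmfA hu h1
  have hza2 : z < a2 := by
    have h1 : a2 ∈ Wc := block_subset_compOf hlp hA hm ha2A
    have h2 : z ≤ a2 := next_le hmW hne h1 hma2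
    have h3 : z ≠ a2 := fun h => hzA (h ▸ ha2A)
    omega
  -- closure argument
  have hS : ∀ u ∈ {u | m < u ∧ u < a2}, ∀ v, stepR π u v → v ∈ {u | m < u ∧ u < a2} := by
    rintro u ⟨hu1, hu2⟩ v ⟨D, hD, huD, hvD⟩
    have hDA : D ≠ A := by
      rintro rfl
      exact hgap u huD hu1 hu2
    rcases lt_trichotomy v m with hvm | hvm | hvm
    · exact absurd ⟨D, hD, A, hA, hDA, v, hvD, m, hm, u, huD, a2, ha2A, hvm, hu1, hu2⟩ hnc
    · subst hvm
      obtain ⟨hor, hne1, -⟩ := shared_struct hlp hA hD (Ne.symm hDA) hm hvD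
      have hfD : fmin D < v := by
        have := fmin_le hvD
        rcases hor with h | h <;> omega
      exact absurd ⟨D, hD, A, hA, hDA, fmin D, fmin_mem ⟨v, hvD⟩, v, hm, u, huD, a2, ha2A,
        hfD, hu1, hu2⟩ hnc
    rcases lt_trichotomy v a2 with hva | hva | hva
    · exact ⟨hvm, hva⟩
    · exfalso
      subst hva
      obtain ⟨hor, hne1, -⟩ := shared_struct hlp hA hD (Ne.symm hDA) ha2A hvD
      have h2 := fmin_le huD
      omega
    · exact absurd ⟨A, hA, D, hD, Ne.symm hDA, m, hm, u, huD, a2, ha2A, v, hvD, hu1, hu2, hva⟩ hnc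
  have hzm : connR π z m := by
    rw [mem_compOf_iff] at hzW
    exact connR_iff_eqvGen.2 (Relation.EqvGen.symm _ _ hzW.2)
  have : m ∈ {u | m < u ∧ u < a2} := connR_closure hS ⟨hmz, hza2⟩ hzm
  simp at this

end NCLStruct2

inductive RReach (π : Finset (Finset ℕ)) (m : ℕ) : ℕ → Finset ℕ → Prop
  | base {D z} : D ∈ π → m ∈ D → z ∈ D → z ≠ m → RReach π m z D
  | step {z D z' E} : RReach π m z D → E ∈ π → E ≠ D → z ∈ E → z' ∈ E → z' ≠ z →
      RReach π m z' E

section S1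
variable {F : Finset ℕ} {π : Finset (Finset ℕ)} {A B D E : Finset ℕ} {m x y z : ℕ}

lemma rreach_of_mem_block (h : RReach π m z D) : ∀ y ∈ D, y ≠ m → ∃ D', RReach π m y D' := by
  induction h with
  | base hD hmD hzD hzm => exact fun y hy hym => ⟨_, RReach.base hD hmD hy hym⟩
  | @step z D0 z' E h hE hED hzE hz'E hz'z ih =>
      intro y hy hym
      rcases eq_or_ne y z with rfl | hyz
      · exact ⟨D0, h⟩
      · exact ⟨E, h.step hE hED hzE hy hyz⟩

lemma reach_rreach (h : Relation.EqvGen (stepR π) m x) : x = m ∨ ∃ D, RReach π m x D := by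
  refine connR_closure (S := {x | x = m ∨ ∃ D, RReach π m x D}) ?_ (Or.inl rfl)
    (connR_iff_eqvGen.2 h)
  rintro a ha b ⟨E, hE, haE, hbE⟩
  rcases ha with rfl | ⟨D, hD⟩
  · rcases eq_or_ne b a with rfl | hne
    · exact Or.inl rfl
    · exact Or.inr ⟨E, RReach.base hE haE hbE hne⟩
  · rcases eq_or_ne b m with rfl | hbm
    · exact Or.inl rfl
    rcases eq_or_ne E D with rfl | hED
    · exact Or.inr (rreach_of_mem_block hD b hbE hbm)
    rcases eq_or_ne b a with rfl | hba
    · exact Or.inr ⟨D, hD⟩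
    · exact Or.inr ⟨E, hD.step hE hED haE hbE hba⟩

variable (hlp : IsLinkedPartitionOfSet F π)
include hlp

lemma rreach_inv (hA : A ∈ π) (hsingly : ∀ B ∈ π, fmin A ∈ B → B = A)
    (h : RReach π (fmin A) z D) : z ∈ D ∧ fmin A ≤ fmin D ∧ z ≠ fmin D ∧ D ∈ π := by
  induction h with
  | @base D' z' hD hmD hzD hzm =>
      have hDA : D' = A := hsingly _ hD hmD
      subst hDA
      exact ⟨hzD, le_refl _, hzm, hD⟩
  | @step z D0 z' E h hE hED hzE hz'E hz'z ih =>
      obtain ⟨hzD, hminle, hzne, hD0⟩ := ih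
      obtain ⟨hor, -, -⟩ := shared_struct hlp hD0 hE (Ne.symm hED) hzD hzE
      have hzfE : z = fmin E := by
        rcases hor with h' | h'
        · exact absurd h' hzne
        · exact h'
      refine ⟨hz'E, ?_, ?_, hE⟩
      · have := fmin_le hzD
        omega
      · rw [← hzfE]; exact hz'z

/-- S1 : if the min of a block is singly covered, everything connected to it is above it -/
lemma singly_min_le_reach (hA : A ∈ π) (hsingly : ∀ B ∈ π, fmin A ∈ B → B = A)
    (hx : Relation.EqvGen (stepR π) (fmin A) x) : fmin A ≤ x := by
  rcases reach_rreach hx with rfl | ⟨D, hD⟩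
  · exact le_refl _
  · obtain ⟨h1, h2, -, -⟩ := rreach_inv hlp hA hsingly hD
    have := fmin_le h1
    omega

end S1


noncomputable def PsiB (β : Finset (Finset ℕ)) (V : Finset ℕ) : Finset ℕ :=
  if SpecialBlock β V then V.image (permOf β) else insert (fmin V) (V.image (permOf β))

noncomputable def Psi (β α : Finset (Finset ℕ)) : Finset (Finset ℕ) := α.image (PsiB β)

section PsiSide
variable {n : ℕ} {α β : Finset (Finset ℕ)} {U V V' W W' : Finset ℕ} {m u v x y : ℕ}

variable (hα : IsNCPartition n α) (hβ : IsNCPartition n β) (hll : LL α β)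

include hll in
lemma blk_sub (hV : V ∈ α) : ∃ W ∈ β, V ⊆ W := hll.1 V hV

include hα hβ hll

lemma leader_ex (hW : W ∈ β) : ∃ L ∈ α, L ⊆ W ∧ fmin L = fmin W ∧ fmax L = fmax W := by
  obtain ⟨V, hV, h1, h2⟩ := hll.2 W hW
  obtain ⟨W', hW', hsub⟩ := hll.1 V hV
  have hWW : W' = W := part_unique hβ.1 hW' hW (hsub h1) (fmin_mem (hβ.1.1 W hW))
  subst hWW
  refine ⟨V, hV, hsub, ?_, ?_⟩
  · exact le_antisymm (fmin_le h1) (fmin_le (hsub (fmin_mem ⟨_, h1⟩)))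
  · exact le_antisymm (le_fmax (hsub (fmax_mem ⟨_, h1⟩))) (le_fmax h2)

lemma special_iff (hV : V ∈ α) (hW : W ∈ β) (hsub : V ⊆ W) :
    SpecialBlock β V ↔ fmin V = fmin W ∧ fmax V = fmax W := by
  constructor
  · rintro ⟨W'', hW'', h1, h2⟩
    have hVne : V.Nonempty := hα.1.1 V hV
    have h3 : fmin W'' ∈ W := hsub (h1 ▸ fmin_mem hVne)
    have h4 : fmin W'' ∈ W'' := by
      rw [← h1]
      exact h1 ▸ fmin_mem (hβ.1.1 W'' hW'')
    have hWW : W'' = W := part_unique hβ.1 hW'' hW h4 h3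
    exact hWW ▸ ⟨h1, h2⟩
  · rintro ⟨h1, h2⟩
    exact ⟨W, hW, h1, h2⟩

lemma mem_imp_eq (hV : V ∈ α) (hV' : V' ∈ α) (hx : x ∈ V) (hx' : x ∈ V') : V = V' :=
  part_unique hα.1 hV hV' hx hx'

/-- properties of a non-special block -/
lemma nonspecial_facts (hV : V ∈ α) (hW : W ∈ β) (hsub : V ⊆ W)
    (hns : ¬ SpecialBlock β V) : fmin W < fmin V ∧ fmax V < fmax W ∧
      fmin W ∉ V ∧ fmax W ∉ V := by
  have hVne : V.Nonempty := hα.1.1 V hV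
  obtain ⟨L, hL, hLsub, hL1, hL2⟩ := leader_ex hα hβ hll hW
  have hLne : L.Nonempty := hα.1.1 L hL
  have hmin_notin : fmin W ∉ V := by
    intro hmem
    have hVL : V = L := mem_imp_eq hα hβ hll hV hL hmem (hL1 ▸ fmin_mem hLne)
    subst hVL
    exact hns ((special_iff hα hβ hll hV hW hsub).2 ⟨hL1, hL2⟩)
  have hmax_notin : fmax W ∉ V := by
    intro hmem
    have hVL : V = L := mem_imp_eq hα hβ hll hV hL hmem (hL2 ▸ fmax_mem hLne)
    subst hVL
    exact hns ((special_iff hα hβ hll hV hW hsub).2 ⟨hL1, hL2⟩)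
  refine ⟨?_, ?_, hmin_notin, hmax_notin⟩
  · have h1 : fmin W ≤ fmin V := fmin_le (hsub (fmin_mem hVne))
    have h2 : fmin V ≠ fmin W := fun h => hmin_notin (h ▸ fmin_mem hVne)
    omega
  · have h1 : fmax V ≤ fmax W := le_fmax (hsub (fmax_mem hVne))
    have h2 : fmax V ≠ fmax W := fun h => hmax_notin (h ▸ fmax_mem hVne)
    omega

omit hα hll in
lemma P_mem (hW : W ∈ β) (hm : m ∈ W) : permOf β m ∈ W := by
  rw [permOf_eq hβ.1 hW hm]
  exact next_mem hm

omit hα hll in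
lemma P_gt (hW : W ∈ β) (hm : m ∈ W) (hne : m ≠ fmax W) : m < permOf β m := by
  rw [permOf_eq hβ.1 hW hm]
  exact lt_next hm hne

omit hα hll in
lemma P_inj_W (hW : W ∈ β) (hx : x ∈ W) (hy : y ∈ W) (h : permOf β x = permOf β y) : x = y := by
  rw [permOf_eq hβ.1 hW hx, permOf_eq hβ.1 hW hy] at h
  exact next_inj ⟨x, hx⟩ hx hy h

omit hα hll in
lemma P_surj (hW : W ∈ β) (hm : m ∈ W) :
    prevInBlock W m ∈ W ∧ permOf β (prevInBlock W m) = m := by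
  have h1 : prevInBlock W m ∈ W := prev_mem hm
  refine ⟨h1, ?_⟩
  rw [permOf_eq hβ.1 hW h1]
  rcases eq_or_ne m (fmin W) with rfl | hne
  · rw [prev_fmin, next_fmax]
  · exact next_prev hm hne

omit hα hll in
lemma P_wrap (hW : W ∈ β) (hm : fmax W ∈ W) : permOf β (fmax W) = fmin W := by
  rw [permOf_eq hβ.1 hW hm, next_fmax]

lemma psib_subset (hV : V ∈ α) (hW : W ∈ β) (hsub : V ⊆ W) : PsiB β V ⊆ W := by
  unfold PsiB
  split
  · intro x hx
    obtain ⟨v, hv, rfl⟩ := Finset.mem_image.1 hx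
    exact P_mem hβ hW (hsub hv)
  · intro x hx
    rcases Finset.mem_insert.1 hx with rfl | hx
    · exact hsub (fmin_mem (hα.1.1 V hV))
    · obtain ⟨v, hv, rfl⟩ := Finset.mem_image.1 hx
      exact P_mem hβ hW (hsub hv)

lemma P_gt_nonspecial (hV : V ∈ α) (hW : W ∈ β) (hsub : V ⊆ W)
    (hns : ¬ SpecialBlock β V) (hv : v ∈ V) : v < permOf β v := by
  obtain ⟨-, -, -, h4⟩ := nonspecial_facts hα hβ hll hV hW hsub hns
  exact P_gt hβ hW (hsub hv) (fun h => h4 (h ▸ hv))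

lemma psib_min (hV : V ∈ α) (hW : W ∈ β) (hsub : V ⊆ W) : fmin (PsiB β V) = fmin V := by
  have hVne : V.Nonempty := hα.1.1 V hV
  unfold PsiB
  split
  · next hsp =>
    obtain ⟨h1, h2⟩ := (special_iff hα hβ hll hV hW hsub).1 hsp
    apply fmin_eq_of
    · refine Finset.mem_image.2 ⟨fmax W, h2 ▸ fmax_mem hVne, ?_⟩
      rw [P_wrap hβ hW (hsub (h2 ▸ fmax_mem hVne)), h1]
    · intro b hb
      obtain ⟨v, hv, rfl⟩ := Finset.mem_image.1 hb
      rw [h1]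
      exact fmin_le (P_mem hβ hW (hsub hv))
  · next hns =>
    apply fmin_eq_of (Finset.mem_insert_self _ _)
    intro b hb
    rcases Finset.mem_insert.1 hb with rfl | hb
    · exact le_refl _
    · obtain ⟨v, hv, rfl⟩ := Finset.mem_image.1 hb
      have h1 := P_gt_nonspecial hα hβ hll hV hW hsub hns hv
      have h2 := fmin_le hv
      omega

lemma psib_card_special (hV : V ∈ α) (hW : W ∈ β) (hsub : V ⊆ W)
    (hsp : SpecialBlock β V) : (PsiB β V).card = V.card := by
  rw [PsiB, if_pos hsp]
  exact Finset.card_image_of_injOn (fun x hx y hy h => P_inj_W hβ hW (hsub hx) (hsub hy) h)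

lemma psib_card_nonspecial (hV : V ∈ α) (hW : W ∈ β) (hsub : V ⊆ W)
    (hns : ¬ SpecialBlock β V) : (PsiB β V).card = V.card + 1 := by
  rw [PsiB, if_neg hns]
  rw [Finset.card_insert_of_notMem, Finset.card_image_of_injOn
    (fun x hx y hy h => P_inj_W hβ hW (hsub hx) (hsub hy) h)]
  intro hmem
  obtain ⟨v, hv, hpv⟩ := Finset.mem_image.1 hmem
  have h1 := P_gt_nonspecial hα hβ hll hV hW hsub hns hv
  have h2 := fmin_le hv
  omega

end PsiSide


section PsiSide2
variable {n : ℕ} {α β : Finset (Finset ℕ)} {U V V' W W' : Finset ℕ} {m u v x y : ℕ}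
variable (hα : IsNCPartition n α) (hβ : IsNCPartition n β) (hll : LL α β)

lemma image_subset_psib : V.image (permOf β) ⊆ PsiB β V := by
  unfold PsiB
  split
  · exact Finset.Subset.refl _
  · exact Finset.subset_insert _ _

lemma mem_psib (hx : x ∈ PsiB β V) :
    (∃ v ∈ V, permOf β v = x) ∨ (¬ SpecialBlock β V ∧ x = fmin V) := by
  unfold PsiB at hx
  split at hx
  · obtain ⟨v, hv, hvx⟩ := Finset.mem_image.1 hx
    exact Or.inl ⟨v, hv, hvx⟩
  · next hns =>
    rcases Finset.mem_insert.1 hx with rfl | hx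
    · exact Or.inr ⟨hns, rfl⟩
    · obtain ⟨v, hv, hvx⟩ := Finset.mem_image.1 hx
      exact Or.inl ⟨v, hv, hvx⟩

include hα hβ hll

lemma fmin_ne_blocks (hV : V ∈ α) (hV' : V' ∈ α) (hne : V ≠ V') : fmin V ≠ fmin V' := by
  intro h
  exact hne (mem_imp_eq hα hβ hll hV hV' (fmin_mem (hα.1.1 V hV)) (h ▸ fmin_mem (hα.1.1 V' hV')))

lemma psib_inter_struct (hV : V ∈ α) (hV' : V' ∈ α) (hne : V ≠ V')
    (hW : W ∈ β) (hW' : W' ∈ β) (hsub : V ⊆ W) (hsub' : V' ⊆ W')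
    (hx : x ∈ PsiB β V) (hx' : x ∈ PsiB β V') :
    W = W' ∧ ((¬ SpecialBlock β V ∧ x = fmin V ∧ ∃ v' ∈ V', permOf β v' = x) ∨
      (¬ SpecialBlock β V' ∧ x = fmin V' ∧ ∃ v ∈ V, permOf β v = x)) := by
  have hWW : W = W' := by
    have h1 : x ∈ W := psib_subset hα hβ hll hV hW hsub hx
    have h2 : x ∈ W' := psib_subset hα hβ hll hV' hW' hsub' hx'
    exact part_unique hβ.1 hW hW' h1 h2
  subst hWW
  refine ⟨rfl, ?_⟩
  rcases mem_psib hx with ⟨v, hv, hvx⟩ | ⟨hns, rfl⟩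
  · rcases mem_psib hx' with ⟨v', hv', hvx'⟩ | ⟨hns', hmin'⟩
    · exfalso
      have : v = v' := P_inj_W hβ hW (hsub hv) (hsub' hv') (hvx.trans hvx'.symm)
      exact hne (mem_imp_eq hα hβ hll hV hV' hv (this ▸ hv'))
    · exact Or.inr ⟨hns', hmin', v, hv, hvx⟩
  · rcases mem_psib hx' with ⟨v', hv', hvx'⟩ | ⟨hns', hmin'⟩
    · exact Or.inl ⟨hns, rfl, v', hv', hvx'⟩
    · exact absurd (hmin' ▸ rfl) (fmin_ne_blocks hα hβ hll hV hV' hne)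

lemma not_both_dirs (hV : V ∈ α) (hV' : V' ∈ α) (hne : V ≠ V')
    (hW : W ∈ β) (hsub : V ⊆ W) (hsub' : V' ⊆ W)
    (hns : ¬ SpecialBlock β V) (hns' : ¬ SpecialBlock β V')
    (h1 : ∃ v' ∈ V', permOf β v' = fmin V) (h2 : ∃ v ∈ V, permOf β v = fmin V') : False := by
  obtain ⟨v', hv', hpv'⟩ := h1
  obtain ⟨v, hv, hpv⟩ := h2
  have g1 : v' < fmin V := hpv' ▸ P_gt_nonspecial hα hβ hll hV' hW hsub' hns' hv'
  have g2 : v < fmin V' := hpv ▸ P_gt_nonspecial hα hβ hll hV hW hsub hns hv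
  have g3 : fmin V' ≤ v' := fmin_le hv'
  have g4 : fmin V ≤ v := fmin_le hv
  omega

lemma psi_linked_pair (hV : V ∈ α) (hV' : V' ∈ α) (hne : V ≠ V')
    (hW : W ∈ β) (hW' : W' ∈ β) (hsub : V ⊆ W) (hsub' : V' ⊆ W') :
    PsiB β V ∩ PsiB β V' = ∅ ∨
      (2 ≤ (PsiB β V).card ∧ 2 ≤ (PsiB β V').card ∧ (PsiB β V ∩ PsiB β V').card = 1 ∧
        fmin (PsiB β V) ≠ fmin (PsiB β V') ∧
        ∀ x ∈ PsiB β V ∩ PsiB β V', x = fmin (PsiB β V) ∨ x = fmin (PsiB β V')) := by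
  rcases Finset.eq_empty_or_nonempty (PsiB β V ∩ PsiB β V') with hemp | ⟨x0, hx0⟩
  · exact Or.inl hemp
  right
  have hm1 : fmin (PsiB β V) = fmin V := psib_min hα hβ hll hV hW hsub
  have hm2 : fmin (PsiB β V') = fmin V' := psib_min hα hβ hll hV' hW' hsub'
  have hfne : fmin V ≠ fmin V' := fmin_ne_blocks hα hβ hll hV hV' hne
  obtain ⟨hx0V, hx0V'⟩ := Finset.mem_inter.1 hx0
  obtain ⟨hWW, hcase⟩ := psib_inter_struct hα hβ hll hV hV' hne hW hW' hsub hsub' hx0V hx0V'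
  subst hWW
  have main : ∀ y ∈ PsiB β V ∩ PsiB β V', y = x0 := by
    intro y hy
    obtain ⟨hyV, hyV'⟩ := Finset.mem_inter.1 hy
    obtain ⟨-, hcase2⟩ := psib_inter_struct hα hβ hll hV hV' hne hW hW hsub hsub' hyV hyV'
    rcases hcase with ⟨hns, he, hex⟩ | ⟨hns, he, hex⟩ <;>
      rcases hcase2 with ⟨hns2, he2, hex2⟩ | ⟨hns2, he2, hex2⟩
    · omega
    · exact absurd (not_both_dirs hα hβ hll hV hV' hne hW hsub hsub' hns hns2
        (he ▸ hex) (he2 ▸ hex2)) not_false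
    · exact absurd (not_both_dirs hα hβ hll hV hV' hne hW hsub hsub' hns2 hns
        (he2 ▸ hex2) (he ▸ hex)) not_false
    · omega
  have hinter : PsiB β V ∩ PsiB β V' = {x0} := by
    apply Finset.eq_singleton_iff_unique_mem.2 ⟨hx0, main⟩
  have hcard2 : 2 ≤ (PsiB β V).card := by
    rcases hcase with ⟨hns, he, -⟩ | ⟨hns, he, hex⟩
    · rw [psib_card_nonspecial hα hβ hll hV hW hsub hns]
      have := Finset.card_pos.2 (hα.1.1 V hV)
      omega
    · -- x0 = fmin V' ∈ PsiB β V and fmin V ∈ PsiB β V, distinct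
      refine Finset.one_lt_card.2 ⟨x0, hx0V, fmin V, ?_, by omega⟩
      rw [← hm1]
      exact fmin_mem ⟨x0, hx0V⟩
  have hcard2' : 2 ≤ (PsiB β V').card := by
    rcases hcase with ⟨hns, he, hex⟩ | ⟨hns, he, -⟩
    · refine Finset.one_lt_card.2 ⟨x0, hx0V', fmin V', ?_, by omega⟩
      rw [← hm2]
      exact fmin_mem ⟨x0, hx0V'⟩
    · rw [psib_card_nonspecial hα hβ hll hV' hW hsub' hns]
      have := Finset.card_pos.2 (hα.1.1 V' hV')
      omega
  refine ⟨hcard2, hcard2', by rw [hinter]; simp, by rw [hm1, hm2]; exact hfne, ?_⟩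
  intro x hx
  have := main x hx
  subst this
  rw [hm1, hm2]
  rcases hcase with ⟨-, he, -⟩ | ⟨-, he, -⟩
  · exact Or.inl he
  · exact Or.inr he

lemma psib_injective (hV : V ∈ α) (hV' : V' ∈ α) (h : PsiB β V = PsiB β V') : V = V' := by
  by_contra hne
  obtain ⟨W, hW, hsub⟩ := hll.1 V hV
  obtain ⟨W', hW', hsub'⟩ := hll.1 V' hV'
  have h1 : fmin (PsiB β V) = fmin V := psib_min hα hβ hll hV hW hsub
  have h2 : fmin (PsiB β V') = fmin V' := psib_min hα hβ hll hV' hW' hsub'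
  exact fmin_ne_blocks hα hβ hll hV hV' hne (by rw [← h1, ← h2, h])

lemma origin_ex (hV : V ∈ α) (hW : W ∈ β) (hsub : V ⊆ W) (hx : x ∈ PsiB β V) :
    ∃ o ∈ V, o ≤ x ∧ ∀ u ∈ W, u < x → u ≤ o := by
  by_cases hxV : x ∈ V
  · exact ⟨x, hxV, le_refl _, fun u hu h => le_of_lt h⟩
  have hVne : V.Nonempty := hα.1.1 V hV
  rcases mem_psib hx with ⟨v, hv, hvx⟩ | ⟨hns, rfl⟩
  · have hvW : v ∈ W := hsub hv
    have hvmax : v ≠ fmax W := by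
      rintro rfl
      -- then x = fmin W and V is the leader, so x ∈ V
      obtain ⟨L, hL, hLsub, hL1, hL2⟩ := leader_ex hα hβ hll hW
      have hVL : V = L := mem_imp_eq hα hβ hll hV hL hv (hL2 ▸ fmax_mem (hα.1.1 L hL))
      subst hVL
      have : x = fmin W := by rw [← hvx, P_wrap hβ hW hvW]
      exact hxV (this ▸ hL1 ▸ fmin_mem hVne)
    have hxnext : x = nextInBlock W v := by rw [← hvx, permOf_eq hβ.1 hW hvW]
    refine ⟨v, hv, by rw [hxnext]; exact le_of_lt (lt_next hvW hvmax), ?_⟩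
    intro u hu hux
    by_contra hc
    push_neg at hc
    exact not_between_next hvW hvmax hu hc (hxnext ▸ hux)
  · exact absurd (fmin_mem hVne) hxV

lemma psi_noncross : ¬ IsCrossing (Psi β α) := by
  rintro ⟨A, hA, B, hB, hAB, a, haA, b, hbB, c, hcA, d, hdB, h1, h2, h3⟩
  obtain ⟨V, hV, rfl⟩ := Finset.mem_image.1 hA
  obtain ⟨V', hV', rfl⟩ := Finset.mem_image.1 hB
  have hne : V ≠ V' := fun h => hAB (h ▸ rfl)
  obtain ⟨W, hW, hsub⟩ := hll.1 V hV
  obtain ⟨W', hW', hsub'⟩ := hll.1 V' hV'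
  rcases eq_or_ne W W' with rfl | hWne
  · -- same β-block : pull back to a crossing of α
    obtain ⟨oa, hoaV, hoa1, hoa2⟩ := origin_ex hα hβ hll hV hW hsub haA
    obtain ⟨ob, hobV, hob1, hob2⟩ := origin_ex hα hβ hll hV' hW hsub' hbB
    obtain ⟨oc, hocV, hoc1, hoc2⟩ := origin_ex hα hβ hll hV hW hsub hcA
    obtain ⟨od, hodV, hod1, hod2⟩ := origin_ex hα hβ hll hV' hW hsub' hdB
    have key : ∀ p q (op oq : ℕ), p < q → op ∈ V → oq ∈ V' → op ≤ p →
        (∀ u ∈ W, u < q → u ≤ oq) → p ∈ W → op < oq ∨ op = oq := by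
      intro p q op oq hpq hop hoq hop1 hoq2 hpW
      have := hoq2 p hpW hpq
      omega
    have hd1 : oa < ob := by
      rcases key a b oa ob h1 hoaV hobV hoa1 hob2 (psib_subset hα hβ hll hV hW hsub haA)
        with h | h
      · exact h
      · exact absurd (mem_imp_eq hα hβ hll hV hV' hoaV (h ▸ hobV)) hne
    have hd2 : ob < oc := by
      have hbW : b ∈ W := psib_subset hα hβ hll hV' hW hsub' hbB
      have := hoc2 b hbW h2
      rcases lt_or_eq_of_le (le_trans hob1 this) with h | h
      · exact h
      · exact absurd (mem_imp_eq hα hβ hll hV hV' (h ▸ hocV) hobV) hne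
    have hd3 : oc < od := by
      rcases key c d oc od h3 hocV hodV hoc1 hod2 (psib_subset hα hβ hll hV hW hsub hcA)
        with h | h
      · exact h
      · exact absurd (mem_imp_eq hα hβ hll hV hV' hocV (h ▸ hodV)) hne
    exact hα.2 ⟨V, hV, V', hV', hne, oa, hoaV, ob, hobV, oc, hocV, od, hodV, hd1, hd2, hd3⟩
  · exact hβ.2 ⟨W, hW, W', hW', hWne, a, psib_subset hα hβ hll hV hW hsub haA,
      b, psib_subset hα hβ hll hV' hW' hsub' hbB, c, psib_subset hα hβ hll hV hW hsub hcA,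
      d, psib_subset hα hβ hll hV' hW' hsub' hdB, h1, h2, h3⟩

end PsiSide2


lemma genPart_eq_image_compOf (π : Finset (Finset ℕ)) :
    genPart π = (π.sup id).image fun m => compOf (π.sup id) π m := rfl

lemma sup_id_eq {F : Finset ℕ} {π : Finset (Finset ℕ)}
    (h1 : ∀ A ∈ π, A ⊆ F) (h2 : ∀ m ∈ F, ∃ A ∈ π, m ∈ A) : π.sup id = F := by
  apply Finset.ext
  intro x
  rw [Finset.mem_sup]
  constructor
  · rintro ⟨A, hA, hx⟩; exact h1 A hA hx
  · intro hx; obtain ⟨A, hA, hxA⟩ := h2 x hx; exact ⟨A, hA, hxA⟩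

section PsiSide3
variable {n : ℕ} {α β : Finset (Finset ℕ)} {U V V' W W' : Finset ℕ} {m u v x y : ℕ}
variable (hα : IsNCPartition n α) (hβ : IsNCPartition n β) (hll : LL α β)

include hα hβ hll

lemma psib_nonempty (hV : V ∈ α) : (PsiB β V).Nonempty := by
  obtain ⟨v, hv⟩ := hα.1.1 V hV
  exact ⟨permOf β v, image_subset_psib (Finset.mem_image_of_mem _ hv)⟩

lemma psi_cover (hm : m ∈ Finset.Icc 1 n) : ∃ V ∈ α, m ∈ PsiB β V := by
  obtain ⟨W, hW, hmW⟩ := hβ.1.2.2.1 m hm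
  obtain ⟨hq, hPq⟩ := P_surj hβ hW hmW
  have hqIcc : prevInBlock W m ∈ Finset.Icc 1 n := hβ.1.2.1 W hW hq
  obtain ⟨V, hV, hqV⟩ := hα.1.2.2.1 _ hqIcc
  exact ⟨V, hV, image_subset_psib (Finset.mem_image.2 ⟨_, hqV, hPq⟩)⟩

lemma psi_isLinked : IsLinkedPartitionOfSet (Finset.Icc 1 n) (Psi β α) := by
  refine ⟨?_, ?_, ?_, ?_⟩
  · rintro A hA
    obtain ⟨V, hV, rfl⟩ := Finset.mem_image.1 hA
    exact psib_nonempty hα hβ hll hV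
  · rintro A hA
    obtain ⟨V, hV, rfl⟩ := Finset.mem_image.1 hA
    obtain ⟨W, hW, hsub⟩ := hll.1 V hV
    exact (psib_subset hα hβ hll hV hW hsub).trans (hβ.1.2.1 W hW)
  · intro m hm
    obtain ⟨V, hV, hmV⟩ := psi_cover hα hβ hll hm
    exact ⟨PsiB β V, Finset.mem_image_of_mem _ hV, hmV⟩
  · rintro A hA B hB hne
    obtain ⟨V, hV, rfl⟩ := Finset.mem_image.1 hA
    obtain ⟨V', hV', rfl⟩ := Finset.mem_image.1 hB
    have hVne : V ≠ V' := fun h => hne (h ▸ rfl)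
    obtain ⟨W, hW, hsub⟩ := hll.1 V hV
    obtain ⟨W', hW', hsub'⟩ := hll.1 V' hV'
    exact psi_linked_pair hα hβ hll hV hV' hVne hW hW' hsub hsub'

lemma psi_isNCL : IsNCL n (Psi β α) :=
  ⟨psi_isLinked hα hβ hll, psi_noncross hα hβ hll⟩

lemma psi_sup_id : (Psi β α).sup id = Finset.Icc 1 n :=
  sup_id_eq (psi_isLinked hα hβ hll).2.1 (psi_isLinked hα hβ hll).2.2.1

/-- reachability in Psi stays within a β-block -/
lemma psi_reach_in_W (hW : W ∈ β) (hmW : m ∈ W)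
    (h : Relation.EqvGen (stepR (Psi β α)) m x) : x ∈ W := by
  refine connR_closure (S := {y | y ∈ W}) ?_ hmW (connR_iff_eqvGen.2 h)
  rintro a ha b ⟨A, hA, haA, hbA⟩
  obtain ⟨V, hV, rfl⟩ := Finset.mem_image.1 hA
  obtain ⟨W'', hW'', hsub⟩ := hll.1 V hV
  have h1 : a ∈ W'' := psib_subset hα hβ hll hV hW'' hsub haA
  have h2 : W = W'' := part_unique hβ.1 hW hW'' ha h1
  exact h2 ▸ psib_subset hα hβ hll hV hW'' hsub hbA

/-- all elements of a β-block are Psi-connected to its min -/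
lemma psi_conn_min (hW : W ∈ β) :
    ∀ k, ∀ V ∈ α, V ⊆ W → fmin V ≤ k → ∀ x ∈ PsiB β V,
      Relation.EqvGen (stepR (Psi β α)) (fmin W) x := by
  intro k
  induction k using Nat.strong_induction_on with
  | _ k IH =>
  intro V hV hsub hVk x hx
  have hVne : V.Nonempty := hα.1.1 V hV
  have hPsiV : PsiB β V ∈ Psi β α := Finset.mem_image_of_mem _ hV
  by_cases hsp : SpecialBlock β V
  · -- leader : fmin W ∈ PsiB V
    obtain ⟨h1, h2⟩ := (special_iff hα hβ hll hV hW hsub).1 hsp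
    have hfmaxV : fmax W ∈ V := h2 ▸ fmax_mem hVne
    have hminPsi : fmin W ∈ PsiB β V := by
      refine image_subset_psib (Finset.mem_image.2 ⟨fmax W, hfmaxV, ?_⟩)
      exact P_wrap hβ hW (hsub hfmaxV)
    exact Relation.EqvGen.rel _ _ ⟨PsiB β V, hPsiV, hminPsi, hx⟩
  · -- non-leader : connect through the block containing the predecessor of fmin V
    obtain ⟨hlt, -, -, -⟩ := nonspecial_facts hα hβ hll hV hW hsub hsp
    have hfVW : fmin V ∈ W := hsub (fmin_mem hVne)
    have hfne : fmin V ≠ fmin W := by omega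
    set q := prevInBlock W (fmin V) with hq
    have hqW : q ∈ W := prev_mem hfVW
    have hqlt : q < fmin V := prev_lt hfVW hfne
    obtain ⟨V'', hV'', hqV''⟩ := hα.1.2.2.1 q (hβ.1.2.1 W hW hqW)
    obtain ⟨W'', hW'', hsub''⟩ := hll.1 V'' hV''
    have hWeq : W'' = W := part_unique hβ.1 hW'' hW (hsub'' hqV'') hqW
    rw [hWeq] at hsub''
    have hPq : permOf β q = fmin V := by
      rcases eq_or_ne (fmin V) (fmin W) with h | h
      · omega
      · exact (P_surj hβ hW hfVW).2
    have hfVinV'' : fmin V ∈ PsiB β V'' :=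
      image_subset_psib (Finset.mem_image.2 ⟨q, hqV'', hPq⟩)
    have hV''lt : fmin V'' < fmin V := by
      have := fmin_le hqV''
      omega
    have ih := IH (fmin V'') (by omega) V'' hV'' hsub'' (le_refl _) (fmin V) hfVinV''
    have hfVinV : fmin V ∈ PsiB β V := by
      rw [← psib_min hα hβ hll hV hW hsub]
      exact fmin_mem (psib_nonempty hα hβ hll hV)
    exact Relation.EqvGen.trans _ _ _ ih (Relation.EqvGen.rel _ _ ⟨PsiB β V, hPsiV, hfVinV, hx⟩)

lemma psi_compOf (hW : W ∈ β) (hmW : m ∈ W) :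
    compOf (Finset.Icc 1 n) (Psi β α) m = W := by
  apply Finset.ext
  intro y
  rw [mem_compOf_iff]
  constructor
  · rintro ⟨h1, h2⟩
    exact psi_reach_in_W hα hβ hll hW hmW h2
  · intro hy
    refine ⟨hβ.1.2.1 W hW hy, ?_⟩
    obtain ⟨V, hV, hmV⟩ := psi_cover hα hβ hll (hβ.1.2.1 W hW hmW)
    obtain ⟨V', hV', hyV'⟩ := psi_cover hα hβ hll (hβ.1.2.1 W hW hy)
    obtain ⟨W1, hW1, hsub1⟩ := hll.1 V hV
    obtain ⟨W2, hW2, hsub2⟩ := hll.1 V' hV'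
    have e1 : W1 = W := part_unique hβ.1 hW1 hW (psib_subset hα hβ hll hV hW1 hsub1 hmV) hmW
    have e2 : W2 = W := part_unique hβ.1 hW2 hW (psib_subset hα hβ hll hV' hW2 hsub2 hyV') hy
    subst e1; subst e2
    have c1 := psi_conn_min hα hβ hll hW (fmin V) V hV hsub1 (le_refl _) m hmV
    have c2 := psi_conn_min hα hβ hll hW (fmin V') V' hV' hsub2 (le_refl _) y hyV'
    exact Relation.EqvGen.trans _ _ _ (Relation.EqvGen.symm _ _ c1) c2

lemma psi_genPart : genPart (Psi β α) = β := by
  rw [genPart_eq_image_compOf, psi_sup_id hα hβ hll]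
  apply Finset.ext
  intro X
  rw [Finset.mem_image]
  constructor
  · rintro ⟨m, hm, rfl⟩
    obtain ⟨W, hW, hmW⟩ := hβ.1.2.2.1 m hm
    rw [psi_compOf hα hβ hll hW hmW]
    exact hW
  · intro hX
    obtain ⟨m, hmX⟩ := hβ.1.1 X hX
    exact ⟨m, hβ.1.2.1 X hX hmX, psi_compOf hα hβ hll hX hmX⟩

end PsiSide3

section PsiSide4
variable {n : ℕ} {α β : Finset (Finset ℕ)} {U V V' W W' : Finset ℕ} {m u v x y : ℕ}
variable (hα : IsNCPartition n α) (hβ : IsNCPartition n β) (hll : LL α β)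
include hα hβ hll

lemma fmin_mem_psib (hV : V ∈ α) (hW : W ∈ β) (hsub : V ⊆ W) : fmin V ∈ PsiB β V := by
  rw [← psib_min hα hβ hll hV hW hsub]
  exact fmin_mem (psib_nonempty hα hβ hll hV)

lemma psi_cover_special (hV : V ∈ α) (hW : W ∈ β) (hsub : V ⊆ W)
    (hsp : SpecialBlock β V) : SinglyCovered (Psi β α) (fmin V) := by
  have hfil : (Psi β α).filter (fun A => fmin V ∈ A) = {PsiB β V} := by
    apply Finset.ext
    intro A
    simp only [Finset.mem_filter, Finset.mem_singleton]
    constructor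
    · rintro ⟨hA, hmA⟩
      obtain ⟨V'', hV'', rfl⟩ := Finset.mem_image.1 hA
      rcases eq_or_ne V'' V with rfl | hne
      · rfl
      exfalso
      obtain ⟨W'', hW'', hsub''⟩ := hll.1 V'' hV''
      obtain ⟨-, hcase⟩ := psib_inter_struct hα hβ hll hV hV'' (Ne.symm hne) hW hW'' hsub hsub''
        (fmin_mem_psib hα hβ hll hV hW hsub) hmA
      rcases hcase with ⟨hns, -⟩ | ⟨-, heq, -⟩
      · exact hns hsp
      · exact fmin_ne_blocks hα hβ hll hV hV'' (Ne.symm hne) heq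
    · rintro rfl
      exact ⟨Finset.mem_image_of_mem _ hV, fmin_mem_psib hα hβ hll hV hW hsub⟩
  rw [SinglyCovered, coverCount, hfil]
  simp

lemma psi_second_block (hV : V ∈ α) (hW : W ∈ β) (hsub : V ⊆ W)
    (hns : ¬ SpecialBlock β V) :
    ∃ V'' ∈ α, V'' ≠ V ∧ fmin V ∈ PsiB β V'' := by
  have hVne : V.Nonempty := hα.1.1 V hV
  obtain ⟨hlt, -, -, -⟩ := nonspecial_facts hα hβ hll hV hW hsub hns
  have hfVW : fmin V ∈ W := hsub (fmin_mem hVne)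
  have hfne : fmin V ≠ fmin W := by omega
  set q := prevInBlock W (fmin V) with hq
  have hqW : q ∈ W := prev_mem hfVW
  have hqlt : q < fmin V := prev_lt hfVW hfne
  obtain ⟨V'', hV'', hqV''⟩ := hα.1.2.2.1 q (hβ.1.2.1 W hW hqW)
  have hVne'' : V'' ≠ V := by
    rintro rfl
    have := fmin_le hqV''
    omega
  have hPq : permOf β q = fmin V := (P_surj hβ hW hfVW).2
  exact ⟨V'', hV'', hVne'', image_subset_psib (Finset.mem_image.2 ⟨q, hqV'', hPq⟩)⟩

lemma psi_cover_nonspecial (hV : V ∈ α) (hW : W ∈ β) (hsub : V ⊆ W)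
    (hns : ¬ SpecialBlock β V) : ¬ SinglyCovered (Psi β α) (fmin V) := by
  obtain ⟨V'', hV'', hne'', hmem''⟩ := psi_second_block hα hβ hll hV hW hsub hns
  intro hsc
  rw [SinglyCovered, coverCount] at hsc
  have h2 : 1 < ((Psi β α).filter (fun A => fmin V ∈ A)).card := by
    refine Finset.one_lt_card.2 ⟨PsiB β V, ?_, PsiB β V'', ?_, ?_⟩
    · exact Finset.mem_filter.2 ⟨Finset.mem_image_of_mem _ hV,
        fmin_mem_psib hα hβ hll hV hW hsub⟩
    · exact Finset.mem_filter.2 ⟨Finset.mem_image_of_mem _ hV'', hmem''⟩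
    · intro h
      exact hne'' (psib_injective hα hβ hll hV'' hV h.symm)
  omega

lemma psi_unlink : unlink (Psi β α) = α.image (fun V => V.image (permOf β)) := by
  rw [unlink, Psi, Finset.image_image]
  apply Finset.image_congr
  intro V hV
  show (if SinglyCovered (Psi β α) (fmin (PsiB β V)) then PsiB β V
    else (PsiB β V).erase (fmin (PsiB β V))) = V.image (permOf β)
  obtain ⟨W, hW, hsub⟩ := hll.1 V hV
  rw [psib_min hα hβ hll hV hW hsub]
  by_cases hsp : SpecialBlock β V
  · rw [if_pos (psi_cover_special hα hβ hll hV hW hsub hsp), PsiB, if_pos hsp]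
  · rw [if_neg (psi_cover_nonspecial hα hβ hll hV hW hsub hsp), PsiB, if_neg hsp]
    apply Finset.erase_insert
    intro hmem
    obtain ⟨v, hv, hpv⟩ := Finset.mem_image.1 hmem
    have h1 := P_gt_nonspecial hα hβ hll hV hW hsub hsp hv
    have h2 := fmin_le hv
    omega

omit hα hll in
lemma Pinv_P (hW : W ∈ β) (hv : v ∈ W) : permOfInv β (permOf β v) = v := by
  have h1 : permOf β v = nextInBlock W v := permOf_eq hβ.1 hW hv
  have h2 : permOf β v ∈ W := h1 ▸ next_mem hv
  rw [permOfInv_eq hβ.1 hW h2, h1]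
  rcases eq_or_ne v (fmax W) with rfl | hne
  · rw [next_fmax, prev_fmin]
  · exact prev_next hv hne

lemma psi_cycUnlink : cycUnlink (Psi β α) = α := by
  rw [cycUnlink, psi_genPart hα hβ hll, psi_unlink hα hβ hll, mapPart, Finset.image_image]
  have h1 : ∀ V ∈ α, ((V.image (permOf β)).image (permOfInv β)) = V := by
    intro V hV
    obtain ⟨W, hW, hsub⟩ := hll.1 V hV
    rw [Finset.image_image]
    have : ∀ v ∈ V, (permOfInv β ∘ permOf β) v = v := by
      intro v hv
      exact Pinv_P hβ hW (hsub hv)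
    calc V.image (permOfInv β ∘ permOf β) = V.image id := Finset.image_congr this
      _ = V := Finset.image_id
  calc α.image ((fun B => B.image (permOfInv β)) ∘ fun V => V.image (permOf β))
      = α.image id := Finset.image_congr (fun V hV => h1 V hV)
    _ = α := Finset.image_id

end PsiSide4

section PhiSide
variable {n : ℕ} {π : Finset (Finset ℕ)} {A A' B C X Y W : Finset ℕ} {m u v x y : ℕ}
variable (hπ : IsNCL n π)
include hπ

lemma phi_sup : π.sup id = Finset.Icc 1 n := sup_id_eq hπ.1.2.1 hπ.1.2.2.1

lemma phi_genPart_eq : genPart π = (Finset.Icc 1 n).image (compOf (Finset.Icc 1 n) π) := by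
  rw [genPart_eq_image_compOf, phi_sup hπ]

lemma mem_genPart : X ∈ genPart π ↔
    ∃ m ∈ Finset.Icc 1 n, compOf (Finset.Icc 1 n) π m = X := by
  rw [phi_genPart_eq hπ]
  exact Finset.mem_image

lemma phi_genPart_isPart : IsPartitionOfSet (Finset.Icc 1 n) (genPart π) := by
  refine ⟨?_, ?_, ?_, ?_⟩
  · intro X hX
    obtain ⟨m, hm, rfl⟩ := (mem_genPart hπ).1 hX
    exact ⟨m, mem_compOf_self hm⟩
  · intro X hX
    obtain ⟨m, hm, rfl⟩ := (mem_genPart hπ).1 hX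
    exact Finset.filter_subset _ _
  · intro m hm
    exact ⟨compOf (Finset.Icc 1 n) π m, (mem_genPart hπ).2 ⟨m, hm, rfl⟩, mem_compOf_self hm⟩
  · intro X hX Y hY hne
    obtain ⟨m, hm, rfl⟩ := (mem_genPart hπ).1 hX
    obtain ⟨m', hm', rfl⟩ := (mem_genPart hπ).1 hY
    by_contra hcon
    obtain ⟨x, hx⟩ := Finset.nonempty_iff_ne_empty.2 hcon
    obtain ⟨hx1, hx2⟩ := Finset.mem_inter.1 hx
    exact hne ((compOf_eq_of_mem hx1).symm.trans (compOf_eq_of_mem hx2))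

lemma phi_genPart_noncross : ¬ IsCrossing (genPart π) := by
  rintro ⟨X, hX, Y, hY, hXY, a, haX, b, hbY, c, hcX, d, hdY, h1, h2, h3⟩
  obtain ⟨m, hm, rfl⟩ := (mem_genPart hπ).1 hX
  obtain ⟨m', hm', rfl⟩ := (mem_genPart hπ).1 hY
  have hac : Relation.EqvGen (stepR π) a c := by
    rw [mem_compOf_iff] at haX hcX
    exact Relation.EqvGen.trans _ _ _ (Relation.EqvGen.symm _ _ haX.2) hcX.2
  have hbd : Relation.EqvGen (stepR π) b d := by
    rw [mem_compOf_iff] at hbY hdY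
    exact Relation.EqvGen.trans _ _ _ (Relation.EqvGen.symm _ _ hbY.2) hdY.2
  have hnab : ¬ Relation.EqvGen (stepR π) a b := by
    intro hab
    apply hXY
    have hbIcc : b ∈ Finset.Icc 1 n := ((mem_compOf_iff).1 hbY).1
    have haX' := (mem_compOf_iff).1 haX
    have hb1 : b ∈ compOf (Finset.Icc 1 n) π m :=
      (mem_compOf_iff).2 ⟨hbIcc, Relation.EqvGen.trans _ _ _ haX'.2 hab⟩
    rw [← compOf_eq_of_mem hb1, ← compOf_eq_of_mem hbY]
  obtain ⟨k1, hk1⟩ := chainN_of_connR (connR_iff_eqvGen.2 hac)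
  obtain ⟨k2, hk2⟩ := chainN_of_connR (connR_iff_eqvGen.2 hbd)
  exact no_cross_conn hπ.2 (k1 + k2) k1 k2 a b c d (le_refl _) hk1 hk2 hnab h1 h2 h3

lemma phi_comp_mem (hm : m ∈ Finset.Icc 1 n) :
    compOf (Finset.Icc 1 n) π m ∈ genPart π := (mem_genPart hπ).2 ⟨m, hm, rfl⟩

lemma phi_block_sub_comp (hA : A ∈ π) (hm : m ∈ A) : A ⊆ compOf (Finset.Icc 1 n) π m :=
  block_subset_compOf hπ.1 hA hm

/-- the root block of a component: the unique block containing the component's min -/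
lemma phi_root (hm : m ∈ Finset.Icc 1 n) :
    ∃ A ∈ π, fmin (compOf (Finset.Icc 1 n) π m) ∈ A ∧
      fmin A = fmin (compOf (Finset.Icc 1 n) π m) ∧
      (∀ B ∈ π, fmin (compOf (Finset.Icc 1 n) π m) ∈ B → B = A) := by
  set Wc := compOf (Finset.Icc 1 n) π m with hWc
  have hWne : Wc.Nonempty := ⟨m, mem_compOf_self hm⟩
  have hfW : fmin Wc ∈ Wc := fmin_mem hWne
  obtain ⟨A, hA, hfA⟩ := hπ.1.2.2.1 (fmin Wc) (compOf_subset hπ.1 hm hfW)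
  have hsubA : A ⊆ Wc := by
    have h1 : A ⊆ compOf (Finset.Icc 1 n) π (fmin Wc) := phi_block_sub_comp hπ hA hfA
    rwa [compOf_eq_of_mem hfW] at h1
  have hminA : fmin A = fmin Wc :=
    le_antisymm (fmin_le hfA) (fmin_le (hsubA (fmin_mem ⟨_, hfA⟩)))
  refine ⟨A, hA, hfA, hminA, ?_⟩
  intro B hB hfB
  apply comp_min_singly hπ.1 (m := fmin Wc) (compOf_subset hπ.1 hm hfW) ?_ hB hA hfB hfA
  intro x hx
  rw [compOf_eq_of_mem hfW] at hx
  exact fmin_le hx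

lemma not_singly_iff (hA : A ∈ π) (hm : m ∈ A) :
    ¬ SinglyCovered π m ↔ ∃ B ∈ π, B ≠ A ∧ m ∈ B := by
  constructor
  · intro hnsc
    have h1 : A ∈ π.filter (fun A => m ∈ A) := Finset.mem_filter.2 ⟨hA, hm⟩
    have h2 : 0 < (π.filter (fun A => m ∈ A)).card := Finset.card_pos.2 ⟨A, h1⟩
    have h3 : 1 < (π.filter (fun A => m ∈ A)).card := by
      rcases Nat.lt_or_ge 1 ((π.filter (fun A => m ∈ A)).card) with h | h
      · exact h
      · exact absurd (by rw [SinglyCovered, coverCount]; omega) hnsc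
    obtain ⟨B1, hB1, B2, hB2, hne⟩ := Finset.one_lt_card.1 h3
    obtain ⟨hB1', hmB1⟩ := Finset.mem_filter.1 hB1
    obtain ⟨hB2', hmB2⟩ := Finset.mem_filter.1 hB2
    rcases eq_or_ne B1 A with rfl | h
    · exact ⟨B2, hB2', Ne.symm hne, hmB2⟩
    · exact ⟨B1, hB1', h, hmB1⟩
  · rintro ⟨B, hB, hne, hmB⟩ hsc
    rw [SinglyCovered, coverCount] at hsc
    have h2 : 1 < (π.filter (fun A => m ∈ A)).card := by
      refine Finset.one_lt_card.2 ⟨A, Finset.mem_filter.2 ⟨hA, hm⟩,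
        B, Finset.mem_filter.2 ⟨hB, hmB⟩, Ne.symm hne⟩
    omega

/-- each block of `unlink π` is contained in the original block -/
lemma unl_subset (A : Finset ℕ) :
    (if SinglyCovered π (fmin A) then A else A.erase (fmin A)) ⊆ A := by
  split
  · exact Finset.Subset.refl _
  · exact Finset.erase_subset _ _

lemma unl_nonempty (hA : A ∈ π) :
    (if SinglyCovered π (fmin A) then A else A.erase (fmin A)).Nonempty := by
  split
  · exact hπ.1.1 A hA
  · next h =>
    obtain ⟨B, hB, hne, hmB⟩ := (not_singly_iff hπ hA (fmin_mem (hπ.1.1 A hA))).1 h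
    obtain ⟨-, -, hcard, -⟩ := shared_struct hπ.1 hA hB (Ne.symm hne)
      (fmin_mem (hπ.1.1 A hA)) hmB
    have := Finset.card_erase_of_mem (fmin_mem (hπ.1.1 A hA))
    rw [← Finset.card_pos, this]
    omega

lemma unl_inter (hA : A ∈ π) (hA' : A' ∈ π) (hne : A ≠ A') :
    (if SinglyCovered π (fmin A) then A else A.erase (fmin A)) ∩
    (if SinglyCovered π (fmin A') then A' else A'.erase (fmin A')) = ∅ := by
  by_contra hcon
  obtain ⟨x, hx⟩ := Finset.nonempty_iff_ne_empty.2 hcon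
  obtain ⟨hx1, hx2⟩ := Finset.mem_inter.1 hx
  have hxA : x ∈ A := unl_subset hπ A hx1
  have hxA' : x ∈ A' := unl_subset hπ A' hx2
  obtain ⟨hor, -, -⟩ := shared_struct hπ.1 hA hA' hne hxA hxA'
  have hns : ∀ {D D' : Finset ℕ}, D ∈ π → D' ∈ π → D ≠ D' → x ∈ D → x ∈ D' → x = fmin D →
      ¬ SinglyCovered π (fmin D) := by
    intro D D' hD hD' hneD hxD hxD' hmin
    exact (not_singly_iff hπ hD (hmin ▸ hxD)).2 ⟨D', hD', Ne.symm hneD, hmin ▸ hxD'⟩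
  rcases hor with h | h
  · have := hns hA hA' hne hxA hxA' h
    rw [if_neg this] at hx1
    exact (Finset.mem_erase.1 hx1).1 h
  · have := hns hA' hA (Ne.symm hne) hxA' hxA h
    rw [if_neg this] at hx2
    exact (Finset.mem_erase.1 hx2).1 h

lemma unl_inj (hA : A ∈ π) (hA' : A' ∈ π)
    (h : (if SinglyCovered π (fmin A) then A else A.erase (fmin A)) =
      (if SinglyCovered π (fmin A') then A' else A'.erase (fmin A'))) : A = A' := by
  by_contra hne
  have h1 := unl_inter hπ hA hA' hne
  rw [h, Finset.inter_self] at h1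
  exact Finset.nonempty_iff_ne_empty.1 (unl_nonempty hπ hA') (h ▸ h1)

end PhiSide

noncomputable def unlB (π : Finset (Finset ℕ)) (A : Finset ℕ) : Finset ℕ :=
  if SinglyCovered π (fmin A) then A else A.erase (fmin A)

noncomputable def PhiB (π : Finset (Finset ℕ)) (A : Finset ℕ) : Finset ℕ :=
  (unlB π A).image (permOfInv (genPart π))

lemma unlink_eq_image (π : Finset (Finset ℕ)) : unlink π = π.image (unlB π) := rfl

lemma cycUnlink_eq_image (π : Finset (Finset ℕ)) : cycUnlink π = π.image (PhiB π) := by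
  rw [cycUnlink, unlink_eq_image, mapPart, Finset.image_image]
  rfl

section PhiSide2
variable {n : ℕ} {π : Finset (Finset ℕ)} {A A' B C X Y W : Finset ℕ} {m u v x y : ℕ}
variable (hπ : IsNCL n π)
include hπ

lemma phi_P_Pinv (hW : W ∈ genPart π) (hy : y ∈ W) :
    permOf (genPart π) (permOfInv (genPart π) y) = y := by
  have h1 : permOfInv (genPart π) y = prevInBlock W y :=
    permOfInv_eq (phi_genPart_isPart hπ) hW hy
  have h2 : permOfInv (genPart π) y ∈ W := h1 ▸ prev_mem hy
  rw [permOf_eq (phi_genPart_isPart hπ) hW h2, h1]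
  rcases eq_or_ne y (fmin W) with rfl | hne
  · rw [prev_fmin, next_fmax]
  · exact next_prev hy hne

lemma phi_Pinv_P (hW : W ∈ genPart π) (hy : y ∈ W) :
    permOfInv (genPart π) (permOf (genPart π) y) = y := by
  have h1 : permOf (genPart π) y = nextInBlock W y :=
    permOf_eq (phi_genPart_isPart hπ) hW hy
  have h2 : permOf (genPart π) y ∈ W := h1 ▸ next_mem hy
  rw [permOfInv_eq (phi_genPart_isPart hπ) hW h2, h1]
  rcases eq_or_ne y (fmax W) with rfl | hne
  · rw [next_fmax, prev_fmin]
  · exact prev_next hy hne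

lemma phi_A_sub_comp (hA : A ∈ π) :
    A ⊆ compOf (Finset.Icc 1 n) π (fmin A) ∧
      compOf (Finset.Icc 1 n) π (fmin A) ∈ genPart π := by
  have hne : A.Nonempty := hπ.1.1 A hA
  have h1 : fmin A ∈ Finset.Icc 1 n := hπ.1.2.1 A hA (fmin_mem hne)
  exact ⟨phi_block_sub_comp hπ hA (fmin_mem hne), phi_comp_mem hπ h1⟩

lemma phi_phib_subset (hA : A ∈ π) : PhiB π A ⊆ compOf (Finset.Icc 1 n) π (fmin A) := by
  obtain ⟨hsub, hWmem⟩ := phi_A_sub_comp hπ hA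
  intro x hx
  obtain ⟨y, hy, rfl⟩ := Finset.mem_image.1 hx
  have hyW : y ∈ compOf (Finset.Icc 1 n) π (fmin A) := hsub (unl_subset hπ A hy)
  rw [permOfInv_eq (phi_genPart_isPart hπ) hWmem hyW]
  exact prev_mem hyW

lemma singly_unique (hsc : SinglyCovered π m) (hA : A ∈ π) (hm : m ∈ A) :
    ∀ B ∈ π, m ∈ B → B = A := by
  intro B hB hmB
  by_contra hne
  exact (not_singly_iff hπ hA hm).2 ⟨B, hB, hne, hmB⟩ hsc

lemma phi_singly_root (hA : A ∈ π) (hsc : SinglyCovered π (fmin A)) :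
    fmin A = fmin (compOf (Finset.Icc 1 n) π (fmin A)) := by
  obtain ⟨hsub, hWmem⟩ := phi_A_sub_comp hπ hA
  have hne : A.Nonempty := hπ.1.1 A hA
  have h0 : fmin A ∈ compOf (Finset.Icc 1 n) π (fmin A) :=
    mem_compOf_self (hπ.1.2.1 A hA (fmin_mem hne))
  have hWne : (compOf (Finset.Icc 1 n) π (fmin A)).Nonempty := ⟨_, h0⟩
  have h1 : fmin A ≤ fmin (compOf (Finset.Icc 1 n) π (fmin A)) := by
    have := fmin_mem hWne
    rw [mem_compOf_iff] at this
    exact singly_min_le_reach hπ.1 hA (singly_unique hπ hsc hA (fmin_mem hne)) this.2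
  have h2 := fmin_le h0
  omega

/-- the component's min is not the min of a doubly covered block -/
lemma phi_compmin_singly (hm : m ∈ Finset.Icc 1 n) (hA : A ∈ π)
    (hmem : fmin (compOf (Finset.Icc 1 n) π m) ∈ A) :
    SinglyCovered π (fmin (compOf (Finset.Icc 1 n) π m)) := by
  obtain ⟨A0, hA0, hfA0, hminA0, huniq⟩ := phi_root hπ hm
  have hAA0 : A = A0 := huniq A hA hmem
  subst hAA0
  rw [SinglyCovered, coverCount, Finset.card_eq_one]
  refine ⟨A, ?_⟩
  apply Finset.ext
  intro B
  simp only [Finset.mem_filter, Finset.mem_singleton]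
  exact ⟨fun ⟨h1, h2⟩ => huniq B h1 h2, fun h => h ▸ ⟨hA, hmem⟩⟩

lemma phi_min_notmax (hA : A ∈ π) (hns : ¬ SinglyCovered π (fmin A)) :
    fmin A ≠ fmax (compOf (Finset.Icc 1 n) π (fmin A)) := by
  have hne : A.Nonempty := hπ.1.1 A hA
  obtain ⟨B, hB, hBne, hmB⟩ := (not_singly_iff hπ hA (fmin_mem hne)).1 hns
  obtain ⟨-, -, hcard, -⟩ := shared_struct hπ.1 hA hB (Ne.symm hBne) (fmin_mem hne) hmB
  obtain ⟨a, ha, hagt⟩ : ∃ a ∈ A, fmin A < a := by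
    by_contra hcon
    push_neg at hcon
    have : A ⊆ {fmin A} := fun a ha =>
      Finset.mem_singleton.2 (le_antisymm (hcon a ha) (fmin_le ha))
    have := Finset.card_le_card this
    simp at this
    omega
  intro hcon
  have h1 : a ∈ compOf (Finset.Icc 1 n) π (fmin A) := (phi_A_sub_comp hπ hA).1 ha
  have := le_fmax h1
  omega

/-- min of a block with singly covered min belongs to its PhiB, together with max of comp -/
lemma phi_phib_min (hA : A ∈ π) :
    fmin A ∈ PhiB π A ∧ fmin (PhiB π A) = fmin A := by
  have hne : A.Nonempty := hπ.1.1 A hA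
  obtain ⟨hsub, hWmem⟩ := phi_A_sub_comp hπ hA
  set Wc := compOf (Finset.Icc 1 n) π (fmin A) with hWcdef
  have hfAW : fmin A ∈ Wc := mem_compOf_self (hπ.1.2.1 A hA (fmin_mem hne))
  have hmem : fmin A ∈ PhiB π A := by
    by_cases hsc : SinglyCovered π (fmin A)
    · -- A is the root; fmin A = fmin Wc
      have hroot := phi_singly_root hπ hA hsc
      rcases eq_or_ne (fmin A) (fmax Wc) with heq | hne2
      · -- component is a singleton {fmin A}
        refine Finset.mem_image.2 ⟨fmin A, ?_, ?_⟩
        · rw [unlB, if_pos hsc]; exact fmin_mem hne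
        · rw [permOfInv_eq (phi_genPart_isPart hπ) hWmem hfAW]
          have hroot' : fmin A = fmin Wc := hroot
          rw [hroot', prev_fmin, ← heq]
          exact hroot'
      · have hy := succ_mem_block hπ.1 hπ.2 hA (fmin_mem hne) rfl
          (hπ.1.2.1 A hA (fmin_mem hne)) hne2
        refine Finset.mem_image.2 ⟨nextInBlock Wc (fmin A), ?_, ?_⟩
        · rw [unlB, if_pos hsc]; exact hy
        · have hnW : nextInBlock Wc (fmin A) ∈ Wc := next_mem hfAW
          rw [permOfInv_eq (phi_genPart_isPart hπ) hWmem hnW]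
          exact prev_next hfAW hne2
    · -- doubly covered min
      have hne2 := phi_min_notmax hπ hA hsc
      have hy := succ_mem_block hπ.1 hπ.2 hA (fmin_mem hne) rfl
        (hπ.1.2.1 A hA (fmin_mem hne)) hne2
      have hygt : fmin A < nextInBlock Wc (fmin A) := lt_next hfAW hne2
      refine Finset.mem_image.2 ⟨nextInBlock Wc (fmin A), ?_, ?_⟩
      · rw [unlB, if_neg hsc]
        exact Finset.mem_erase.2 ⟨by omega, hy⟩
      · have hnW : nextInBlock Wc (fmin A) ∈ Wc := next_mem hfAW
        rw [permOfInv_eq (phi_genPart_isPart hπ) hWmem hnW]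
        exact prev_next hfAW hne2
  refine ⟨hmem, fmin_eq_of hmem ?_⟩
  intro b hb
  obtain ⟨y, hy, rfl⟩ := Finset.mem_image.1 hb
  have hyA : y ∈ A := unl_subset hπ A hy
  have hyW : y ∈ Wc := hsub hyA
  rw [permOfInv_eq (phi_genPart_isPart hπ) hWmem hyW]
  rcases eq_or_ne y (fmin Wc) with hyeq | hyne
  · rw [hyeq, prev_fmin]
    exact le_fmax hfAW
  · have h1 : prevInBlock Wc y ∈ Wc := prev_mem hyW
    rcases eq_or_ne y (fmin A) with rfl | hyA2
    · have := prev_lt hyW hyne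
      -- y = fmin A : prev y < fmin A possible?  then fmin A ≠ fmin Wc and y ∉ unlB
      exfalso
      have hsc : SinglyCovered π (fmin A) := by
        by_contra hns
        rw [unlB, if_neg hns] at hy
        exact (Finset.mem_erase.1 hy).1 rfl
      have hroot' : fmin A = fmin Wc := phi_singly_root hπ hA hsc
      exact hyne hroot'
    · have hygt : fmin A < y := lt_of_le_of_ne (fmin_le hyA) (Ne.symm hyA2)
      exact le_prev hyW hyne hfAW hygt

end PhiSide2

section PhiSide3
variable {n : ℕ} {π : Finset (Finset ℕ)} {A A' B C X Y W : Finset ℕ} {m u v x y : ℕ}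
variable (hπ : IsNCL n π)
include hπ

lemma phi_phib_nonempty (hA : A ∈ π) : (PhiB π A).Nonempty := by
  obtain ⟨y, hy⟩ := unl_nonempty hπ hA
  exact ⟨_, Finset.mem_image_of_mem _ hy⟩

lemma phi_special_iff (hA : A ∈ π) :
    SpecialBlock (genPart π) (PhiB π A) ↔ SinglyCovered π (fmin A) := by
  have hne : A.Nonempty := hπ.1.1 A hA
  obtain ⟨hsub, hWmem⟩ := phi_A_sub_comp hπ hA
  set Wc := compOf (Finset.Icc 1 n) π (fmin A) with hWcdef
  have hfAW : fmin A ∈ Wc := mem_compOf_self (hπ.1.2.1 A hA (fmin_mem hne))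
  have hWne : Wc.Nonempty := ⟨_, hfAW⟩
  constructor
  · rintro ⟨W'', hW'', e1, e2⟩
    have hphimin := phi_phib_min hπ hA
    have hWeq : W'' = Wc := by
      have h1 : fmin W'' ∈ W'' := fmin_mem ((phi_genPart_isPart hπ).1 W'' hW'')
      have h2 : fmin W'' ∈ Wc := by
        rw [← e1, hphimin.2]
        exact hfAW
      exact part_unique (phi_genPart_isPart hπ) hW'' hWmem h1 h2
    subst hWeq
    -- fmax Wc ∈ PhiB π A : so fmin Wc ∈ unlB π A ⊆ A
    have h3 : fmax Wc ∈ PhiB π A := by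
      rw [← e2]
      exact fmax_mem (phi_phib_nonempty hπ hA)
    obtain ⟨y, hy, hpy⟩ := Finset.mem_image.1 h3
    have hyW : y ∈ Wc := hsub (unl_subset hπ A hy)
    rw [permOfInv_eq (phi_genPart_isPart hπ) hWmem hyW] at hpy
    have hyfmin : y = fmin Wc := by
      by_contra hyne
      have h4 := prev_lt hyW hyne
      have h5 := le_fmax hyW
      omega
    have h6 : fmin Wc ∈ A := unl_subset hπ A (hyfmin ▸ hy)
    have h7 : SinglyCovered π (fmin Wc) :=
      phi_compmin_singly hπ (hπ.1.2.1 A hA (fmin_mem hne)) hA h6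
    have h8 : fmin A = fmin Wc := le_antisymm (fmin_le h6) (fmin_le hfAW)
    rwa [h8]
  · intro hsc
    have hroot : fmin A = fmin Wc := phi_singly_root hπ hA hsc
    have hphimin := phi_phib_min hπ hA
    have hmaxmem : fmax Wc ∈ PhiB π A := by
      refine Finset.mem_image.2 ⟨fmin Wc, ?_, ?_⟩
      · rw [unlB, if_pos hsc, ← hroot]
        exact fmin_mem hne
      · rw [permOfInv_eq (phi_genPart_isPart hπ) hWmem (fmin_mem hWne), prev_fmin]
    refine ⟨Wc, hWmem, ?_, ?_⟩
    · rw [hphimin.2, hroot]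
    · apply fmax_eq_of hmaxmem
      intro b hb
      exact le_fmax (phi_phib_subset hπ hA hb)

lemma phi_image_P_phib (hA : A ∈ π) :
    (PhiB π A).image (permOf (genPart π)) = unlB π A := by
  obtain ⟨hsub, hWmem⟩ := phi_A_sub_comp hπ hA
  rw [PhiB, Finset.image_image]
  have : ∀ y ∈ unlB π A, (permOf (genPart π) ∘ permOfInv (genPart π)) y = y := by
    intro y hy
    exact phi_P_Pinv hπ hWmem (hsub (unl_subset hπ A hy))
  calc (unlB π A).image (permOf (genPart π) ∘ permOfInv (genPart π))
      = (unlB π A).image id := Finset.image_congr this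
    _ = unlB π A := Finset.image_id

lemma phi_psib_phib (hA : A ∈ π) : PsiB (genPart π) (PhiB π A) = A := by
  have hne : A.Nonempty := hπ.1.1 A hA
  by_cases hsc : SinglyCovered π (fmin A)
  · rw [PsiB, if_pos ((phi_special_iff hπ hA).2 hsc), phi_image_P_phib hπ hA, unlB, if_pos hsc]
  · rw [PsiB, if_neg (fun h => hsc ((phi_special_iff hπ hA).1 h)), phi_image_P_phib hπ hA,
      (phi_phib_min hπ hA).2, unlB, if_neg hsc]
    exact Finset.insert_erase (fmin_mem hne)

lemma phi_psi_phi : Psi (genPart π) (cycUnlink π) = π := by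
  rw [Psi, cycUnlink_eq_image, Finset.image_image]
  calc π.image (PsiB (genPart π) ∘ PhiB π)
      = π.image id := Finset.image_congr (fun A hA => phi_psib_phib hπ hA)
    _ = π := Finset.image_id

lemma unlink_cover (hm : m ∈ Finset.Icc 1 n) : ∃ A ∈ π, m ∈ unlB π A := by
  obtain ⟨A0, hA0, hmA0⟩ := hπ.1.2.2.1 m hm
  obtain ⟨C, hC, hmC, hCne⟩ : ∃ C ∈ π, m ∈ C ∧ (m ≠ fmin C ∨ SinglyCovered π (fmin C)) := by
    by_cases hsc : SinglyCovered π m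
    · rcases eq_or_ne m (fmin A0) with heq | hne
      · exact ⟨A0, hA0, hmA0, Or.inr (heq ▸ hsc)⟩
      · exact ⟨A0, hA0, hmA0, Or.inl hne⟩
    · obtain ⟨B, hB, hBne, hmB⟩ := (not_singly_iff hπ hA0 hmA0).1 hsc
      obtain ⟨hor, hmne, -⟩ := shared_struct hπ.1 hA0 hB (Ne.symm hBne) hmA0 hmB
      rcases hor with h | h
      · exact ⟨B, hB, hmB, Or.inl (fun hc => hmne (h ▸ hc ▸ rfl))⟩
      · exact ⟨A0, hA0, hmA0, Or.inl (fun hc => hmne (hc ▸ h ▸ rfl))⟩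
  refine ⟨C, hC, ?_⟩
  rw [unlB]
  split
  · exact hmC
  · next hns =>
    rcases hCne with h | h
    · exact Finset.mem_erase.2 ⟨h, hmC⟩
    · exact absurd h hns

lemma phi_alpha_part : IsPartitionOfSet (Finset.Icc 1 n) (cycUnlink π) := by
  rw [cycUnlink_eq_image]
  refine ⟨?_, ?_, ?_, ?_⟩
  · intro X hX
    obtain ⟨A, hA, rfl⟩ := Finset.mem_image.1 hX
    exact phi_phib_nonempty hπ hA
  · intro X hX
    obtain ⟨A, hA, rfl⟩ := Finset.mem_image.1 hX
    have hne : A.Nonempty := hπ.1.1 A hA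
    exact (phi_phib_subset hπ hA).trans
      (compOf_subset hπ.1 (hπ.1.2.1 A hA (fmin_mem hne)))
  · intro m hm
    have hWmem : compOf (Finset.Icc 1 n) π m ∈ genPart π := phi_comp_mem hπ hm
    have hmW : m ∈ compOf (Finset.Icc 1 n) π m := mem_compOf_self hm
    set z := permOf (genPart π) m with hz
    have hzW : z ∈ compOf (Finset.Icc 1 n) π m := by
      rw [hz, permOf_eq (phi_genPart_isPart hπ) hWmem hmW]
      exact next_mem hmW
    have hzIcc : z ∈ Finset.Icc 1 n := compOf_subset hπ.1 hm hzW
    obtain ⟨A, hA, hzA⟩ := unlink_cover hπ hzIcc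
    refine ⟨PhiB π A, Finset.mem_image_of_mem _ hA, ?_⟩
    refine Finset.mem_image.2 ⟨z, hzA, ?_⟩
    rw [hz]
    exact phi_Pinv_P hπ hWmem hmW
  · intro X hX Y hY hne
    obtain ⟨A, hA, rfl⟩ := Finset.mem_image.1 hX
    obtain ⟨A', hA', rfl⟩ := Finset.mem_image.1 hY
    have hAne : A ≠ A' := fun h => hne (h ▸ rfl)
    by_contra hcon
    obtain ⟨x, hx⟩ := Finset.nonempty_iff_ne_empty.2 hcon
    obtain ⟨hx1, hx2⟩ := Finset.mem_inter.1 hx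
    obtain ⟨y, hy, hpy⟩ := Finset.mem_image.1 hx1
    obtain ⟨y', hy', hpy'⟩ := Finset.mem_image.1 hx2
    have h1 : y = y' := by
      have e1 : permOf (genPart π) x = y := by
        rw [← hpy]
        exact phi_P_Pinv hπ (phi_A_sub_comp hπ hA).2
          ((phi_A_sub_comp hπ hA).1 (unl_subset hπ A hy))
      have e2 : permOf (genPart π) x = y' := by
        rw [← hpy']
        exact phi_P_Pinv hπ (phi_A_sub_comp hπ hA').2
          ((phi_A_sub_comp hπ hA').1 (unl_subset hπ A' hy'))
      omega
    have h2 := unl_inter hπ hA hA' hAne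
    rw [← unlB, ← unlB] at h2
    have : y ∈ unlB π A ∩ unlB π A' := Finset.mem_inter.2 ⟨hy, h1 ▸ hy'⟩
    rw [h2] at this
    simp at this

end PhiSide3

section PhiSide4
variable {n : ℕ} {π : Finset (Finset ℕ)} {A A' B C X Y W : Finset ℕ} {m u v x y : ℕ}
variable (hπ : IsNCL n π)
include hπ

lemma phi_origin (hA : A ∈ π) (hx : x ∈ PhiB π A)
    (hxmax : x ≠ fmax (compOf (Finset.Icc 1 n) π (fmin A))) :
    ∃ o ∈ unlB π A, x ≤ o ∧
      ∀ u ∈ compOf (Finset.Icc 1 n) π (fmin A), x < u → o ≤ u := by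
  obtain ⟨hsub, hWmem⟩ := phi_A_sub_comp hπ hA
  set Wc := compOf (Finset.Icc 1 n) π (fmin A) with hWcdef
  by_cases hxin : x ∈ unlB π A
  · exact ⟨x, hxin, le_refl _, fun u hu h => le_of_lt h⟩
  obtain ⟨y, hy, hpy⟩ := Finset.mem_image.1 hx
  have hyW : y ∈ Wc := hsub (unl_subset hπ A hy)
  rw [permOfInv_eq (phi_genPart_isPart hπ) hWmem hyW] at hpy
  have hyne : y ≠ fmin Wc := by
    rintro rfl
    rw [prev_fmin] at hpy
    exact hxmax hpy.symm
  have hxy : x < y := hpy ▸ prev_lt hyW hyne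
  refine ⟨y, hy, le_of_lt hxy, ?_⟩
  intro u hu hxu
  by_contra hc
  push_neg at hc
  have := le_prev hyW hyne hu hc
  omega

lemma phi_alpha_noncross : ¬ IsCrossing (cycUnlink π) := by
  rintro ⟨X, hX, Y, hY, hXY, a, haX, b, hbY, c, hcX, d, hdY, h1, h2, h3⟩
  rw [cycUnlink_eq_image] at hX hY
  obtain ⟨A, hA, rfl⟩ := Finset.mem_image.1 hX
  obtain ⟨A', hA', rfl⟩ := Finset.mem_image.1 hY
  have hAne : A ≠ A' := fun h => hXY (h ▸ rfl)
  obtain ⟨hsubA, hWA⟩ := phi_A_sub_comp hπ hA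
  obtain ⟨hsubA', hWA'⟩ := phi_A_sub_comp hπ hA'
  set W1 := compOf (Finset.Icc 1 n) π (fmin A) with hW1
  set W2 := compOf (Finset.Icc 1 n) π (fmin A') with hW2
  rcases eq_or_ne W1 W2 with hWeq | hWne
  · -- same component
    have haW : a ∈ W1 := phi_phib_subset hπ hA haX
    have hbW : b ∈ W1 := hWeq ▸ phi_phib_subset hπ hA' hbY
    have hcW : c ∈ W1 := phi_phib_subset hπ hA hcX
    have hdW : d ∈ W1 := hWeq ▸ phi_phib_subset hπ hA' hdY
    have hamax : a ≠ fmax W1 := fun h => by have := le_fmax hdW; omega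
    have hbmax : b ≠ fmax W1 := fun h => by have := le_fmax hdW; omega
    have hcmax : c ≠ fmax W1 := fun h => by have := le_fmax hdW; omega
    obtain ⟨oa, hoaU, hoa1, hoa2⟩ := phi_origin hπ hA haX hamax
    obtain ⟨ob, hobU, hob1, hob2⟩ := phi_origin hπ hA' hbY (by rw [← hW2, ← hWeq]; exact hbmax)
    obtain ⟨oc, hocU, hoc1, hoc2⟩ := phi_origin hπ hA hcX hcmax
    have hdisj : ∀ z, z ∈ unlB π A → z ∈ unlB π A' → False := by
      intro z hz hz'
      have h := unl_inter hπ hA hA' hAne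
      rw [← unlB, ← unlB] at h
      have : z ∈ unlB π A ∩ unlB π A' := Finset.mem_inter.2 ⟨hz, hz'⟩
      rw [h] at this
      simp at this
    have hoab : oa < ob := by
      have g1 : oa ≤ b := hoa2 b hbW h1
      have g2 : b ≤ ob := hob1
      rcases eq_or_lt_of_le (le_trans g1 g2) with h | h
      · exact absurd (hdisj oa hoaU (h ▸ hobU)) not_false
      · exact h
    have hobc : ob < oc := by
      have g1 : ob ≤ c := by
        apply hob2 c ?_ h2
        rw [← hW2, ← hWeq]
        exact hcW
      have g2 : c ≤ oc := hoc1
      rcases eq_or_lt_of_le (le_trans g1 g2) with h | h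
      · exact absurd (hdisj oc hocU (h ▸ hobU)) not_false
      · exact h
    have hoaA : oa ∈ A := unl_subset hπ A hoaU
    have hobA' : ob ∈ A' := unl_subset hπ A' hobU
    have hocA : oc ∈ A := unl_subset hπ A hocU
    by_cases hdcase : d ∈ unlB π A' ∨ d ≠ fmax W1
    · -- a fourth origin exists
      obtain ⟨od, hodU, hod1, hod2⟩ : ∃ o ∈ unlB π A', d ≤ o ∧ True := by
        rcases hdcase with h | h
        · exact ⟨d, h, le_refl _, trivial⟩
        · obtain ⟨o, ho, ho1, -⟩ := phi_origin hπ hA' hdY (by rw [← hW2, ← hWeq]; exact h)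
          exact ⟨o, ho, ho1, trivial⟩
      have hocd : oc < od := by
        have g1 : oc ≤ d := hoc2 d hdW h3
        rcases eq_or_lt_of_le (le_trans g1 hod1) with h | h
        · exact absurd (hdisj oc hocU (by rw [h]; exact hodU)) not_false
        · exact h
      exact hπ.2 ⟨A, hA, A', hA', hAne, oa, hoaA, ob, hobA', oc, hocA,
        od, unl_subset hπ A' hodU, hoab, hobc, hocd⟩
    · -- wrap case : d = fmax W1 and fmin W1 ∈ unlB π A'
      push_neg at hdcase
      obtain ⟨hdnot, hdmax⟩ := hdcase
      obtain ⟨y', hy', hpy'⟩ := Finset.mem_image.1 hdY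
      have hy'W : y' ∈ W2 := hsubA' (unl_subset hπ A' hy')
      rw [permOfInv_eq (phi_genPart_isPart hπ) hWA' hy'W] at hpy'
      have hy'min : y' = fmin W2 := by
        by_contra hyne
        have g1 := prev_lt hy'W hyne
        have g2 := le_fmax hy'W
        rw [hpy'] at g1
        have g3 : fmax W2 = fmax W1 := by rw [hWeq]
        omega
      have hfminU : fmin W1 ∈ unlB π A' := by
        rw [hWeq, ← hy'min]
        exact hy'
      have hfminA' : fmin W1 ∈ A' := unl_subset hπ A' hfminU
      have hfoa : fmin W1 < oa := by
        have g1 : fmin W1 ≤ a := fmin_le haW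
        rcases eq_or_lt_of_le (le_trans g1 hoa1) with h | h
        · exact absurd (hdisj oa hoaU (h ▸ hfminU)) not_false
        · exact h
      exact hπ.2 ⟨A', hA', A, hA, Ne.symm hAne, fmin W1, hfminA', oa, hoaA, ob, hobA',
        oc, hocA, hfoa, hoab, hobc⟩
  · -- different components : crossing of genPart blocks
    exact phi_genPart_noncross hπ ⟨W1, hWA, W2, hWA', hWne,
      a, phi_phib_subset hπ hA haX, b, phi_phib_subset hπ hA' hbY,
      c, phi_phib_subset hπ hA hcX, d, phi_phib_subset hπ hA' hdY, h1, h2, h3⟩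

lemma phi_LL : LL (cycUnlink π) (genPart π) := by
  constructor
  · intro X hX
    rw [cycUnlink_eq_image] at hX
    obtain ⟨A, hA, rfl⟩ := Finset.mem_image.1 hX
    exact ⟨_, (phi_A_sub_comp hπ hA).2, phi_phib_subset hπ hA⟩
  · intro W hW
    obtain ⟨m, hm, rfl⟩ := (mem_genPart hπ).1 hW
    obtain ⟨A0, hA0, hfA0, hminA0, huniq⟩ := phi_root hπ hm
    have hsc : SinglyCovered π (fmin A0) := by
      rw [hminA0]
      exact phi_compmin_singly hπ hm hA0 hfA0
    have hcompeq : compOf (Finset.Icc 1 n) π (fmin A0) = compOf (Finset.Icc 1 n) π m := by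
      apply compOf_eq_of_mem
      rw [mem_compOf_iff]
      constructor
      · exact hπ.1.2.1 A0 hA0 (fmin_mem (hπ.1.1 A0 hA0))
      · have h1 : fmin (compOf (Finset.Icc 1 n) π m) ∈ compOf (Finset.Icc 1 n) π m :=
          fmin_mem ⟨m, mem_compOf_self hm⟩
        rw [mem_compOf_iff] at h1
        rw [hminA0]
        exact h1.2
    refine ⟨PhiB π A0, ?_, ?_, ?_⟩
    · rw [cycUnlink_eq_image]
      exact Finset.mem_image_of_mem _ hA0
    · have h := (phi_phib_min hπ hA0).1
      rwa [hminA0] at h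
    · -- fmax ∈ PhiB π A0
      have hroot := phi_singly_root hπ hA0 hsc
      have hWmem := (phi_A_sub_comp hπ hA0).2
      have hWne : (compOf (Finset.Icc 1 n) π (fmin A0)).Nonempty :=
        ⟨_, mem_compOf_self (hπ.1.2.1 A0 hA0 (fmin_mem (hπ.1.1 A0 hA0)))⟩
      have hmaxmem : fmax (compOf (Finset.Icc 1 n) π (fmin A0)) ∈ PhiB π A0 := by
        refine Finset.mem_image.2 ⟨fmin (compOf (Finset.Icc 1 n) π (fmin A0)), ?_, ?_⟩
        · rw [unlB, if_pos hsc, ← hroot]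
          exact fmin_mem (hπ.1.1 A0 hA0)
        · rw [permOfInv_eq (phi_genPart_isPart hπ) hWmem (fmin_mem hWne), prev_fmin]
      rwa [hcompeq] at hmaxmem

end PhiSide4


lemma mem_NCLF {n : ℕ} {π : Finset (Finset ℕ)} : π ∈ NCLF n ↔ IsNCL n π := by
  rw [NCLF, Finset.mem_filter]
  constructor
  · exact fun h => h.2
  · intro h
    refine ⟨?_, h⟩
    rw [Finset.mem_powerset]
    intro A hA
    rw [Finset.mem_powerset]
    exact h.1.2.1 A hA

lemma mem_NCF {n : ℕ} {α : Finset (Finset ℕ)} : α ∈ NCF n ↔ IsNCPartition n α := by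
  rw [NCF, Finset.mem_filter]
  constructor
  · exact fun h => h.2
  · intro h
    refine ⟨?_, h⟩
    rw [Finset.mem_powerset]
    intro A hA
    rw [Finset.mem_powerset]
    exact h.1.2.1 A hA

lemma psi_weight {R : Type*} [CommRing R] (t : ℕ → R) {n : ℕ} {α β : Finset (Finset ℕ)}
    (hα : IsNCPartition n α) (hβ : IsNCPartition n β) (hll : LL α β) :
    ∏ A ∈ Psi β α, t (A.card - 1) =
      (∏ U ∈ α.filter fun U => SpecialBlock β U, t (U.card - 1)) *
        ∏ V ∈ α.filter fun V => ¬ SpecialBlock β V, t V.card := by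
  rw [Psi, Finset.prod_image (fun V hV V' hV' h => psib_injective hα hβ hll hV hV' h),
    ← Finset.prod_filter_mul_prod_filter_not α (fun V => SpecialBlock β V)]
  congr 1
  · apply Finset.prod_congr rfl
    intro V hV
    obtain ⟨hVα, hsp⟩ := Finset.mem_filter.1 hV
    obtain ⟨W, hW, hsub⟩ := hll.1 V hVα
    rw [psib_card_special hα hβ hll hVα hW hsub hsp]
  · apply Finset.prod_congr rfl
    intro V hV
    obtain ⟨hVα, hsp⟩ := Finset.mem_filter.1 hV
    obtain ⟨W, hW, hsub⟩ := hll.1 V hVα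
    rw [psib_card_nonspecial hα hβ hll hVα hW hsub hsp]
    simp


/-- For every `n ≥ 1` and every sequence `(t_k)` in a commutative ring,
`Σ_{π ∈ NCL(n)} ∏_{A block of π} t_{|A|-1}
  = Σ_{α,β ∈ NC(n), α ≪ β}
      (∏_{U β-special block of α} t_{|U|-1}) · (∏_{V non-β-special block of α} t_{|V|})`. -/
theorem stmt16 {R : Type*} [CommRing R] (t : ℕ → R) (n : ℕ) (hn : 1 ≤ n) :
    ∑ π ∈ NCLF n, ∏ A ∈ π, t (A.card - 1)
      = ∑ p ∈ (NCF n ×ˢ NCF n).filter fun p => LL p.1 p.2,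
          (∏ U ∈ p.1.filter fun U => SpecialBlock p.2 U, t (U.card - 1))
            * ∏ V ∈ p.1.filter fun V => ¬ SpecialBlock p.2 V, t V.card := by
  apply Finset.sum_bij' (i := fun π _ => (cycUnlink π, genPart π))
    (j := fun p _ => Psi p.2 p.1)
  case hi =>
    intro π hπm
    have hπ : IsNCL n π := mem_NCLF.1 hπm
    rw [Finset.mem_filter, Finset.mem_product]
    exact ⟨⟨mem_NCF.2 ⟨phi_alpha_part hπ, phi_alpha_noncross hπ⟩,
      mem_NCF.2 ⟨phi_genPart_isPart hπ, phi_genPart_noncross hπ⟩⟩, phi_LL hπ⟩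
  case hj =>
    intro p hp
    rw [Finset.mem_filter, Finset.mem_product] at hp
    exact mem_NCLF.2 (psi_isNCL (mem_NCF.1 hp.1.1) (mem_NCF.1 hp.1.2) hp.2)
  case left_neg =>
    intro π hπm
    exact phi_psi_phi (mem_NCLF.1 hπm)
  case right_neg =>
    intro p hp
    rw [Finset.mem_filter, Finset.mem_product] at hp
    have hα := mem_NCF.1 hp.1.1
    have hβ := mem_NCF.1 hp.1.2
    exact Prod.ext (psi_cycUnlink hα hβ hp.2) (psi_genPart hα hβ hp.2)
  case h =>
    intro π hπm
    have hπ : IsNCL n π := mem_NCLF.1 hπm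
    have hα : IsNCPartition n (cycUnlink π) := ⟨phi_alpha_part hπ, phi_alpha_noncross hπ⟩
    have hβ : IsNCPartition n (genPart π) := ⟨phi_genPart_isPart hπ, phi_genPart_noncross hπ⟩
    have hll := phi_LL hπ
    calc ∏ A ∈ π, t (A.card - 1)
        = ∏ A ∈ Psi (genPart π) (cycUnlink π), t (A.card - 1) := by rw [phi_psi_phi hπ]
      _ = _ := psi_weight t hα hβ hll
end

section
/- Let (t_k)_{k ≥ 0} be a sequence in a commutative ring, and define κ_1 := t_0 and, for m ≥ 2, κ_m := Σ_{γ ∈ NC(m−1)} ∏_{V block of γ} t_{|V|}. Then for every n ≥ 1 and every β ∈ NC(n): ∏_{W block of β} κ_{|W|} = Σ_{α ∈ NC(n), α ≪ β} (∏_{U β-special block of α} t_{|U|−1}) · (∏_{V block of α that is not β-special} t_{|V|}). -/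
open scoped Classical

lemma fmin_mem_s17 {V : Finset ℕ} (h : V.Nonempty) : fmin V ∈ V := by
  have := Nat.sInf_mem (s := (V : Set ℕ)) (by exact_mod_cast h.to_set)
  exact_mod_cast this

lemma fmin_le_s17 {V : Finset ℕ} {x : ℕ} (hx : x ∈ V) : fmin V ≤ x :=
  Nat.sInf_le (by exact_mod_cast hx)

lemma le_fmin {V : Finset ℕ} {c : ℕ} (h : V.Nonempty) (H : ∀ y ∈ V, c ≤ y) : c ≤ fmin V :=
  le_csInf (by exact_mod_cast h.to_set) (fun b hb => H b (by exact_mod_cast hb))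

lemma fmax_mem_s17 {V : Finset ℕ} (h : V.Nonempty) : fmax V ∈ V := by
  have := Nat.sSup_mem (s := (V : Set ℕ)) (by exact_mod_cast h.to_set) V.finite_toSet.bddAbove
  exact_mod_cast this

lemma le_fmax_s17 {V : Finset ℕ} {x : ℕ} (hx : x ∈ V) : x ≤ fmax V :=
  le_csSup V.finite_toSet.bddAbove (by exact_mod_cast hx)

lemma fmax_le {V : Finset ℕ} {c : ℕ} (h : V.Nonempty) (H : ∀ y ∈ V, y ≤ c) : fmax V ≤ c :=
  csSup_le (by exact_mod_cast h.to_set) (fun b hb => H b (by exact_mod_cast hb))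

lemma fmin_eq {V : Finset ℕ} {x : ℕ} (hx : x ∈ V) (H : ∀ y ∈ V, x ≤ y) : fmin V = x :=
  le_antisymm (fmin_le_s17 hx) (le_fmin ⟨x, hx⟩ H)

lemma fmax_eq {V : Finset ℕ} {x : ℕ} (hx : x ∈ V) (H : ∀ y ∈ V, y ≤ x) : fmax V = x :=
  le_antisymm (fmax_le ⟨x, hx⟩ H) (le_fmax_s17 hx)

noncomputable def eIso (W : Finset ℕ) : Fin W.card ≃o ↥W := W.orderIsoOfFin rfl

noncomputable def ff (W : Finset ℕ) (j : ℕ) : ℕ :=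
  if h : j - 1 < W.card then (eIso W ⟨j - 1, h⟩ : ℕ) else 0

noncomputable def gg (W : Finset ℕ) (x : ℕ) : ℕ :=
  if h : x ∈ W then ((eIso W).symm ⟨x, h⟩ : ℕ) + 1 else 0

lemma eIso_mem (W : Finset ℕ) (i : Fin W.card) : (eIso W i : ℕ) ∈ W := (eIso W i).2

lemma fmax_eIso {W : Finset ℕ} (h : 0 < W.card) :
    fmax W = (eIso W ⟨W.card - 1, by omega⟩ : ℕ) := by
  refine fmax_eq (eIso_mem W _) (fun y hy => ?_)
  have : y = ((eIso W) ((eIso W).symm ⟨y, hy⟩) : ℕ) := by simp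
  rw [this]
  have h2 : ((eIso W).symm ⟨y, hy⟩ : ℕ) < W.card := ((eIso W).symm ⟨y, hy⟩).2
  have h3 : ((eIso W).symm ⟨y, hy⟩) ≤ (⟨W.card - 1, by omega⟩ : Fin W.card) := by
    rw [Fin.le_def]; simp; omega
  exact_mod_cast Subtype.coe_le_coe.mpr ((eIso W).monotone h3)

lemma fmin_eIso {W : Finset ℕ} (h : 0 < W.card) :
    fmin W = (eIso W ⟨0, h⟩ : ℕ) := by
  refine fmin_eq (eIso_mem W _) (fun y hy => ?_)
  have : y = ((eIso W) ((eIso W).symm ⟨y, hy⟩) : ℕ) := by simp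
  rw [this]
  exact_mod_cast Subtype.coe_le_coe.mpr ((eIso W).monotone (by exact Fin.mk_le_mk.mpr (by omega)))

lemma ff_mem {W : Finset ℕ} {j : ℕ} (hj : j ∈ Finset.Icc 1 (W.card - 1)) : ff W j ∈ W := by
  rw [Finset.mem_Icc] at hj
  rw [ff, dif_pos (by omega)]
  exact eIso_mem W _

lemma card_ge_two {W : Finset ℕ} {j : ℕ} (hj : j ∈ Finset.Icc 1 (W.card - 1)) : 2 ≤ W.card := by
  rw [Finset.mem_Icc] at hj; omega

lemma ff_lt_iff {W : Finset ℕ} {j k : ℕ} (hj : j ∈ Finset.Icc 1 (W.card - 1))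
    (hk : k ∈ Finset.Icc 1 (W.card - 1)) : j < k ↔ ff W j < ff W k := by
  rw [Finset.mem_Icc] at hj hk
  rw [ff, ff, dif_pos (by omega), dif_pos (by omega)]
  rw [Subtype.coe_lt_coe, OrderIso.lt_iff_lt, Fin.mk_lt_mk]
  omega

lemma ff_ne_fmax {W : Finset ℕ} {j : ℕ} (hj : j ∈ Finset.Icc 1 (W.card - 1)) :
    ff W j ≠ fmax W := by
  rw [Finset.mem_Icc] at hj
  rw [ff, dif_pos (by omega), fmax_eIso (by omega)]
  intro h
  have := (eIso W).injective (Subtype.ext h)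
  rw [Fin.mk_eq_mk] at this
  omega

lemma gg_ff {W : Finset ℕ} {j : ℕ} (hj : j ∈ Finset.Icc 1 (W.card - 1)) : gg W (ff W j) = j := by
  rw [Finset.mem_Icc] at hj
  rw [ff, dif_pos (by omega), gg, dif_pos (eIso_mem W _)]
  have : (⟨(eIso W ⟨j-1, by omega⟩ : ℕ), eIso_mem W _⟩ : ↥W) = eIso W ⟨j-1, by omega⟩ := rfl
  rw [this, OrderIso.symm_apply_apply]
  simp; omega

lemma gg_mem {W : Finset ℕ} {x : ℕ} (hx : x ∈ W) (hx' : x ≠ fmax W) :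
    gg W x ∈ Finset.Icc 1 (W.card - 1) := by
  have hc : 0 < W.card := Finset.card_pos.mpr ⟨x, hx⟩
  rw [gg, dif_pos hx, Finset.mem_Icc]
  constructor
  · omega
  · have h2 := ((eIso W).symm ⟨x, hx⟩).2
    rcases Nat.lt_or_ge ((eIso W).symm ⟨x, hx⟩ : ℕ) (W.card - 1) with h | h
    · omega
    · exfalso
      apply hx'
      have : (eIso W).symm ⟨x, hx⟩ = (⟨W.card - 1, by omega⟩ : Fin W.card) := by
        apply Fin.ext; simp; omega
      rw [fmax_eIso hc, ← this]
      simp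
lemma ff_gg {W : Finset ℕ} {x : ℕ} (hx : x ∈ W) : ff W (gg W x) = x := by
  rw [gg, dif_pos hx, ff]
  have h2 := ((eIso W).symm ⟨x, hx⟩).2
  rw [dif_pos (by omega)]
  have : (⟨((eIso W).symm ⟨x, hx⟩ : ℕ) + 1 - 1, by omega⟩ : Fin W.card) = (eIso W).symm ⟨x, hx⟩ := by
    apply Fin.ext; simp
  rw [this]
  simp

lemma gg_lt_iff {W : Finset ℕ} {x y : ℕ} (hx : x ∈ W) (hy : y ∈ W) :
    x < y ↔ gg W x < gg W y := by
  rw [gg, gg, dif_pos hx, dif_pos hy]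
  have h1 : x < y ↔ ((eIso W).symm ⟨x, hx⟩) < ((eIso W).symm ⟨y, hy⟩) := by
    rw [OrderIso.lt_iff_lt, Subtype.mk_lt_mk]
  rw [h1, Fin.lt_iff_val_lt_val]
  omega

lemma part_unique_s17 {F : Finset ℕ} {α : Finset (Finset ℕ)} (h : IsPartitionOfSet F α)
    {V W : Finset ℕ} {x : ℕ} (hV : V ∈ α) (hW : W ∈ α) (xV : x ∈ V) (xW : x ∈ W) : V = W := by
  by_contra hne
  have h2 : x ∈ V ∩ W := Finset.mem_inter.mpr ⟨xV, xW⟩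
  rw [h.2.2.2 V hV W hW hne] at h2
  exact absurd h2 (Finset.notMem_empty x)

noncomputable def SW (W : Finset ℕ) : Finset (Finset (Finset ℕ)) :=
  W.powerset.powerset.filter fun δ =>
    IsPartitionOfSet W δ ∧ ¬ IsCrossing δ ∧ ∃ U ∈ δ, fmin W ∈ U ∧ fmax W ∈ U

lemma mem_SW {W : Finset ℕ} {δ : Finset (Finset ℕ)} :
    δ ∈ SW W ↔ IsPartitionOfSet W δ ∧ ¬ IsCrossing δ ∧ ∃ U ∈ δ, fmin W ∈ U ∧ fmax W ∈ U := by
  rw [SW, Finset.mem_filter, and_iff_right_iff_imp]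
  intro h
  rw [Finset.mem_powerset]
  intro V hV
  rw [Finset.mem_powerset]
  exact h.1.2.1 V hV

noncomputable def wt {R : Type*} [CommRing R] (t : ℕ → R) (W : Finset ℕ)
    (δ : Finset (Finset ℕ)) : R :=
  ∏ U ∈ δ, (if fmin U = fmin W ∧ fmax U = fmax W then t (U.card - 1) else t U.card)

noncomputable def bmap (W : Finset ℕ) (V : Finset ℕ) : Finset ℕ :=
  if 1 ∈ V then insert (fmax W) (V.image (ff W)) else V.image (ff W)

noncomputable def cmap (W : Finset ℕ) (B : Finset ℕ) : Finset ℕ :=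
  (B.erase (fmax W)).image (gg W)

lemma ff_one {W : Finset ℕ} (hc : 2 ≤ W.card) : ff W 1 = fmin W := by
  rw [ff, dif_pos (by omega)]
  rw [fmin_eIso (by omega : 0 < W.card)]

lemma fmin_ne_fmax {W : Finset ℕ} (hc : 2 ≤ W.card) : fmin W ≠ fmax W := by
  rw [fmin_eIso (by omega : 0 < W.card), fmax_eIso (by omega : 0 < W.card)]
  intro h
  have := (eIso W).injective (Subtype.ext h)
  rw [Fin.mk_eq_mk] at this
  omega

lemma gg_fmin {W : Finset ℕ} (hc : 2 ≤ W.card) : gg W (fmin W) = 1 := by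
  rw [← ff_one hc, gg_ff (by rw [Finset.mem_Icc]; omega)]

lemma fmax_not_mem_image {W : Finset ℕ} {V : Finset ℕ}
    (hV : V ⊆ Finset.Icc 1 (W.card - 1)) : fmax W ∉ V.image (ff W) := by
  rw [Finset.mem_image]
  rintro ⟨j, hj, hfj⟩
  exact ff_ne_fmax (hV hj) hfj

lemma image_ff_gg {W : Finset ℕ} {V : Finset ℕ} (hV : V ⊆ Finset.Icc 1 (W.card - 1)) :
    (V.image (ff W)).image (gg W) = V := by
  rw [Finset.image_image]
  have : V.image (gg W ∘ ff W) = V.image id :=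
    Finset.image_congr (fun j hj => gg_ff (hV hj))
  rw [this, Finset.image_id]

lemma image_gg_ff {W : Finset ℕ} {B : Finset ℕ} (hB : B ⊆ W) :
    (B.image (gg W)).image (ff W) = B := by
  rw [Finset.image_image]
  have : B.image (ff W ∘ gg W) = B.image id :=
    Finset.image_congr (fun x hx => ff_gg (hB hx))
  rw [this, Finset.image_id]

lemma card_image_ff {W : Finset ℕ} {V : Finset ℕ} (hV : V ⊆ Finset.Icc 1 (W.card - 1)) :
    (V.image (ff W)).card = V.card :=
  Finset.card_image_of_injOn (fun a ha b hb hab => by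
    rw [← gg_ff (hV ha), ← gg_ff (hV hb), hab])

lemma mem_image_ff {W : Finset ℕ} {V : Finset ℕ} (hV : V ⊆ Finset.Icc 1 (W.card - 1))
    {j : ℕ} (hj : j ∈ Finset.Icc 1 (W.card - 1)) : ff W j ∈ V.image (ff W) ↔ j ∈ V := by
  rw [Finset.mem_image]
  constructor
  · rintro ⟨k, hk, hk2⟩
    rwa [← gg_ff hj, ← hk2, gg_ff (hV hk)]
  · intro h; exact ⟨j, h, rfl⟩

lemma bmap_elem {W : Finset ℕ} {V : Finset ℕ}
    (hV : V ⊆ Finset.Icc 1 (W.card - 1)) {x : ℕ} (hx : x ∈ bmap W V) :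
    (x = fmax W ∧ 1 ∈ V) ∨ (∃ j ∈ V, ff W j = x ∧ x ≠ fmax W) := by
  rw [bmap] at hx
  split at hx
  · rcases Finset.mem_insert.mp hx with h | h
    · exact Or.inl ⟨h, by assumption⟩
    · obtain ⟨j, hj, hj2⟩ := Finset.mem_image.mp h
      exact Or.inr ⟨j, hj, hj2, by rw [← hj2]; exact ff_ne_fmax (hV hj)⟩
  · obtain ⟨j, hj, hj2⟩ := Finset.mem_image.mp hx
    exact Or.inr ⟨j, hj, hj2, by rw [← hj2]; exact ff_ne_fmax (hV hj)⟩

lemma bmap_subset {W : Finset ℕ} (hc : 2 ≤ W.card) {V : Finset ℕ}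
    (hV : V ⊆ Finset.Icc 1 (W.card - 1)) : bmap W V ⊆ W := by
  intro x hx
  rcases bmap_elem hV hx with ⟨h, _⟩ | ⟨j, hj, hj2, _⟩
  · rw [h]; exact fmax_mem_s17 (Finset.card_pos.mp (by omega))
  · rw [← hj2]; exact ff_mem (hV hj)

lemma bmap_common {W : Finset ℕ} {V V' : Finset ℕ}
    (hV : V ⊆ Finset.Icc 1 (W.card - 1)) (hV' : V' ⊆ Finset.Icc 1 (W.card - 1))
    {x : ℕ} (hx : x ∈ bmap W V) (hx' : x ∈ bmap W V') : ∃ j, j ∈ V ∧ j ∈ V' := by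
  rcases bmap_elem hV hx with ⟨h, h1⟩ | ⟨j, hj, hj2, hj3⟩
  · rcases bmap_elem hV' hx' with ⟨_, h1'⟩ | ⟨j, hj, hj2, hj3⟩
    · exact ⟨1, h1, h1'⟩
    · exact absurd h (by rw [← hj2] at hj3 ⊢; exact hj3)
  · rcases bmap_elem hV' hx' with ⟨h, _⟩ | ⟨j', hj', hj2', _⟩
    · exact absurd h (by rw [← hj2] at hj3 ⊢; exact hj3)
    · refine ⟨j, hj, ?_⟩
      have : j = j' := by
        rw [← gg_ff (hV hj), ← gg_ff (hV' hj'), hj2, hj2']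
      rwa [this]

lemma bmap_nonempty {W : Finset ℕ} {V : Finset ℕ} (hV : V.Nonempty) :
    (bmap W V).Nonempty := by
  rw [bmap]
  split
  · exact Finset.insert_nonempty _ _
  · exact hV.image _

lemma Phi_mem {W : Finset ℕ} (hc : 2 ≤ W.card) {γ : Finset (Finset ℕ)}
    (hγ : γ ∈ NCF (W.card - 1)) : γ.image (bmap W) ∈ SW W := by
  rw [mem_NCF] at hγ
  have hP : IsPartitionOfSet (Finset.Icc 1 (W.card - 1)) γ := hγ.1
  have hne := hP.1
  have hsub := hP.2.1
  have hcov := hP.2.2.1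
  have hnc : ¬ IsCrossing γ := hγ.2
  have hWne : W.Nonempty := Finset.card_pos.mp (by omega)
  have h1I : (1 : ℕ) ∈ Finset.Icc 1 (W.card - 1) := by rw [Finset.mem_Icc]; omega
  rw [mem_SW]
  refine ⟨⟨?_, ?_, ?_, ?_⟩, ?_, ?_⟩
  · -- nonempty
    intro B hB
    obtain ⟨V, hV, rfl⟩ := Finset.mem_image.mp hB
    exact bmap_nonempty (hne V hV)
  · -- subset
    intro B hB
    obtain ⟨V, hV, rfl⟩ := Finset.mem_image.mp hB
    exact bmap_subset hc (hsub V hV)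
  · -- cover
    intro x hx
    by_cases hxm : x = fmax W
    · obtain ⟨V, hV, h1V⟩ := hcov 1 h1I
      refine ⟨bmap W V, Finset.mem_image_of_mem _ hV, ?_⟩
      rw [hxm, bmap, if_pos h1V]
      exact Finset.mem_insert_self _ _
    · obtain ⟨V, hV, hgV⟩ := hcov (gg W x) (gg_mem hx hxm)
      refine ⟨bmap W V, Finset.mem_image_of_mem _ hV, ?_⟩
      have : ff W (gg W x) ∈ V.image (ff W) := Finset.mem_image_of_mem _ hgV
      rw [ff_gg hx] at this
      rw [bmap]
      split
      · exact Finset.mem_insert_of_mem this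
      · exact this
  · -- disjoint
    intro B hB B' hB' hBB'
    obtain ⟨V, hV, rfl⟩ := Finset.mem_image.mp hB
    obtain ⟨V', hV', rfl⟩ := Finset.mem_image.mp hB'
    rw [Finset.eq_empty_iff_forall_notMem]
    intro x hx
    rw [Finset.mem_inter] at hx
    obtain ⟨j, hj, hj'⟩ := bmap_common (hsub V hV) (hsub V' hV') hx.1 hx.2
    exact hBB' (by rw [part_unique_s17 hP hV hV' hj hj'])
  · -- noncrossing
    rintro ⟨A, hA, B, hB, hAB, a, ha, b, hb, c, hcc, d, hd, o1, o2, o3⟩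
    obtain ⟨V, hV, rfl⟩ := Finset.mem_image.mp hA
    obtain ⟨V', hV', rfl⟩ := Finset.mem_image.mp hB
    have hVV' : V ≠ V' := fun h => hAB (by rw [h])
    have hdW := bmap_subset hc (hsub V' hV') hd
    have hamax : a ≠ fmax W := by
      intro h; rw [h] at o1; exact absurd (le_fmax_s17 hdW) (by omega)
    have hbmax : b ≠ fmax W := by
      intro h; rw [h] at o2; exact absurd (le_fmax_s17 hdW) (by omega)
    have hcmax : c ≠ fmax W := by
      intro h; rw [h] at o3; exact absurd (le_fmax_s17 hdW) (by omega)
    obtain ⟨a₀, ha₀, ha₀2, -⟩ := (bmap_elem (hsub V hV) ha).resolve_left (fun h => hamax h.1)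
    obtain ⟨b₀, hb₀, hb₀2, -⟩ := (bmap_elem (hsub V' hV') hb).resolve_left (fun h => hbmax h.1)
    obtain ⟨c₀, hc₀, hc₀2, -⟩ := (bmap_elem (hsub V hV) hcc).resolve_left (fun h => hcmax h.1)
    have hab : a₀ < b₀ := by
      rw [ff_lt_iff (hsub V hV ha₀) (hsub V' hV' hb₀), ha₀2, hb₀2]; exact o1
    have hbc : b₀ < c₀ := by
      rw [ff_lt_iff (hsub V' hV' hb₀) (hsub V hV hc₀), hb₀2, hc₀2]; exact o2
    rcases bmap_elem (hsub V' hV') hd with ⟨hdm, h1V'⟩ | ⟨d₀, hd₀, hd₀2, -⟩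
    · -- d = fmax W, 1 ∈ V'
      have h1a : 1 < a₀ := by
        have h1 : 1 ≤ a₀ := by
          have := hsub V hV ha₀; rw [Finset.mem_Icc] at this; omega
        rcases lt_or_eq_of_le h1 with h | h
        · exact h
        · exact absurd (part_unique_s17 hP hV' hV h1V' (h ▸ ha₀)) (Ne.symm hVV')
      exact hnc ⟨V', hV', V, hV, Ne.symm hVV', 1, h1V', a₀, ha₀, b₀, hb₀, c₀, hc₀,
        h1a, hab, hbc⟩
    · have hcd : c₀ < d₀ := by
        rw [ff_lt_iff (hsub V hV hc₀) (hsub V' hV' hd₀), hc₀2, hd₀2]; exact o3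
      exact hnc ⟨V, hV, V', hV', hVV', a₀, ha₀, b₀, hb₀, c₀, hc₀, d₀, hd₀, hab, hbc, hcd⟩
  · -- link
    obtain ⟨V, hV, h1V⟩ := hcov 1 h1I
    refine ⟨bmap W V, Finset.mem_image_of_mem _ hV, ?_, ?_⟩
    · rw [bmap, if_pos h1V]
      refine Finset.mem_insert_of_mem ?_
      rw [← ff_one hc]
      exact Finset.mem_image_of_mem _ h1V
    · rw [bmap, if_pos h1V]
      exact Finset.mem_insert_self _ _

lemma bmap_injOn {W : Finset ℕ} {γ : Finset (Finset ℕ)}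
    (hP : IsPartitionOfSet (Finset.Icc 1 (W.card - 1)) γ) :
    Set.InjOn (bmap W) ↑γ := by
  intro V hV V' hV' h
  obtain ⟨x, hx⟩ := bmap_nonempty (hP.1 V hV)
  obtain ⟨j, hj, hj'⟩ := bmap_common (hP.2.1 V hV) (hP.2.1 V' hV') hx (h ▸ hx)
  exact part_unique_s17 hP hV hV' hj hj'

lemma wt_Phi {R : Type*} [CommRing R] (t : ℕ → R) {W : Finset ℕ} (hc : 2 ≤ W.card)
    {γ : Finset (Finset ℕ)} (hγ : γ ∈ NCF (W.card - 1)) :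
    wt t W (γ.image (bmap W)) = ∏ V ∈ γ, t V.card := by
  rw [mem_NCF] at hγ
  have hP : IsPartitionOfSet (Finset.Icc 1 (W.card - 1)) γ := hγ.1
  have hWne : W.Nonempty := Finset.card_pos.mp (by omega)
  rw [wt, Finset.prod_image (bmap_injOn hP)]
  refine Finset.prod_congr rfl (fun V hV => ?_)
  have hsubV := hP.2.1 V hV
  by_cases h1 : 1 ∈ V
  · rw [bmap, if_pos h1, if_pos ?_, Finset.card_insert_of_notMem (fmax_not_mem_image hsubV),
      card_image_ff hsubV]
    · simp
    constructor
    · refine fmin_eq ?_ ?_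
      · refine Finset.mem_insert_of_mem ?_
        rw [← ff_one hc]
        exact Finset.mem_image_of_mem _ h1
      · intro y hy
        rcases Finset.mem_insert.mp hy with h | h
        · rw [h]; exact fmin_le_s17 (fmax_mem_s17 hWne)
        · exact fmin_le_s17 (bmap_subset hc hsubV (by rw [bmap, if_pos h1]; exact Finset.mem_insert_of_mem h))
    · refine fmax_eq (Finset.mem_insert_self _ _) ?_
      intro y hy
      rcases Finset.mem_insert.mp hy with h | h
      · omega
      · exact le_fmax_s17 (bmap_subset hc hsubV (by rw [bmap, if_pos h1]; exact Finset.mem_insert_of_mem h))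
  · rw [bmap, if_neg h1, if_neg ?_, card_image_ff hsubV]
    rintro ⟨-, hmax⟩
    have hne : (V.image (ff W)).Nonempty := (hP.1 V hV).image _
    exact fmax_not_mem_image hsubV (hmax ▸ fmax_mem_s17 hne)

lemma cmap_elem {W : Finset ℕ} {B : Finset ℕ} (hB : B ⊆ W) {j : ℕ} (hj : j ∈ cmap W B) :
    j ∈ Finset.Icc 1 (W.card - 1) ∧ ff W j ∈ B ∧ ff W j ≠ fmax W := by
  obtain ⟨x, hx, rfl⟩ := Finset.mem_image.mp hj
  have hxB : x ∈ B := Finset.mem_of_mem_erase hx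
  have hxW : x ∈ W := hB hxB
  have hxmax : x ≠ fmax W := Finset.ne_of_mem_erase hx
  rw [ff_gg hxW]
  exact ⟨gg_mem hxW hxmax, hxB, hxmax⟩

lemma mem_cmap {W : Finset ℕ} {B : Finset ℕ} (hB : B ⊆ W) {j : ℕ}
    (hj : j ∈ Finset.Icc 1 (W.card - 1)) (hf : ff W j ∈ B) : j ∈ cmap W B := by
  rw [cmap, Finset.mem_image]
  exact ⟨ff W j, Finset.mem_erase.mpr ⟨ff_ne_fmax hj, hf⟩, gg_ff hj⟩

lemma Psi_mem {W : Finset ℕ} (hc : 2 ≤ W.card) {δ : Finset (Finset ℕ)}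
    (hδ : δ ∈ SW W) : δ.image (cmap W) ∈ NCF (W.card - 1) := by
  rw [mem_SW] at hδ
  obtain ⟨hP, hnc, U₀, hU₀, hminU, hmaxU⟩ := hδ
  have hne := hP.1
  have hsub := hP.2.1
  have hcov := hP.2.2.1
  rw [mem_NCF]
  refine ⟨⟨?_, ?_, ?_, ?_⟩, ?_⟩
  · -- nonempty
    intro C hC
    obtain ⟨B, hB, rfl⟩ := Finset.mem_image.mp hC
    by_cases hm : fmax W ∈ B
    · have hBU : B = U₀ := part_unique_s17 hP hB hU₀ hm hmaxU
      refine ⟨1, mem_cmap (hsub B hB) (by rw [Finset.mem_Icc]; omega) ?_⟩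
      rw [ff_one hc, hBU]; exact hminU
    · obtain ⟨x, hx⟩ := hne B hB
      have hxW : x ∈ W := hsub B hB hx
      have hxm : x ≠ fmax W := fun h => hm (h ▸ hx)
      exact ⟨gg W x, mem_cmap (hsub B hB) (gg_mem hxW hxm) (by rw [ff_gg hxW]; exact hx)⟩
  · -- subset
    intro C hC
    obtain ⟨B, hB, rfl⟩ := Finset.mem_image.mp hC
    intro j hj
    exact (cmap_elem (hsub B hB) hj).1
  · -- cover
    intro j hj
    obtain ⟨B, hB, hfB⟩ := hcov (ff W j) (ff_mem hj)
    exact ⟨cmap W B, Finset.mem_image_of_mem _ hB, mem_cmap (hsub B hB) hj hfB⟩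
  · -- disjoint
    intro C hC C' hC' hCC'
    obtain ⟨B, hB, rfl⟩ := Finset.mem_image.mp hC
    obtain ⟨B', hB', rfl⟩ := Finset.mem_image.mp hC'
    rw [Finset.eq_empty_iff_forall_notMem]
    intro j hj
    rw [Finset.mem_inter] at hj
    have h1 := (cmap_elem (hsub B hB) hj.1).2.1
    have h2 := (cmap_elem (hsub B' hB') hj.2).2.1
    exact hCC' (by rw [part_unique_s17 hP hB hB' h1 h2])
  · -- noncrossing
    rintro ⟨A, hA, C, hC, hAC, a, ha, b, hb, c, hcc, d, hd, o1, o2, o3⟩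
    obtain ⟨B, hB, rfl⟩ := Finset.mem_image.mp hA
    obtain ⟨B', hB', rfl⟩ := Finset.mem_image.mp hC
    have hBB' : B ≠ B' := fun h => hAC (by rw [h])
    obtain ⟨haI, haB, -⟩ := cmap_elem (hsub B hB) ha
    obtain ⟨hbI, hbB, -⟩ := cmap_elem (hsub B' hB') hb
    obtain ⟨hcI, hcB, -⟩ := cmap_elem (hsub B hB) hcc
    obtain ⟨hdI, hdB, -⟩ := cmap_elem (hsub B' hB') hd
    exact hnc ⟨B, hB, B', hB', hBB', ff W a, haB, ff W b, hbB, ff W c, hcB, ff W d, hdB,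
      (ff_lt_iff haI hbI).mp o1, (ff_lt_iff hbI hcI).mp o2, (ff_lt_iff hcI hdI).mp o3⟩

lemma Psi_Phi {W : Finset ℕ} (hc : 2 ≤ W.card) {γ : Finset (Finset ℕ)}
    (hγ : γ ∈ NCF (W.card - 1)) : (γ.image (bmap W)).image (cmap W) = γ := by
  rw [mem_NCF] at hγ
  have hsub := hγ.1.2.1
  rw [Finset.image_image]
  have h : ∀ V ∈ γ, (cmap W ∘ bmap W) V = id V := by
    intro V hV
    have hsubV := hsub V hV
    simp only [Function.comp_apply, id_eq, cmap, bmap]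
    by_cases h1 : 1 ∈ V
    · rw [if_pos h1, Finset.erase_insert (fmax_not_mem_image hsubV), image_ff_gg hsubV]
    · rw [if_neg h1, Finset.erase_eq_of_notMem (fmax_not_mem_image hsubV), image_ff_gg hsubV]
  rw [Finset.image_congr h, Finset.image_id]

lemma Phi_Psi {W : Finset ℕ} (hc : 2 ≤ W.card) {δ : Finset (Finset ℕ)}
    (hδ : δ ∈ SW W) : (δ.image (cmap W)).image (bmap W) = δ := by
  rw [mem_SW] at hδ
  obtain ⟨hP, -, U₀, hU₀, hminU, hmaxU⟩ := hδ
  have hsub := hP.2.1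
  rw [Finset.image_image]
  have h : ∀ B ∈ δ, (bmap W ∘ cmap W) B = id B := by
    intro B hB
    have hsubB := hsub B hB
    have hersub : B.erase (fmax W) ⊆ W := fun x hx => hsubB (Finset.mem_of_mem_erase hx)
    simp only [Function.comp_apply, id_eq, bmap, cmap]
    by_cases hm : fmax W ∈ B
    · have hBU : B = U₀ := part_unique_s17 hP hB hU₀ hm hmaxU
      have hminB : fmin W ∈ B.erase (fmax W) :=
        Finset.mem_erase.mpr ⟨fmin_ne_fmax hc, hBU ▸ hminU⟩
      have h1 : 1 ∈ (B.erase (fmax W)).image (gg W) := by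
        rw [← gg_fmin hc]
        exact Finset.mem_image_of_mem _ hminB
      simp only [h1, ↓reduceIte]
      rw [image_gg_ff hersub, Finset.insert_erase hm]
    · have h1 : 1 ∉ (B.erase (fmax W)).image (gg W) := by
        intro h1
        obtain ⟨x, hx, hgx⟩ := Finset.mem_image.mp h1
        have hxW : x ∈ W := hersub hx
        have : x = fmin W := by
          rw [← ff_gg hxW, hgx, ff_one hc]
        have hxB : x ∈ B := Finset.mem_of_mem_erase hx
        rw [this] at hxB
        exact hm (part_unique_s17 hP hB hU₀ hxB hminU ▸ hmaxU)
      simp only [h1, ↓reduceIte]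
      rw [Finset.erase_eq_of_notMem hm, image_gg_ff hsubB]
  rw [Finset.image_congr h, Finset.image_id]

lemma fmin_singleton (x : ℕ) : fmin {x} = x :=
  fmin_eq (Finset.mem_singleton_self x) (fun y hy => by rw [Finset.mem_singleton.mp hy])

lemma fmax_singleton (x : ℕ) : fmax {x} = x :=
  fmax_eq (Finset.mem_singleton_self x) (fun y hy => by rw [Finset.mem_singleton.mp hy])

lemma SW_singleton (x : ℕ) : SW {x} = {{({x} : Finset ℕ)}} := by
  ext δ
  rw [mem_SW, Finset.mem_singleton]
  constructor
  · rintro ⟨hP, -, -⟩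
    ext B
    rw [Finset.mem_singleton]
    constructor
    · intro hB
      rcases Finset.subset_singleton_iff.mp (hP.2.1 B hB) with h | h
      · exact absurd h (hP.1 B hB).ne_empty
      · exact h
    · rintro rfl
      obtain ⟨B', hB', hxB'⟩ := hP.2.2.1 x (Finset.mem_singleton_self x)
      rcases Finset.subset_singleton_iff.mp (hP.2.1 B' hB') with h | h
      · exact absurd (h ▸ hxB') (Finset.notMem_empty x)
      · exact h ▸ hB'
  · rintro rfl
    refine ⟨⟨?_, ?_, ?_, ?_⟩, ?_, ?_⟩
    · intro B hB; rw [Finset.mem_singleton.mp hB]; exact Finset.singleton_nonempty x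
    · intro B hB; rw [Finset.mem_singleton.mp hB]
    · intro y hy; exact ⟨{x}, Finset.mem_singleton_self _, by rw [Finset.mem_singleton.mp hy]; exact Finset.mem_singleton_self x⟩
    · intro B hB B' hB' hBB'
      exact absurd (Finset.mem_singleton.mp hB ▸ Finset.mem_singleton.mp hB' ▸ rfl) hBB'
    · rintro ⟨A, hA, B, hB, hAB, -⟩
      rw [Finset.mem_singleton.mp hA, Finset.mem_singleton.mp hB] at hAB
      exact hAB rfl
    · exact ⟨{x}, Finset.mem_singleton_self _, by rw [fmin_singleton]; exact Finset.mem_singleton_self x,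
        by rw [fmax_singleton]; exact Finset.mem_singleton_self x⟩

lemma claimA {R : Type*} [CommRing R] (t : ℕ → R) (κ : ℕ → R)
    (hκ1 : κ 1 = t 0)
    (hκ : ∀ m, 2 ≤ m → κ m = ∑ γ ∈ NCF (m - 1), ∏ V ∈ γ, t V.card)
    {W : Finset ℕ} (hW : W.Nonempty) : κ W.card = ∑ δ ∈ SW W, wt t W δ := by
  by_cases h1 : W.card = 1
  · obtain ⟨x, rfl⟩ := Finset.card_eq_one.mp h1
    rw [h1, SW_singleton, Finset.sum_singleton, wt, Finset.prod_singleton, if_pos ⟨rfl, rfl⟩]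
    simpa using hκ1
  · have hc : 2 ≤ W.card := by
      have := Finset.card_pos.mpr hW; omega
    rw [hκ W.card hc]
    exact Finset.sum_nbij' (i := fun γ => γ.image (bmap W)) (j := fun δ => δ.image (cmap W))
      (fun γ hγ => Phi_mem hc hγ) (fun δ hδ => Psi_mem hc hδ)
      (fun γ hγ => Psi_Phi hc hγ) (fun δ hδ => Phi_Psi hc hδ)
      (fun γ hγ => (wt_Phi t hc hγ).symm)

lemma restrict_mem_SW {n : ℕ} {β : Finset (Finset ℕ)} (hβ : IsNCPartition n β)
    {α : Finset (Finset ℕ)} (hα : α ∈ NCF n) (hLL : LL α β) {W : Finset ℕ} (hW : W ∈ β) :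
    α.filter (· ⊆ W) ∈ SW W := by
  have hβP : IsPartitionOfSet (Finset.Icc 1 n) β := hβ.1
  have hαNC := mem_NCF.mp hα
  have hαP : IsPartitionOfSet (Finset.Icc 1 n) α := hαNC.1
  rw [mem_SW]
  refine ⟨⟨?_, ?_, ?_, ?_⟩, ?_, ?_⟩
  · intro V hV
    exact hαP.1 V (Finset.mem_filter.mp hV).1
  · intro V hV
    exact (Finset.mem_filter.mp hV).2
  · intro x hx
    obtain ⟨V, hV, hxV⟩ := hαP.2.2.1 x (hβP.2.1 W hW hx)
    obtain ⟨W', hW', hVW'⟩ := hLL.1 V hV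
    have : W' = W := part_unique_s17 hβP hW' hW (hVW' hxV) hx
    exact ⟨V, Finset.mem_filter.mpr ⟨hV, this ▸ hVW'⟩, hxV⟩
  · intro V hV V' hV' hne
    exact hαP.2.2.2 V (Finset.mem_filter.mp hV).1 V' (Finset.mem_filter.mp hV').1 hne
  · rintro ⟨A, hA, B, hB, h⟩
    exact hαNC.2 ⟨A, (Finset.mem_filter.mp hA).1, B, (Finset.mem_filter.mp hB).1, h⟩
  · obtain ⟨V, hV, hminV, hmaxV⟩ := hLL.2 W hW
    obtain ⟨W', hW', hVW'⟩ := hLL.1 V hV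
    have hWne : W.Nonempty := hβP.1 W hW
    have : W' = W := part_unique_s17 hβP hW' hW (hVW' hminV) (fmin_mem_s17 hWne)
    exact ⟨V, Finset.mem_filter.mpr ⟨hV, this ▸ hVW'⟩, hminV, hmaxV⟩

lemma union_mem {n : ℕ} {β : Finset (Finset ℕ)} (hβ : IsNCPartition n β)
    (p : ∀ W ∈ β, Finset (Finset ℕ)) (hp : ∀ (W : Finset ℕ) (hW : W ∈ β), p W hW ∈ SW W) :
    β.attach.biUnion (fun W => p W.1 W.2) ∈ (NCF n).filter (fun α => LL α β) := by
  have hβP : IsPartitionOfSet (Finset.Icc 1 n) β := hβ.1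
  have hmem : ∀ {B : Finset ℕ},
      B ∈ β.attach.biUnion (fun W => p W.1 W.2) ↔ ∃ W : {x // x ∈ β}, B ∈ p W.1 W.2 := by
    intro B
    rw [Finset.mem_biUnion]
    exact ⟨fun ⟨W, _, h⟩ => ⟨W, h⟩, fun ⟨W, h⟩ => ⟨W, Finset.mem_attach _ _, h⟩⟩
  have hSW : ∀ (W : {x // x ∈ β}), IsPartitionOfSet W.1 (p W.1 W.2) ∧ ¬ IsCrossing (p W.1 W.2) ∧
      ∃ U ∈ p W.1 W.2, fmin W.1 ∈ U ∧ fmax W.1 ∈ U := fun W => mem_SW.mp (hp W.1 W.2)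
  rw [Finset.mem_filter]
  constructor
  · rw [mem_NCF]
    refine ⟨⟨?_, ?_, ?_, ?_⟩, ?_⟩
    · intro B hB
      obtain ⟨W, hB⟩ := hmem.mp hB
      exact (hSW W).1.1 B hB
    · intro B hB
      obtain ⟨W, hB⟩ := hmem.mp hB
      exact ((hSW W).1.2.1 B hB).trans (hβP.2.1 W.1 W.2)
    · intro x hx
      obtain ⟨W, hW, hxW⟩ := hβP.2.2.1 x hx
      obtain ⟨B, hB, hxB⟩ := (hSW ⟨W, hW⟩).1.2.2.1 x hxW
      exact ⟨B, hmem.mpr ⟨⟨W, hW⟩, hB⟩, hxB⟩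
    · intro B hB B' hB' hne
      obtain ⟨W, hB⟩ := hmem.mp hB
      obtain ⟨W', hB'⟩ := hmem.mp hB'
      by_cases hWW' : W = W'
      · subst hWW'
        exact (hSW W).1.2.2.2 B hB B' hB' hne
      · rw [Finset.eq_empty_iff_forall_notMem]
        intro x hx
        rw [Finset.mem_inter] at hx
        have h1 : x ∈ W.1 := (hSW W).1.2.1 B hB hx.1
        have h2 : x ∈ W'.1 := (hSW W').1.2.1 B' hB' hx.2
        exact hWW' (Subtype.ext (part_unique_s17 hβP W.2 W'.2 h1 h2))
    · rintro ⟨A, hA, B, hB, hAB, a, ha, b, hb, c, hcc, d, hd, o1, o2, o3⟩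
      obtain ⟨W, hA⟩ := hmem.mp hA
      obtain ⟨W', hB⟩ := hmem.mp hB
      by_cases hWW' : W = W'
      · subst hWW'
        exact (hSW W).2.1 ⟨A, hA, B, hB, hAB, a, ha, b, hb, c, hcc, d, hd, o1, o2, o3⟩
      · have hWne : W.1 ≠ W'.1 := fun h => hWW' (Subtype.ext h)
        exact hβ.2 ⟨W.1, W.2, W'.1, W'.2, hWne,
          a, (hSW W).1.2.1 A hA ha, b, (hSW W').1.2.1 B hB hb,
          c, (hSW W).1.2.1 A hA hcc, d, (hSW W').1.2.1 B hB hd, o1, o2, o3⟩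
  · constructor
    · intro B hB
      obtain ⟨W, hB⟩ := hmem.mp hB
      exact ⟨W.1, W.2, (hSW W).1.2.1 B hB⟩
    · intro W hW
      obtain ⟨U, hU, hfU⟩ := (hSW ⟨W, hW⟩).2.2
      exact ⟨U, hmem.mpr ⟨⟨W, hW⟩, hU⟩, hfU⟩

lemma restrict_union {n : ℕ} {β : Finset (Finset ℕ)} (hβ : IsNCPartition n β)
    (p : ∀ W ∈ β, Finset (Finset ℕ)) (hp : ∀ (W : Finset ℕ) (hW : W ∈ β), p W hW ∈ SW W)
    {W : Finset ℕ} (hW : W ∈ β) :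
    (β.attach.biUnion (fun W => p W.1 W.2)).filter (· ⊆ W) = p W hW := by
  ext B
  rw [Finset.mem_filter, Finset.mem_biUnion]
  constructor
  · rintro ⟨⟨⟨W', hW'⟩, -, hB⟩, hBW⟩
    obtain ⟨x, hx⟩ := (mem_SW.mp (hp W' hW')).1.1 B hB
    have hxW' : x ∈ W' := (mem_SW.mp (hp W' hW')).1.2.1 B hB hx
    have heq : W' = W := part_unique_s17 hβ.1 hW' hW hxW' (hBW hx)
    subst heq
    exact hB
  · intro hB
    exact ⟨⟨⟨W, hW⟩, Finset.mem_attach _ _, hB⟩, (mem_SW.mp (hp W hW)).1.2.1 B hB⟩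

lemma union_restrict {β : Finset (Finset ℕ)} {α : Finset (Finset ℕ)}
    (hLL : LL α β) :
    β.attach.biUnion (fun W => α.filter (· ⊆ W.1)) = α := by
  ext B
  rw [Finset.mem_biUnion]
  constructor
  · rintro ⟨W, -, hB⟩
    exact (Finset.mem_filter.mp hB).1
  · intro hB
    obtain ⟨W, hW, hBW⟩ := hLL.1 B hB
    exact ⟨⟨W, hW⟩, Finset.mem_attach _ _, Finset.mem_filter.mpr ⟨hB, hBW⟩⟩

lemma special_iff_s17 {n : ℕ} {β : Finset (Finset ℕ)} (hβ : IsNCPartition n β)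
    {W : Finset ℕ} (hW : W ∈ β) {U : Finset ℕ} (hUne : U.Nonempty) (hUW : U ⊆ W) :
    SpecialBlock β U ↔ (fmin U = fmin W ∧ fmax U = fmax W) := by
  constructor
  · rintro ⟨W', hW', h1, h2⟩
    have hfW' : fmin W' ∈ W' := fmin_mem_s17 (hβ.1.1 W' hW')
    have hfU : fmin U ∈ W := hUW (fmin_mem_s17 hUne)
    rw [h1] at hfU
    have heq : W' = W := part_unique_s17 hβ.1 hW' hW hfW' hfU
    exact ⟨h1.trans (by rw [heq]), h2.trans (by rw [heq])⟩
  · intro h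
    exact ⟨W, hW, h⟩

lemma weight_eq {R : Type*} [CommRing R] (t : ℕ → R) {n : ℕ} {β : Finset (Finset ℕ)}
    (hβ : IsNCPartition n β)
    (p : ∀ W ∈ β, Finset (Finset ℕ)) (hp : ∀ (W : Finset ℕ) (hW : W ∈ β), p W hW ∈ SW W) :
    (∏ U ∈ (β.attach.biUnion (fun W => p W.1 W.2)).filter (fun U => SpecialBlock β U),
        t (U.card - 1)) *
      ∏ V ∈ (β.attach.biUnion (fun W => p W.1 W.2)).filter (fun V => ¬ SpecialBlock β V),
        t V.card
    = ∏ W ∈ β.attach, wt t W.1 (p W.1 W.2) := by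
  rw [← Finset.prod_ite]
  have hdisj : Set.PairwiseDisjoint (↑β.attach : Set {x // x ∈ β})
      (fun W : {x // x ∈ β} => p W.1 W.2) := by
    intro W _ W' _ hWW'
    simp only [Function.onFun]
    rw [Finset.disjoint_left]
    intro B hB hB'
    obtain ⟨x, hx⟩ := (mem_SW.mp (hp W.1 W.2)).1.1 B hB
    have h1 : x ∈ W.1 := (mem_SW.mp (hp W.1 W.2)).1.2.1 B hB hx
    have h2 : x ∈ W'.1 := (mem_SW.mp (hp W'.1 W'.2)).1.2.1 B hB' hx
    exact hWW' (Subtype.ext (part_unique_s17 hβ.1 W.2 W'.2 h1 h2))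
  rw [Finset.prod_biUnion hdisj]
  refine Finset.prod_congr rfl (fun W _ => ?_)
  rw [wt]
  refine Finset.prod_congr rfl (fun U hU => ?_)
  have hUne : U.Nonempty := (mem_SW.mp (hp W.1 W.2)).1.1 U hU
  have hUW : U ⊆ W.1 := (mem_SW.mp (hp W.1 W.2)).1.2.1 U hU
  by_cases hs : SpecialBlock β U
  · rw [if_pos hs, if_pos ((special_iff_s17 hβ W.2 hUne hUW).mp hs)]
  · rw [if_neg hs, if_neg (fun h => hs ((special_iff_s17 hβ W.2 hUne hUW).mpr h))]


/-- Let `(t_k)` be a sequence in a commutative ring, `κ₁ := t₀` and,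
for `m ≥ 2`, `κ_m := Σ_{γ ∈ NC(m-1)} ∏_{V block of γ} t_{|V|}`. Then for every `n ≥ 1`
and every `β ∈ NC(n)`:
`∏_{W block of β} κ_{|W|}
  = Σ_{α ∈ NC(n), α ≪ β}
      (∏_{U β-special block of α} t_{|U|-1}) · (∏_{V non-β-special block of α} t_{|V|})`. -/
theorem stmt17 {R : Type*} [CommRing R] (t : ℕ → R) (κ : ℕ → R)
    (hκ1 : κ 1 = t 0)
    (hκ : ∀ m, 2 ≤ m → κ m = ∑ γ ∈ NCF (m - 1), ∏ V ∈ γ, t V.card)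
    (n : ℕ) (hn : 1 ≤ n) (β : Finset (Finset ℕ)) (hβ : IsNCPartition n β) :
    ∏ W ∈ β, κ W.card
      = ∑ α ∈ (NCF n).filter fun α => LL α β,
          (∏ U ∈ α.filter fun U => SpecialBlock β U, t (U.card - 1))
            * ∏ V ∈ α.filter fun V => ¬ SpecialBlock β V, t V.card := by
  have step1 : ∏ W ∈ β, κ W.card = ∏ W ∈ β, ∑ δ ∈ SW W, wt t W δ :=
    Finset.prod_congr rfl (fun W hW => claimA t κ hκ1 hκ (hβ.1.1 W hW))
  rw [step1, Finset.prod_sum]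
  refine Finset.sum_nbij' (i := fun p => β.attach.biUnion (fun W => p W.1 W.2))
    (j := fun α => fun W _ => α.filter (· ⊆ W)) ?_ ?_ ?_ ?_ ?_
  · intro p hp
    exact union_mem hβ p (fun W hW => Finset.mem_pi.mp hp W hW)
  · intro α hα
    rw [Finset.mem_pi]
    intro W hW
    have h := Finset.mem_filter.mp hα
    exact restrict_mem_SW hβ h.1 h.2 hW
  · intro p hp
    funext W hW
    exact restrict_union hβ p (fun W hW => Finset.mem_pi.mp hp W hW) hW
  · intro α hα
    exact union_restrict (Finset.mem_filter.mp hα).2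
  · intro p hp
    exact (weight_eq t hβ p (fun W hW => Finset.mem_pi.mp hp W hW)).symm
end
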